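/- arXiv:2503.22630 — 8 statements merged into one kernel-verified Lean document; each statement's English description precedes it below -/
import Mathlib

section
/- Assuming the reals can be well-ordered, there exists a subset K of ℝ/ℤ that is independent (its elements have no non-trivial solution to any linear equation with integer coefficients, i.e., K is linearly independent over ℤ viewing ℝ/ℤ as a ℤ-module) and has outer Lebesgue measure equal to 1. -/
open Finset MeasureTheory Pointwise

def IsTrivialSol {G : Type*} [AddCommGroup G] {n : ℕ} (m : Fin n → ℤ) (x : Fin n → G) : Prop :=
  ∃ p : Fin n → Fin n, (∀ i j, p i = p j → x i = x j) ∧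
    ∀ k, ∑ j ∈ Finset.univ.filter (fun j => p j = k), m j • x j = 0

/-- A subset of an abelian group is *independent* if it has no non-trivial solution to any
linear equation with integer coefficients. -/
def IndependentSet {G : Type*} [AddCommGroup G] (K : Set G) : Prop :=
  ∀ (n : ℕ) (m : Fin n → ℤ) (x : Fin n → G),
    (∀ i, x i ∈ K) → ∑ i, m i • x i = 0 → IsTrivialSol m x

namespace ErdosIndep

open Set Cardinal Filter

/-! ### From true linear independence to `IndependentSet` -/

theorem indep_of_linIndep {G : Type*} [AddCommGroup G] {K : Set G}
    (h : ∀ s : Finset G, ↑s ⊆ K → ∀ c : G → ℤ, ∑ v ∈ s, c v • v = 0 → ∀ v ∈ s, c v = 0) :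
    IndependentSet K := by
  classical
  intro n m x hx hsum
  set s : Finset G := Finset.univ.image x with hs
  set c : G → ℤ := fun v => ∑ j ∈ Finset.univ.filter (fun j => x j = v), m j with hc
  have hsc : ∑ v ∈ s, c v • v = ∑ i, m i • x i := by
    calc ∑ v ∈ s, c v • v
        = ∑ v ∈ s, ∑ j ∈ Finset.univ.filter (fun j => x j = v), m j • x j := by
          refine Finset.sum_congr rfl fun v hv => ?_
          rw [hc]
          rw [Finset.sum_smul]
          refine Finset.sum_congr rfl fun j hj => ?_
          rw [(Finset.mem_filter.1 hj).2]
      _ = ∑ i, m i • x i :=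
          Finset.sum_fiberwise_of_maps_to
            (fun j _ => Finset.mem_image_of_mem x (Finset.mem_univ j)) _
  have hc0 : ∀ v ∈ s, c v = 0 := by
    refine h s ?_ c (by rw [hsc]; exact hsum)
    intro v hv
    obtain ⟨i, _, rfl⟩ := Finset.mem_image.1 hv
    exact hx i
  have hne : ∀ i : Fin n, (Finset.univ.filter (fun j => x j = x i)).Nonempty :=
    fun i => ⟨i, Finset.mem_filter.2 ⟨Finset.mem_univ i, rfl⟩⟩
  have min'_eq : ∀ (s₁ s₂ : Finset (Fin n)) (h₁ : s₁.Nonempty) (h₂ : s₂.Nonempty),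
      s₁ = s₂ → s₁.min' h₁ = s₂.min' h₂ := by
    rintro s₁ s₂ h₁ h₂ rfl; rfl
  set p : Fin n → Fin n := fun i => (Finset.univ.filter (fun j => x j = x i)).min' (hne i)
    with hp
  have hmin : ∀ i, x (p i) = x i := fun i =>
    (Finset.mem_filter.1 (Finset.min'_mem _ (hne i))).2
  refine ⟨p, fun i j hij => by rw [← hmin i, hij, hmin j], ?_⟩
  intro k
  by_cases hk : ∃ j₀, p j₀ = k
  · obtain ⟨j₀, hj₀⟩ := hk
    have hxk : x k = x j₀ := by rw [← hj₀]; exact hmin j₀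
    have hfeq : Finset.univ.filter (fun j => p j = k)
        = Finset.univ.filter (fun j => x j = x k) := by
      ext j
      simp only [Finset.mem_filter, Finset.mem_univ, true_and]
      constructor
      · intro hj; rw [← hj]; exact (hmin j).symm
      · intro hxj
        have h1 : Finset.univ.filter (fun j' => x j' = x j)
            = Finset.univ.filter (fun j' => x j' = x j₀) := by rw [hxj, hxk]
        calc p j = p j₀ := min'_eq _ _ _ _ h1
          _ = k := hj₀
    rw [hfeq]
    calc ∑ j ∈ Finset.univ.filter (fun j => x j = x k), m j • x j
        = ∑ j ∈ Finset.univ.filter (fun j => x j = x k), m j • x k := by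
          refine Finset.sum_congr rfl fun j hj => ?_
          rw [(Finset.mem_filter.1 hj).2]
      _ = c (x k) • x k := by rw [hc, Finset.sum_smul]
      _ = 0 := by
          rw [hc0 (x k) (Finset.mem_image_of_mem x (Finset.mem_univ k)), zero_smul]
  · have : Finset.univ.filter (fun j => p j = k) = ∅ :=
      Finset.filter_eq_empty_iff.2 (fun j _ => fun hj => hk ⟨j, hj⟩)
    rw [this, Finset.sum_empty]

/-! ### Instances and countability facts on the circle -/

instance : Filter.NeBot (nhdsWithin (0 : UnitAddCircle) {(0 : UnitAddCircle)}ᶜ) := by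
  rw [← mem_closure_iff_nhdsWithin_neBot]
  have h0 : Filter.Tendsto (fun k : ℕ => ((k : ℝ) + 2)) Filter.atTop Filter.atTop :=
    Filter.tendsto_atTop_add_const_right _ _ tendsto_natCast_atTop_atTop
  have h1 : Filter.Tendsto (fun k : ℕ => (((k : ℝ) + 2)⁻¹ : ℝ)) Filter.atTop (nhds 0) :=
    tendsto_inv_atTop_zero.comp h0
  have h2 : Continuous ((↑) : ℝ → UnitAddCircle) := AddCircle.continuous_mk' _
  have ht : Filter.Tendsto (fun k : ℕ => ((((k : ℝ) + 2)⁻¹ : ℝ) : UnitAddCircle))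
      Filter.atTop (nhds 0) := by
    have := (h2.tendsto 0).comp h1
    exact this
  refine mem_closure_of_tendsto ht (Filter.Eventually.of_forall fun k => ?_)
  simp only [Set.mem_compl_iff, Set.mem_singleton_iff]
  intro h
  rw [AddCircle.coe_eq_zero_iff] at h
  obtain ⟨n, hn⟩ := h
  have hn' : ((n : ℝ)) = ((k : ℝ) + 2)⁻¹ := by simpa using hn
  have hk2 : (0:ℝ) < (k : ℝ) + 2 := by positivity
  have h0' : (0:ℝ) < ((k : ℝ) + 2)⁻¹ := by positivity
  have h1' : ((k : ℝ) + 2)⁻¹ < 1 := by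
    rw [inv_lt_one_iff₀]
    right
    linarith [Nat.cast_nonneg (α := ℝ) k]
  rw [← hn'] at h0' h1'
  have hlo : (0:ℤ) < n := by exact_mod_cast h0'
  have hhi : (n:ℤ) < 1 := by exact_mod_cast h1'
  omega

instance : NullSingletonClass (volume : Measure UnitAddCircle) := inferInstance

theorem countable_torsion : {u : UnitAddCircle | IsOfFinAddOrder u}.Countable := by
  have hsub : {u : UnitAddCircle | IsOfFinAddOrder u}
      ⊆ Set.range (fun q : ℚ => ((q : ℝ) : UnitAddCircle)) := by
    intro u hu
    obtain ⟨m, hg, hlt, he⟩ := AddCircle.exists_gcd_eq_one_of_isOfFinAddOrder hu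
    refine ⟨(m : ℚ) / (addOrderOf u : ℚ), ?_⟩
    show ((((m : ℚ) / (addOrderOf u : ℚ) : ℚ) : ℝ) : UnitAddCircle) = u
    conv_rhs => rw [← he]
    congr 1
    push_cast
    ring
  exact (Set.countable_range _).mono hsub

theorem countable_sol (n : ℤ) (hn : n ≠ 0) (h : UnitAddCircle) :
    {x : UnitAddCircle | n • x = h}.Countable := by
  rcases Set.eq_empty_or_nonempty {x : UnitAddCircle | n • x = h} with he | ⟨x₀, hx₀⟩
  · rw [he]; exact Set.countable_empty
  · have hx₀' : n • x₀ = h := hx₀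
    have hsub : {x : UnitAddCircle | n • x = h}
        ⊆ (fun z => x₀ + z) '' {u : UnitAddCircle | IsOfFinAddOrder u} := by
      intro x hx
      have hx' : n • x = h := hx
      refine ⟨x - x₀, ?_, by show x₀ + (x - x₀) = x; rw [add_comm, sub_add_cancel]⟩
      have hz : n • (x - x₀) = 0 := by rw [smul_sub, hx', hx₀', sub_self]
      have hz' : ((n.natAbs : ℤ)) • (x - x₀) = 0 := by
        rcases Int.natAbs_eq n with hh | hh
        · rw [← hh, hz]
        · have : (n.natAbs : ℤ) = -n := by omega
          rw [this, neg_smul, hz, neg_zero]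
      rw [natCast_zsmul] at hz'
      exact isOfFinAddOrder_iff_nsmul_eq_zero.2 ⟨n.natAbs, Int.natAbs_pos.2 hn, hz'⟩
    exact ((countable_torsion).image _).mono hsub

/-! ### The bad set and its cardinality -/

def badSet (A : Set UnitAddCircle) : Set UnitAddCircle :=
  {x | ∃ n : ℤ, n ≠ 0 ∧ n • x ∈ AddSubgroup.closure A}

theorem mk_closure_le (A : Set UnitAddCircle) :
    #(AddSubgroup.closure A : Set UnitAddCircle) ≤ max ℵ₀ #A := by
  classical
  set s : Set UnitAddCircle := A ∪ (-A) with hs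
  have hsub : (AddSubgroup.closure A : Set UnitAddCircle)
      ⊆ Set.range (fun l : List s => (l.map Subtype.val).sum) := by
    intro h hh
    have hmem : h ∈ AddSubmonoid.closure s := by
      have := AddSubgroup.closure_toAddSubmonoid A
      rw [hs, ← this]
      exact hh
    obtain ⟨l, hl, rfl⟩ := AddSubmonoid.exists_list_of_mem_closure hmem
    refine ⟨l.attachWith (· ∈ s) hl, ?_⟩
    simp only
    congr 1
    simpa using List.attachWith_map_coe (fun x : UnitAddCircle => x) l hl
  have h1 : #(AddSubgroup.closure A : Set UnitAddCircle) ≤ #(List s) :=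
    (mk_le_mk_of_subset hsub).trans (mk_range_le)
  have h2 : #(List s) ≤ max ℵ₀ #s := mk_list_le_max _
  have h3 : #s ≤ #A + #A := by
    refine (mk_union_le _ _).trans ?_
    have : -A = (fun x : UnitAddCircle => -x) '' A := by
      ext x
      simp only [Set.mem_neg, Set.mem_image]
      constructor
      · intro hx; exact ⟨-x, hx, neg_neg x⟩
      · rintro ⟨a, ha, rfl⟩; simpa using ha
    rw [this]
    exact add_le_add le_rfl mk_image_le
  refine (h1.trans h2).trans ?_
  by_cases hA : #A ≤ ℵ₀
  · have : #s ≤ ℵ₀ := h3.trans (by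
      calc #A + #A ≤ ℵ₀ + ℵ₀ := add_le_add hA hA
        _ = ℵ₀ := Cardinal.aleph0_add_aleph0)
    exact max_le (le_max_left _ _) (this.trans (le_max_left _ _))
  · push_neg at hA
    have hAinf : ℵ₀ ≤ #A := hA.le
    have : #s ≤ #A := h3.trans (by rw [Cardinal.add_eq_self hAinf])
    exact max_le (le_max_left _ _) (this.trans (le_max_right _ _))

theorem mk_badSet_lt {A : Set UnitAddCircle} (hA : #A < Cardinal.continuum) :
    #(badSet A) < Cardinal.continuum := by
  classical
  set H := AddSubgroup.closure A with hH
  have hsub : badSet A ⊆ ⋃ i : {n : ℤ // n ≠ 0} × (H : Set UnitAddCircle),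
      {x : UnitAddCircle | (i.1 : ℤ) • x = (i.2 : UnitAddCircle)} := by
    rintro x ⟨n, hn, hmem⟩
    exact Set.mem_iUnion.2 ⟨⟨⟨n, hn⟩, ⟨n • x, hmem⟩⟩, rfl⟩
  refine lt_of_le_of_lt ((mk_le_mk_of_subset hsub).trans (mk_iUnion_le _)) ?_
  have hHlt : #(H : Set UnitAddCircle) < Cardinal.continuum :=
    (mk_closure_le A).trans_lt (max_lt Cardinal.aleph0_lt_continuum hA)
  have h1 : #({n : ℤ // n ≠ 0} × (H : Set UnitAddCircle)) < Cardinal.continuum := by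
    rw [Cardinal.mk_prod]
    simp only [Cardinal.lift_id]
    refine Cardinal.mul_lt_of_lt Cardinal.aleph0_le_continuum ?_ hHlt
    exact (Cardinal.mk_subtype_le _).trans_lt
      (by rw [Cardinal.mk_int]; exact Cardinal.aleph0_lt_continuum)
  have h2 : ⨆ i : {n : ℤ // n ≠ 0} × (H : Set UnitAddCircle),
      #({x : UnitAddCircle | (i.1 : ℤ) • x = (i.2 : UnitAddCircle)}) ≤ ℵ₀ := by
    refine ciSup_le' fun i => ?_
    rw [Cardinal.mk_le_aleph0_iff]
    exact Set.countable_coe_iff.mpr (countable_sol i.1 i.1.2 i.2)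
  exact Cardinal.mul_lt_of_lt Cardinal.aleph0_le_continuum h1
    (h2.trans_lt Cardinal.aleph0_lt_continuum)

/-! ### Counting closed sets -/

theorem mk_S_le : #{C : Set UnitAddCircle // IsClosed C ∧ 0 < volume C} ≤ Cardinal.continuum := by
  classical
  obtain ⟨b, hbc, hbne, hbb⟩ := TopologicalSpace.exists_countable_basis UnitAddCircle
  have key : ∀ C : Set UnitAddCircle, IsClosed C →
      Cᶜ = ⋃₀ {U | U ∈ b ∧ U ∩ C = ∅} := by
    intro C hC
    apply Set.Subset.antisymm
    · intro x hx
      obtain ⟨U, hUb, hxU, hUC⟩ := hbb.exists_subset_of_mem_open hx hC.isOpen_compl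
      refine ⟨U, ⟨hUb, ?_⟩, hxU⟩
      rw [Set.eq_empty_iff_forall_notMem]
      intro y hy
      exact (hUC hy.1) hy.2
    · rintro x ⟨U, ⟨hUb, hUC⟩, hxU⟩
      intro hxC
      rw [Set.eq_empty_iff_forall_notMem] at hUC
      exact hUC x ⟨hxU, hxC⟩
  let F : {C : Set UnitAddCircle // IsClosed C ∧ 0 < volume C} → Set ↥b :=
    fun C => {U : ↥b | (U : Set UnitAddCircle) ∩ C.1 = ∅}
  have hinj : Function.Injective F := by
    intro C₁ C₂ h
    have hUU : ∀ (U : Set UnitAddCircle) (hUb : U ∈ b),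
        (U ∩ C₁.1 = ∅) ↔ (U ∩ C₂.1 = ∅) := by
      intro U hUb
      constructor
      · intro hU
        have : (⟨U, hUb⟩ : ↥b) ∈ F C₁ := hU
        rw [h] at this
        exact this
      · intro hU
        have : (⟨U, hUb⟩ : ↥b) ∈ F C₂ := hU
        rw [← h] at this
        exact this
    have hfam : {U : Set UnitAddCircle | U ∈ b ∧ U ∩ C₁.1 = ∅}
        = {U : Set UnitAddCircle | U ∈ b ∧ U ∩ C₂.1 = ∅} := by
      ext U
      exact and_congr_right fun hUb => hUU U hUb
    have hcc : C₁.1ᶜ = C₂.1ᶜ := by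
      rw [key _ C₁.2.1, key _ C₂.2.1, hfam]
    exact Subtype.ext (compl_injective hcc)
  refine (Cardinal.mk_le_of_injective hinj).trans ?_
  rw [Cardinal.mk_set]
  have hb' : #(↥b) ≤ ℵ₀ := by
    rw [Cardinal.mk_le_aleph0_iff]
    exact Set.countable_coe_iff.mpr hbc
  calc (2 : Cardinal) ^ #(↥b) ≤ 2 ^ ℵ₀ :=
        Cardinal.power_le_power_left two_ne_zero hb'
    _ = Cardinal.continuum := Cardinal.two_power_aleph0

/-! ### Big closed sets have continuum many points -/

theorem continuum_le_closed {C : Set UnitAddCircle} (hC : IsClosed C) (hpos : 0 < volume C) :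
    Cardinal.continuum ≤ #C := by
  have hunc : ¬C.Countable := by
    intro h
    rw [h.measure_zero volume] at hpos
    exact lt_irrefl 0 hpos
  obtain ⟨f, hfr, _, hfinj⟩ := hC.exists_nat_bool_injection_of_not_countable hunc
  have h1 : Cardinal.continuum = #(ℕ → Bool) := by
    rw [← Cardinal.two_power_aleph0, ← Cardinal.mk_nat, ← Cardinal.mk_bool,
      Cardinal.power_def]
  rw [h1]
  exact Cardinal.mk_le_of_injective (f := fun z => (⟨f z, hfr ⟨z, rfl⟩⟩ : C))
    (fun a b hab => hfinj (congrArg Subtype.val hab))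

/-! ### The transfinite construction -/

abbrev T : Type := Cardinal.continuum.ord.ToType

def SS : Type := {C : Set UnitAddCircle // IsClosed C ∧ 0 < volume C}

instance : Nonempty SS :=
  ⟨⟨Set.univ, isClosed_univ, by rw [UnitAddCircle.measure_univ]; exact one_pos⟩⟩

noncomputable def emb : SS ↪ T :=
  Classical.choice (by
    rw [← Cardinal.le_def, Cardinal.mk_ord_toType]
    exact mk_S_le)

noncomputable def φ : T → SS := Function.invFun emb

theorem φ_surj : Function.Surjective φ :=
  fun s => ⟨emb s, Function.leftInverse_invFun emb.injective s⟩

noncomputable def pick (C : SS) (A : Set UnitAddCircle) : UnitAddCircle :=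
  Classical.epsilon (fun x => x ∈ C.1 ∧ x ∉ badSet A)

theorem pick_spec (C : SS) (A : Set UnitAddCircle) (hA : #A < Cardinal.continuum) :
    pick C A ∈ C.1 ∧ pick C A ∉ badSet A := by
  have hex : ∃ x, x ∈ C.1 ∧ x ∉ badSet A := by
    by_contra h
    push_neg at h
    have hsub : C.1 ⊆ badSet A := fun x hx => h x hx
    exact absurd ((continuum_le_closed C.2.1 C.2.2).trans (mk_le_mk_of_subset hsub))
      (not_le.2 (mk_badSet_lt hA))
  exact Classical.epsilon_spec hex

noncomputable def wfT : WellFounded ((· < ·) : T → T → Prop) := IsWellFounded.wf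

noncomputable def g : T → UnitAddCircle :=
  wfT.fix (fun t IH => pick (φ t) (⋃ (t' : T), ⋃ (h : t' < t), {IH t' h}))

theorem g_eq (t : T) : g t = pick (φ t) (g '' Set.Iio t) := by
  calc g t = pick (φ t) (⋃ (t' : T), ⋃ (h : t' < t), {g t'}) :=
        wfT.fix_eq _ t
    _ = pick (φ t) (g '' Set.Iio t) := by
        congr 1
        ext x
        simp only [Set.mem_iUnion, Set.mem_singleton_iff, Set.mem_image, Set.mem_Iio]
        constructor
        · rintro ⟨t', h, rfl⟩; exact ⟨t', h, rfl⟩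
        · rintro ⟨t', h, rfl⟩; exact ⟨t', h, rfl⟩

theorem g_spec (t : T) : g t ∈ (φ t).1 ∧ g t ∉ badSet (g '' Set.Iio t) := by
  rw [g_eq]
  exact pick_spec _ _ ((Cardinal.mk_image_le).trans_lt (Cardinal.mk_Iio_ord_toType t))

theorem g_lt_ne {a b : T} (h : a < b) : g a ≠ g b := by
  intro heq
  apply (g_spec b).2
  show ∃ n : ℤ, n ≠ 0 ∧ n • g b ∈ AddSubgroup.closure (g '' Set.Iio b)
  refine ⟨1, one_ne_zero, ?_⟩
  rw [one_smul, ← heq]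
  exact AddSubgroup.subset_closure (Set.mem_image_of_mem g h)

/-! ### The main theorem -/

end ErdosIndep

open ErdosIndep Set Cardinal in
/-- There exists an independent subset `K` of `ℝ/ℤ` of outer Lebesgue measure `1`. -/
theorem exists_independent_full_outer_measure :
    ∃ K : Set UnitAddCircle, IndependentSet K ∧ volume K = 1 := by
  classical
  refine ⟨Set.range g, ?_, ?_⟩
  · -- independence
    have hQ : ∀ F : Finset T, ∀ c : UnitAddCircle → ℤ,
        ∑ u ∈ F, c (g u) • g u = 0 → ∀ u ∈ F, c (g u) = 0 := by
      intro F
      induction F using Finset.induction_on_max with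
      | empty => intro c _ u hu; exact absurd hu (Finset.notMem_empty u)
      | insert a F hlt IH =>
        intro c hsum u hu
        have haF : a ∉ F := fun h => lt_irrefl a (hlt a h)
        rw [Finset.sum_insert haF] at hsum
        have hmem : ∑ u ∈ F, c (g u) • g u ∈ AddSubgroup.closure (g '' Set.Iio a) := by
          refine AddSubgroup.sum_mem _ fun i hi => AddSubgroup.zsmul_mem _ ?_ _
          exact AddSubgroup.subset_closure
            (Set.mem_image_of_mem g (Set.mem_Iio.mpr (hlt i hi)))
        have hca : c (g a) = 0 := by
          by_contra hca
          apply (g_spec a).2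
          show ∃ n : ℤ, n ≠ 0 ∧ n • g a ∈ AddSubgroup.closure (g '' Set.Iio a)
          refine ⟨c (g a), hca, ?_⟩
          rw [eq_neg_of_add_eq_zero_left hsum]
          exact AddSubgroup.neg_mem _ hmem
        rcases Finset.mem_insert.1 hu with rfl | hu'
        · exact hca
        · refine IH c ?_ u hu'
          rwa [hca, zero_smul, zero_add] at hsum
    refine indep_of_linIndep ?_
    intro s hs c hsum v hv
    have hchoice : ∀ v ∈ s, ∃ t : T, g t = v := fun v hv => hs hv
    have : Nonempty T := ⟨emb (Classical.arbitrary SS)⟩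
    choose! f hf using hchoice
    have hinj : ∀ x ∈ s, ∀ y ∈ s, f x = f y → x = y := fun x hx y hy hxy => by
      rw [← hf x hx, ← hf y hy, hxy]
    have hsum' : ∑ u ∈ s.image f, c (g u) • g u = 0 := by
      rw [Finset.sum_image hinj, ← hsum]
      refine Finset.sum_congr rfl fun x hx => ?_
      rw [hf x hx]
    have := hQ (s.image f) c hsum' (f v) (Finset.mem_image_of_mem f hv)
    rwa [hf v hv] at this
  · -- full outer measure
    by_contra hne
    have hle : volume (Set.range g) ≤ 1 := by
      rw [← UnitAddCircle.measure_univ]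
      exact measure_mono (Set.subset_univ _)
    set t := toMeasurable volume (Set.range g) with htdef
    have htm : MeasurableSet t := measurableSet_toMeasurable _ _
    have hsub : Set.range g ⊆ t := subset_toMeasurable _ _
    have hlt : volume t < 1 := by
      rw [htdef, measure_toMeasurable]
      exact lt_of_le_of_ne hle hne
    have hcpos : 0 < volume tᶜ := by
      rw [measure_compl htm (measure_ne_top _ _), UnitAddCircle.measure_univ]
      exact tsub_pos_iff_lt.2 hlt
    have hsup := (htm.compl).measure_eq_iSup_isCompact_of_ne_top (μ := volume) (measure_ne_top _ _)
    rw [hsup] at hcpos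
    simp only [lt_iSup_iff] at hcpos
    obtain ⟨Kc, hKsub, hKcomp, hKpos⟩ := hcpos
    obtain ⟨u, hu⟩ := φ_surj ⟨Kc, hKcomp.isClosed, hKpos⟩
    have hmem : g u ∈ Kc := by
      have := (g_spec u).1
      rw [hu] at this
      exact this
    exact (hKsub hmem) (hsub ⟨u, rfl⟩)
end

section
/- Let E ⊆ ℝ be Lebesgue measurable with positive measure. Then there exist nonzero integers m, n and distinct elements x, y ∈ E with mx + ny = 0. -/
open MeasureTheory Pointwise

/-- A measurable set of reals of positive Lebesgue measure contains a non-trivial solution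
to a homogeneous linear equation `m x + n y = 0` of order `2`. -/
theorem exists_linear_relation_of_pos_measure
    (E : Set ℝ) (hE : MeasurableSet E) (hpos : 0 < volume E) :
    ∃ m n : ℤ, m ≠ 0 ∧ n ≠ 0 ∧ ∃ x ∈ E, ∃ y ∈ E, x ≠ y ∧ (m : ℝ) * x + (n : ℝ) * y = 0 := by
  classical
  -- annuli decomposition
  set A : ℕ → Set ℝ := fun k => {x : ℝ | 1 / (k + 1 : ℝ) < |x| ∧ |x| ≤ (k + 1 : ℝ)} with hA
  have hAmeas : ∀ k, MeasurableSet (A k) := by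
    intro k
    exact (measurableSet_lt measurable_const measurable_norm).inter
      (measurableSet_le measurable_norm measurable_const)
  have hcover : E \ {0} ⊆ ⋃ k, E ∩ A k := by
    intro x hx
    have hx0 : x ≠ 0 := hx.2
    have hxabs : 0 < |x| := abs_pos.2 hx0
    obtain ⟨k1, hk1⟩ := exists_nat_gt (1 / |x|)
    obtain ⟨k2, hk2⟩ := exists_nat_gt |x|
    refine Set.mem_iUnion.2 ⟨max k1 k2, hx.1, ?_, ?_⟩
    · have h1 : (1 : ℝ) / |x| < (max k1 k2 : ℕ) + 1 := by
        calc (1 : ℝ) / |x| < k1 := hk1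
        _ ≤ ((max k1 k2 : ℕ) : ℝ) := by exact_mod_cast Nat.le_max_left k1 k2
        _ ≤ ((max k1 k2 : ℕ) : ℝ) + 1 := by linarith
      rw [div_lt_iff₀ hxabs] at h1
      rw [div_lt_iff₀ (by positivity)]
      linarith
    · calc |x| ≤ k2 := le_of_lt hk2
        _ ≤ ((max k1 k2 : ℕ) : ℝ) := by exact_mod_cast Nat.le_max_right k1 k2
        _ ≤ ((max k1 k2 : ℕ) : ℝ) + 1 := by linarith
  -- find an annulus piece of positive measure
  have hEd : 0 < volume (E \ {0}) := by
    rwa [measure_diff_null (measure_singleton 0)]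
  have hex : ∃ k, 0 < volume (E ∩ A k) := by
    by_contra hc
    push_neg at hc
    have h1 : volume (⋃ k, E ∩ A k) = 0 :=
      measure_iUnion_null fun k => le_antisymm (hc k) zero_le
    exact absurd (measure_mono_null hcover h1) hEd.ne'
  obtain ⟨k, hGpos⟩ := hex
  set G : Set ℝ := E ∩ A k with hGdef
  have hGmeas : MeasurableSet G := hE.inter (hAmeas k)
  set a : ℝ := 1 / (k + 1 : ℝ) with ha
  set b : ℝ := (k + 1 : ℝ) with hb
  have ha0 : 0 < a := by positivity
  have hGsub : ∀ x ∈ G, a < |x| ∧ |x| ≤ b := fun x hx => hx.2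
  have hGne : ∀ x ∈ G, x ≠ 0 := by
    intro x hx h
    exact (ha0.trans (hGsub x hx).1).ne' (by simp [h])
  by_contra hcon
  push_neg at hcon
  -- key: no two elements of G have nontrivial positive rational ratio
  have key : ∀ (r : ℚ), 0 < r → ∀ x ∈ G, ∀ y ∈ G, x = (r : ℝ) * y → x = y := by
    intro r hr x hxG y hyG hxy
    by_contra hne
    have hm : (r.den : ℤ) ≠ 0 := by exact_mod_cast r.den_nz
    have hn : (-r.num : ℤ) ≠ 0 := by
      simp only [ne_eq, neg_eq_zero]
      exact_mod_cast (Rat.num_pos.2 hr).ne'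
    refine hcon r.den (-r.num) hm hn x hxG.1 y hyG.1 hne ?_
    have hcast : (r : ℝ) = (r.num : ℝ) / (r.den : ℝ) := Rat.cast_def r
    have hden : (r.den : ℝ) ≠ 0 := by exact_mod_cast r.den_nz
    rw [hxy, hcast]
    push_cast
    field_simp
    ring
  -- scaled copies
  set q : ℕ → ℚ := fun i => 1 + 1 / (i + 1) with hq
  have hq1 : ∀ i, 1 ≤ q i := fun i => by
    have : (0:ℚ) < 1 / ((i:ℚ)+1) := by positivity
    simp only [hq]; push_cast; linarith
  have hq2 : ∀ i, q i ≤ 2 := fun i => by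
    have : (1:ℚ) / ((i:ℚ)+1) ≤ 1 := by
      rw [div_le_one (by positivity)]
      have : (0:ℚ) ≤ i := by exact_mod_cast Nat.zero_le i
      linarith
    simp only [hq]; push_cast; linarith
  have hqinj : Function.Injective q := by
    intro i j hij
    have h1 : (1:ℚ) / ((i:ℚ)+1) = 1 / ((j:ℚ)+1) := by
      have h0 := hij
      simp only [hq] at h0
      push_cast at h0
      linarith
    have hi : ((i:ℚ)+1) ≠ 0 := by positivity
    have hj : ((j:ℚ)+1) ≠ 0 := by positivity
    have h2 : ((i:ℚ)+1) = ((j:ℚ)+1) := by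
      rw [div_eq_div_iff hi hj] at h1
      linarith
    exact_mod_cast (by linarith : (i:ℚ) = j)
  set S : ℕ → Set ℝ := fun i => ((q i : ℝ)) • G with hS
  have hq0' : ∀ i, ((q i : ℝ)) ≠ 0 := by
    intro i
    have h1 : (1:ℝ) ≤ (q i : ℝ) := by exact_mod_cast hq1 i
    positivity
  have hSmeas : ∀ i, MeasurableSet (S i) := fun i => hGmeas.const_smul₀ _
  have hdisj : Pairwise (Function.onFun Disjoint S) := by
    intro i j hij
    rw [Function.onFun, Set.disjoint_left]
    rintro z hzi hzj
    obtain ⟨g1, hg1, rfl⟩ := hzi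
    obtain ⟨g2, hg2, hz2⟩ := hzj
    have hqi0 : (0:ℚ) < q i := lt_of_lt_of_le one_pos (hq1 i)
    have hqj0 : (0:ℚ) < q j := lt_of_lt_of_le one_pos (hq1 j)
    have hr : g1 = ((q j / q i : ℚ) : ℝ) * g2 := by
      have hz2' : (q j : ℝ) * g2 = (q i : ℝ) * g1 := by
        simpa [smul_eq_mul] using hz2
      push_cast
      field_simp
      linarith [hz2']
    have heq := key (q j / q i) (div_pos hqj0 hqi0) g1 hg1 g2 hg2 hr
    have hg20 : g2 ≠ 0 := hGne g2 hg2
    have hr1 : ((q j / q i : ℚ) : ℝ) * g2 = 1 * g2 := by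
      rw [one_mul, ← hr, heq]
    have hr1' : ((q j / q i : ℚ) : ℝ) = 1 := mul_right_cancel₀ hg20 hr1
    have hr1'' : (q j / q i : ℚ) = 1 := by exact_mod_cast hr1'
    have : q j = q i := by
      field_simp at hr1''
      exact hr1''
    exact hij (hqinj this.symm)
  -- measure computation
  have hvol : ∀ i, volume G ≤ volume (S i) := by
    intro i
    have h1 : volume (S i) = ENNReal.ofReal |(q i : ℝ) ^ Module.finrank ℝ ℝ| * volume G :=
      Measure.addHaar_smul volume _ G
    rw [h1]
    have h2 : (1:ℝ) ≤ |(q i : ℝ) ^ Module.finrank ℝ ℝ| := by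
      rw [Module.finrank_self, pow_one]
      have : (1:ℝ) ≤ (q i : ℝ) := by exact_mod_cast hq1 i
      rw [abs_of_pos (by linarith)]
      exact this
    calc volume G = 1 * volume G := (one_mul _).symm
      _ ≤ ENNReal.ofReal |(q i : ℝ) ^ Module.finrank ℝ ℝ| * volume G := by
          exact mul_le_mul_of_nonneg_right (by simpa using ENNReal.one_le_ofReal.2 h2) zero_le
  have hUsub : (⋃ i, S i) ⊆ Set.Icc (-(2*b)) (2*b) := by
    rintro z hz
    obtain ⟨i, g, hg, rfl⟩ := Set.mem_iUnion.1 hz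
    have h1 : |(q i : ℝ) • g| ≤ 2 * b := by
      rw [smul_eq_mul, abs_mul]
      have hqi : |(q i : ℝ)| ≤ 2 := by
        rw [abs_of_pos (by exact_mod_cast lt_of_lt_of_le one_pos (hq1 i))]
        exact_mod_cast hq2 i
      have hgb : |g| ≤ b := (hGsub g hg).2
      have h0g : (0:ℝ) ≤ |g| := abs_nonneg g
      nlinarith [abs_nonneg ((q i : ℝ))]
    exact abs_le.1 h1
  have htop : volume (⋃ i, S i) = ⊤ := by
    rw [measure_iUnion hdisj hSmeas]
    have h1 : (⊤ : ENNReal) = ∑' (_ : ℕ), volume G :=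
      (ENNReal.tsum_const_eq_top_of_ne_zero hGpos.ne').symm
    exact top_le_iff.1 (h1.le.trans (ENNReal.tsum_le_tsum hvol))
  have hfin : volume (⋃ i, S i) ≤ volume (Set.Icc (-(2*b)) (2*b)) := measure_mono hUsub
  rw [htop, Real.volume_Icc] at hfin
  exact (ENNReal.ofReal_ne_top (top_le_iff.1 hfin)).elim
end

section
/- Let E be a subset of ℝ/ℤ such that E + E has positive outer Lebesgue measure and such that E has no non-trivial solutions to linear equations with integer coefficients of order 4 (in particular no non-trivial solution to mx₁ + mx₂ + nx₃ + nx₄ = 0 with m, n nonzero). Then E is not Lebesgue measurable. -/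
open Finset MeasureTheory Pointwise

section Auxiliary

open Set
open scoped ENNReal NNReal

noncomputable section

/-- The set of torsion points of the circle. -/
def TorSet : Set UnitAddCircle := {x | ∃ n : ℤ, n ≠ 0 ∧ n • x = 0}

lemma torSet_countable : TorSet.Countable := by
  have hsub : TorSet ⊆ Set.range (fun r : ℚ => ((r : ℝ) : UnitAddCircle)) := by
    rintro x ⟨n, hn, hnx⟩
    obtain ⟨y, rfl⟩ := QuotientAddGroup.mk_surjective x
    have : ((n • y : ℝ) : UnitAddCircle) = 0 := by
      rw [AddCircle.coe_zsmul]; exact hnx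
    rw [AddCircle.coe_eq_zero_iff] at this
    obtain ⟨m, hm⟩ := this
    refine ⟨(m : ℚ) / (n : ℚ), ?_⟩
    have hy : y = (m : ℝ) / (n : ℝ) := by
      have hn' : (n : ℝ) ≠ 0 := Int.cast_ne_zero.mpr hn
      field_simp
      have : (n : ℝ) * y = (m : ℝ) := by
        rw [zsmul_eq_mul] at hm
        simpa using hm.symm
      linarith [this]
    rw [hy]
    norm_num
  exact (Set.countable_range _).mono hsub

instance : NullSingletonClass (volume : Measure UnitAddCircle) := by
  constructor
  intro x
  have hb : ∀ ε : ℝ, 0 < ε → volume ({x} : Set UnitAddCircle) ≤ ENNReal.ofReal (2 * ε) := by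
    intro ε hε
    calc volume ({x} : Set UnitAddCircle) ≤ volume (Metric.closedBall x ε) := by
          apply measure_mono
          intro y hy
          simp only [Set.mem_singleton_iff] at hy
          subst hy
          exact Metric.mem_closedBall_self hε.le
      _ = ENNReal.ofReal (min 1 (2 * ε)) := AddCircle.volume_closedBall (T := 1) ε
      _ ≤ ENNReal.ofReal (2 * ε) := ENNReal.ofReal_le_ofReal (min_le_right _ _)
  refine le_antisymm ?_ zero_le
  refine ENNReal.le_of_forall_pos_le_add (fun ε hε _ => ?_)
  calc volume ({x} : Set UnitAddCircle) ≤ ENNReal.ofReal (2 * ((ε : ℝ) / 2)) :=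
        hb _ (by positivity)
    _ = ENNReal.ofReal (ε : ℝ) := by congr 1; ring
    _ ≤ 0 + (ε : ℝ≥0∞) := by simp [ENNReal.ofReal_coe_nnreal]

lemma torSet_null : volume TorSet = 0 := torSet_countable.measure_zero _

/-- Any partition certificate of triviality for an equation `N x₁ + N x₂ - N x₃ - N x₄ = 0`
with torsion-free values forces the two pairs to coincide. -/
lemma cert_aux {G : Type*} [AddCommGroup G] (N : ℤ) (hN : N ≠ 0) (w : Fin 4 → G)
    (hw : ∀ i (n : ℤ), n ≠ 0 → n • w i ≠ 0)
    (h : IsTrivialSol ![N, N, -N, -N] w) :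
    (w 0 = w 2 ∧ w 1 = w 3) ∨ (w 0 = w 3 ∧ w 1 = w 2) := by
  obtain ⟨p, hc, hk⟩ := h
  have fib : ∀ i : Fin 4,
      (∑ j ∈ Finset.univ.filter (fun j => p j = p i), (![N, N, -N, -N] : Fin 4 → ℤ) j) • w i
        = 0 := by
    intro i
    rw [Finset.sum_smul, ← hk (p i)]
    refine Finset.sum_congr rfl fun j hj => ?_
    rw [hc j i (Finset.mem_filter.mp hj).2]
  have fib0 : ∀ i : Fin 4,
      (∑ j ∈ Finset.univ.filter (fun j => p j = p i), (![N, N, -N, -N] : Fin 4 → ℤ) j) = 0 := by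
    intro i
    by_contra hne
    exact hw i _ hne (fib i)
  have ex : ∀ i : Fin 4,
      (∑ j ∈ Finset.univ.filter (fun j => p j = p i), (![N, N, -N, -N] : Fin 4 → ℤ) j)
        = (if p 0 = p i then N else 0) + (if p 1 = p i then N else 0)
          + (if p 2 = p i then -N else 0) + (if p 3 = p i then -N else 0) := by
    intro i
    rw [Finset.sum_filter, Fin.sum_univ_four]
    rfl
  have h0 := fib0 0
  rw [ex 0] at h0
  have h1 := fib0 1
  rw [ex 1] at h1
  by_cases h10 : p 1 = p 0 <;> by_cases h20 : p 2 = p 0 <;> by_cases h30 : p 3 = p 0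
  · exact Or.inl ⟨hc 0 2 h20.symm, hc 1 3 (h10.trans h30.symm)⟩
  · simp [h10, h20, h30] at h0
    omega
  · simp [h10, h20, h30] at h0
    omega
  · simp [h10, h20, h30] at h0
    omega
  · simp [h10, h20, h30] at h0
    omega
  · have h01 : ¬ p 0 = p 1 := fun h => h10 h.symm
    have h21 : ¬ p 2 = p 1 := fun h => h10 (h.symm.trans h20)
    by_cases h31 : p 3 = p 1
    · exact Or.inl ⟨hc 0 2 h20.symm, hc 1 3 h31.symm⟩
    · simp [h01, h21, h31] at h1
      omega
  · have h01 : ¬ p 0 = p 1 := fun h => h10 h.symm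
    have h31 : ¬ p 3 = p 1 := fun h => h10 (h.symm.trans h30)
    by_cases h21 : p 2 = p 1
    · exact Or.inr ⟨hc 0 3 h30.symm, hc 1 2 h21.symm⟩
    · simp [h01, h21, h31] at h1
      omega
  · simp [h10, h20, h30] at h0
    omega

/-- In a measurable set of positive measure on the circle one can find two points that
differ by a nonzero torsion element. -/
lemma engine_aux {B : Set UnitAddCircle} (hBm : MeasurableSet B) (hBpos : 0 < volume B) :
    ∃ (N : ℕ) (q : UnitAddCircle), (N : ℤ) ≠ 0 ∧ q ≠ 0 ∧ (N : ℤ) • q = 0 ∧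
      ∃ u, u ∈ B ∧ u + q ∈ B := by
  have hvolB_ne_top : volume B ≠ ⊤ := measure_ne_top _ _
  obtain ⟨N, hN⟩ := ENNReal.exists_nat_gt
    (show (1 : ℝ≥0∞) / volume B ≠ ⊤ by
      simp [ENNReal.div_eq_top, hBpos.ne'])
  have h1lt : (1 : ℝ≥0∞) < N * volume B := by
    have hcan : (1 : ℝ≥0∞) / volume B * volume B = 1 :=
      ENNReal.div_mul_cancel hBpos.ne' hvolB_ne_top
    calc (1 : ℝ≥0∞) = (1 / volume B) * volume B := hcan.symm
      _ < N * volume B := ENNReal.mul_lt_mul_left hBpos.ne' hvolB_ne_top hN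
  have hNpos : 0 < N := by
    rcases Nat.eq_zero_or_pos N with h | h
    · subst h; simp at h1lt
    · exact h
  set q : ℕ → UnitAddCircle := fun k => (((k : ℝ) / (N : ℝ) : ℝ) : UnitAddCircle) with hq
  have hqN : ∀ j : ℕ, (N : ℤ) • q j = 0 := by
    intro j
    rw [hq]
    dsimp only
    rw [← AddCircle.coe_zsmul]
    rw [AddCircle.coe_eq_zero_iff]
    exact ⟨(j : ℤ), by
      have hN0 : (N : ℝ) ≠ 0 := by exact_mod_cast hNpos.ne'
      rw [zsmul_eq_mul, zsmul_eq_mul]; push_cast; field_simp⟩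
  have hq0 : ∀ j : ℕ, 1 ≤ j → j < N → q j ≠ 0 := by
    intro j hj1 hjN h
    rw [hq] at h
    dsimp only at h
    rw [AddCircle.coe_eq_zero_iff] at h
    obtain ⟨n, hn⟩ := h
    have hn' : (n : ℝ) = (j : ℝ) / N := by simpa using hn
    have hpos : (0 : ℝ) < (j : ℝ) / N := by
      apply div_pos <;> [exact_mod_cast hj1; exact_mod_cast hNpos]
    have hlt : (j : ℝ) / N < 1 := by
      rw [div_lt_one (by exact_mod_cast hNpos)]
      exact_mod_cast hjN
    rcases le_or_gt n 0 with h' | h'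
    · have : (n : ℝ) ≤ 0 := by exact_mod_cast h'
      linarith
    · have : (1 : ℝ) ≤ (n : ℝ) := by exact_mod_cast h'
      linarith
  have hqadd : ∀ i j : ℕ, i ≤ j → q (j - i) + q i = q j := by
    intro i j hij
    rw [hq]
    dsimp only
    rw [← AddCircle.coe_add]
    congr 1
    rw [Nat.cast_sub hij]
    ring
  by_contra hcon
  have hcon' : ∀ j : ℕ, 1 ≤ j → j < N → ∀ u, u ∈ B → u + q j ∈ B → False := by
    intro j hj1 hjN u hu huq
    exact hcon ⟨N, q j, by exact_mod_cast hNpos.ne', hq0 j hj1 hjN, hqN j, u, hu, huq⟩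
  set C : ℕ → Set UnitAddCircle := fun k => (-(q k)) +ᵥ B with hC
  have hCm : ∀ k, MeasurableSet (C k) := fun k => hBm.const_vadd _
  have hCmem : ∀ k x, x ∈ C k ↔ q k + x ∈ B := by
    intro k x
    rw [hC]
    dsimp only
    rw [Set.mem_vadd_set_iff_neg_vadd_mem]
    simp [vadd_eq_add]
  have hCvol : ∀ k, volume (C k) = volume B := fun k => measure_vadd _ _ _
  have hdisj : ((Finset.range N : Finset ℕ) : Set ℕ).PairwiseDisjoint C := by
    have key : ∀ i j : ℕ, i ∈ Finset.range N → j ∈ Finset.range N → i < j →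
        Disjoint (C i) (C j) := by
      intro i j hi hj hlt
      rw [Finset.mem_range] at hi hj
      rw [Set.disjoint_left]
      intro x hxi hxj
      have h1 : q i + x ∈ B := (hCmem i x).1 hxi
      have h2 : q j + x ∈ B := (hCmem j x).1 hxj
      have h3 : (q i + x) + q (j - i) ∈ B := by
        have e : q i + x + q (j - i) = q j + x := by
          rw [← hqadd i j hlt.le]; abel
        rw [e]; exact h2
      exact hcon' (j - i) (by omega) (by omega) (q i + x) h1 h3
    intro i hi j hj hij
    rcases hij.lt_or_gt with h | h
    · exact key i j hi hj h
    · exact (key j i hj hi h).symm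
  have hsum := measure_biUnion_finset (μ := volume) hdisj (fun k _ => hCm k)
  have hle : (N : ℝ≥0∞) * volume B ≤ 1 := by
    calc (N : ℝ≥0∞) * volume B = ∑ k ∈ Finset.range N, volume (C k) := by
          simp [hCvol, Finset.sum_const, nsmul_eq_mul]
      _ = volume (⋃ k ∈ Finset.range N, C k) := hsum.symm
      _ ≤ volume (Set.univ) := measure_mono (Set.subset_univ _)
      _ = 1 := by rw [AddCircle.measure_univ]; simp
  exact absurd h1lt (not_lt.mpr hle)

end

end Auxiliary

/-- If `E ⊆ ℝ/ℤ` is such that `E + E` has positive outer Lebesgue measure and `E` has no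
non-trivial solution to any linear equation of order `4`, then `E` is not Lebesgue
measurable. -/
theorem not_measurable_of_order_four_free
    (E : Set UnitAddCircle)
    (hsum : 0 < volume (E + E))
    (hfree : ∀ (m : Fin 4 → ℤ) (x : Fin 4 → UnitAddCircle), (∀ i, m i ≠ 0) →
      (∀ i, x i ∈ E) → ∑ i, m i • x i = 0 → IsTrivialSol m x) :
    ¬ MeasurableSet E := by
  intro hEm
  classical
  set E' : Set UnitAddCircle := E \ TorSet with hE'def
  have hE'm : MeasurableSet E' := hEm.diff torSet_countable.measurableSet
  have hE'nt : ∀ x, x ∈ E' → ∀ n : ℤ, n ≠ 0 → n • x ≠ 0 := by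
    intro x hx n hn h
    exact hx.2 ⟨n, hn, h⟩
  -- The key step: two elements of `E' + E'` cannot differ by a nonzero torsion element.
  have key : ∀ (N : ℤ), N ≠ 0 → ∀ q : UnitAddCircle, q ≠ 0 → N • q = 0 →
      ∀ a b c d : UnitAddCircle, a ∈ E' → b ∈ E' → c ∈ E' → d ∈ E' →
      c + d = (a + b) + q → False := by
    intro N hN q hq hNq a b c d ha hb hc hd habq
    have hnt : ∀ i, ∀ n : ℤ, n ≠ 0 → n • (![a, b, c, d] : Fin 4 → UnitAddCircle) i ≠ 0 := by
      intro i
      fin_cases i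
      · exact hE'nt a ha
      · exact hE'nt b hb
      · exact hE'nt c hc
      · exact hE'nt d hd
    have e1 : ∑ i, (![N, N, -N, -N] : Fin 4 → ℤ) i • (![a, b, c, d] : Fin 4 → UnitAddCircle) i
        = N • (a + b) - N • (c + d) := by
      rw [Fin.sum_univ_four]
      show N • a + N • b + (-N) • c + (-N) • d = _
      rw [smul_add, smul_add, neg_smul, neg_smul]
      abel
    have hsol := hfree ![N, N, -N, -N] ![a, b, c, d]
      (by intro i; fin_cases i <;> simpa using hN)
      (by intro i; fin_cases i
          · exact ha.1
          · exact hb.1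
          · exact hc.1
          · exact hd.1)
      (by rw [e1, habq, smul_add]; simp [hNq])
    rcases cert_aux N hN _ hnt hsol with ⟨h02, h13⟩ | ⟨h03, h12⟩
    · have hac : a = c := by simpa using h02
      have hbd : b = d := by simpa using h13
      rw [← hac, ← hbd] at habq
      exact hq (left_eq_add.mp habq)
    · have had : a = d := by simpa using h03
      have hbc : b = c := by simpa using h12
      rw [← had, ← hbc, add_comm b a] at habq
      exact hq (left_eq_add.mp habq)
  by_cases hE0 : volume E = 0
  · -- Case `E` has measure zero: show `E' + E'` is measurable via Lusin–Souslin
    set ρ : UnitAddCircle → ℝ := fun x => ((AddCircle.measurableEquivIco 1 0 x : Set.Ico (0:ℝ) (0+1)) : ℝ) with hρdef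
    have hρmeas : Measurable ρ :=
      measurable_subtype_coe.comp (AddCircle.measurableEquivIco 1 0).measurable
    have hρinj : Function.Injective ρ := fun x y h =>
      (AddCircle.measurableEquivIco 1 0).injective (Subtype.coe_injective h)
    set S : Set (UnitAddCircle × UnitAddCircle) :=
      (E' ×ˢ E') ∩ {z | ρ z.1 ≤ ρ z.2} with hSdef
    have hSm : MeasurableSet S :=
      (hE'm.prod hE'm).inter
        (measurableSet_le (hρmeas.comp measurable_fst) (hρmeas.comp measurable_snd))
    set f : UnitAddCircle × UnitAddCircle → UnitAddCircle := fun z => z.1 + z.2 with hfdef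
    have hfc : Continuous f := continuous_fst.add continuous_snd
    have hinj : Set.InjOn f S := by
      intro z hz w hw hzw
      have hz1 : z.1 ∈ E' := hz.1.1
      have hz2 : z.2 ∈ E' := hz.1.2
      have hw1 : w.1 ∈ E' := hw.1.1
      have hw2 : w.2 ∈ E' := hw.1.2
      have hzord : ρ z.1 ≤ ρ z.2 := hz.2
      have hword : ρ w.1 ≤ ρ w.2 := hw.2
      have hnt : ∀ i, ∀ n : ℤ, n ≠ 0 →
          n • (![z.1, z.2, w.1, w.2] : Fin 4 → UnitAddCircle) i ≠ 0 := by
        intro i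
        fin_cases i
        · exact hE'nt _ hz1
        · exact hE'nt _ hz2
        · exact hE'nt _ hw1
        · exact hE'nt _ hw2
      have e1 : ∑ i, (![(1:ℤ), 1, -1, -1] : Fin 4 → ℤ) i •
            (![z.1, z.2, w.1, w.2] : Fin 4 → UnitAddCircle) i
          = (1:ℤ) • (z.1 + z.2) - (1:ℤ) • (w.1 + w.2) := by
        rw [Fin.sum_univ_four]
        show (1:ℤ) • z.1 + (1:ℤ) • z.2 + (-1:ℤ) • w.1 + (-1:ℤ) • w.2 = _
        rw [smul_add, smul_add, neg_smul, neg_smul]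
        abel
      have hsol := hfree ![1, 1, -1, -1] ![z.1, z.2, w.1, w.2]
        (by intro i; fin_cases i <;> norm_num)
        (by intro i; fin_cases i
            · exact hz1.1
            · exact hz2.1
            · exact hw1.1
            · exact hw2.1)
        (by
          have hzw' : z.1 + z.2 = w.1 + w.2 := hzw
          rw [e1, hzw']; simp)
      rcases cert_aux 1 one_ne_zero _ hnt hsol with ⟨h02, h13⟩ | ⟨h03, h12⟩
      · have : z.1 = w.1 := by simpa using h02
        have that : z.2 = w.2 := by simpa using h13
        exact Prod.ext this that
      · have e13 : z.1 = w.2 := by simpa using h03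
        have e22 : z.2 = w.1 := by simpa using h12
        have hww : ρ w.2 ≤ ρ w.1 := by
          rw [← e13, ← e22]
          exact hzord
        have hw12 : w.1 = w.2 := hρinj (le_antisymm hword hww)
        refine Prod.ext ?_ ?_
        · rw [e13, ← hw12]
        · rw [e22, hw12]
    have himg : f '' S = E' + E' := by
      ext s
      constructor
      · rintro ⟨z, hzS, rfl⟩
        exact Set.add_mem_add hzS.1.1 hzS.1.2
      · intro hs
        rw [Set.mem_add] at hs
        obtain ⟨a, ha, b, hb, rfl⟩ := hs
        rcases le_total (ρ a) (ρ b) with h | h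
        · exact ⟨(a, b), ⟨Set.mem_prod.mpr ⟨ha, hb⟩, h⟩, rfl⟩
        · exact ⟨(b, a), ⟨Set.mem_prod.mpr ⟨hb, ha⟩, h⟩, add_comm b a⟩
    have hBmeas : MeasurableSet (E' + E') := by
      rw [← himg]
      exact hSm.image_of_continuousOn_injOn hfc.continuousOn hinj
    have hsub : E + E ⊆ (E' + E') ∪ ⋃ τ ∈ TorSet, (τ +ᵥ E) := by
      intro s hs
      rw [Set.mem_add] at hs
      obtain ⟨a, ha, b, hb, rfl⟩ := hs
      by_cases hta : a ∈ TorSet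
      · refine Or.inr (Set.mem_biUnion hta ?_)
        exact Set.vadd_mem_vadd_set hb
      · by_cases htb : b ∈ TorSet
        · refine Or.inr (Set.mem_biUnion htb ?_)
          rw [add_comm]
          exact Set.vadd_mem_vadd_set ha
        · exact Or.inl (Set.add_mem_add ⟨ha, hta⟩ ⟨hb, htb⟩)
    have hNull : volume (⋃ τ ∈ TorSet, (τ +ᵥ E)) = 0 := by
      rw [measure_biUnion_null_iff torSet_countable]
      intro τ _
      rw [measure_vadd]
      exact hE0
    have hBpos : 0 < volume (E' + E') := by
      have h1 : volume (E + E) ≤ volume (E' + E') := by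
        calc volume (E + E) ≤ volume ((E' + E') ∪ ⋃ τ ∈ TorSet, (τ +ᵥ E)) :=
              measure_mono hsub
          _ ≤ volume (E' + E') + volume (⋃ τ ∈ TorSet, (τ +ᵥ E)) := measure_union_le _ _
          _ = volume (E' + E') := by rw [hNull, add_zero]
      exact lt_of_lt_of_le hsum h1
    obtain ⟨N, q, hN, hq, hNq, u, huB, huqB⟩ := engine_aux hBmeas hBpos
    rw [Set.mem_add] at huB huqB
    obtain ⟨a, ha, b, hb, hab⟩ := huB
    obtain ⟨c, hc, d, hd, hcd⟩ := huqB
    exact key N hN q hq hNq a b c d ha hb hc hd (by rw [hcd, ← hab])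
  · -- Case `E` has positive measure
    have hE'vol : volume E' = volume E := measure_diff_null torSet_null
    have hE'pos : 0 < volume E' := by
      rw [hE'vol]
      exact lt_of_le_of_ne zero_le (Ne.symm hE0)
    obtain ⟨N, q, hN, hq, hNq, u, huE, huqE⟩ := engine_aux hE'm hE'pos
    exact key N hN q hq hNq u u (u + q) u huE huE huqE huE (by abel)
end

section
/- Let G be an infinite abelian group of cardinality κ such that the kernels of the maps x ↦ 2x and x ↦ 3x both have cardinality strictly less than κ. Let E ⊆ G be a subset such that for every x ∈ G the set {(a,b) ∈ E × E : a + b = x} has cardinality κ. Then there exists a Sidon subset S ⊆ E with S + S = G. -/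
open Cardinal Pointwise

/-- A *Sidon set* in an abelian group: `a + b = c + d` forces `{a, b} = {c, d}`. -/
def IsSidon {G : Type*} [AddCommGroup G] (S : Set G) : Prop :=
  ∀ a b c d : G, a ∈ S → b ∈ S → c ∈ S → d ∈ S → a + b = c + d →
    ({a, b} : Set G) = {c, d}

section Aux

variable {G : Type*} [AddCommGroup G]

/-- Inserting a single element into a Sidon set. -/
lemma isSidon_insert {T : Set G} (hT : IsSidon T) {c : G}
    (h1 : ∀ t1 ∈ T, ∀ t2 ∈ T, ∀ t3 ∈ T, c ≠ t1 + t2 - t3)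
    (h2 : ∀ t1 ∈ T, ∀ t2 ∈ T, c + c ≠ t1 + t2) :
    IsSidon (insert c T) := by
  intro p q r s hp hq hr hs h
  simp only [Set.mem_insert_iff] at hp hq hr hs
  rcases hp with rfl | hp <;> rcases hq with rfl | hq <;>
    rcases hr with rfl | hr <;> rcases hs with rfl | hs
  · rfl
  · obtain rfl := add_left_cancel h; rfl
  · obtain rfl := add_right_cancel h; rfl
  · exact absurd h (h2 r hr s hs)
  · obtain rfl := add_left_cancel h; rfl
  · obtain rfl := add_left_cancel h; rfl
  · obtain rfl : q = r := by linear_combination (norm := module) h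
    exact Set.pair_comm _ _
  · exact absurd (show p = r + s - q by linear_combination (norm := module) h)
      (h1 r hr s hs q hq)
  · obtain rfl : p = s := by linear_combination (norm := module) h
    rfl
  · obtain rfl : p = s := by linear_combination (norm := module) h
    exact Set.pair_comm _ _
  · obtain rfl := add_right_cancel h; rfl
  · exact absurd (show q = r + s - p by linear_combination (norm := module) h)
      (h1 r hr s hs p hp)
  · exact absurd h.symm (h2 p hp q hq)
  · exact absurd (show r = p + q - s by linear_combination (norm := module) -h)
      (h1 p hp q hq s hs)
  · exact absurd (show s = p + q - r by linear_combination (norm := module) -h)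
      (h1 p hp q hq r hr)
  · exact hT p q r s hp hq hr hs h

/-- A monotone union of Sidon sets is Sidon. -/
lemma isSidon_iUnion {ι : Type*} [LinearOrder ι] {f : ι → Set G}
    (hmono : ∀ i j, i ≤ j → f i ⊆ f j) (hs : ∀ i, IsSidon (f i)) :
    IsSidon (⋃ i, f i) := by
  intro a b c d ha hb hc hd h
  simp only [Set.mem_iUnion] at ha hb hc hd
  obtain ⟨i1, ha⟩ := ha
  obtain ⟨i2, hb⟩ := hb
  obtain ⟨i3, hc⟩ := hc
  obtain ⟨i4, hd⟩ := hd
  refine hs (max (max i1 i2) (max i3 i4)) a b c d ?_ ?_ ?_ ?_ h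
  · exact hmono _ _ ((le_max_left i1 i2).trans (le_max_left _ _)) ha
  · exact hmono _ _ ((le_max_right i1 i2).trans (le_max_left _ _)) hb
  · exact hmono _ _ ((le_max_left i3 i4).trans (le_max_right _ _)) hc
  · exact hmono _ _ ((le_max_right i3 i4).trans (le_max_right _ _)) hd

lemma mk_fiber_two (c : G) :
    Cardinal.mk {a : G | a + a = c} ≤ Cardinal.mk {x : G // (2 : ℤ) • x = 0} := by
  rcases Set.eq_empty_or_nonempty {a : G | a + a = c} with h | ⟨a0, ha0⟩
  · rw [h]; simp
  · have ha0' : a0 + a0 = c := ha0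
    refine Cardinal.mk_le_of_injective
      (f := fun a : ↥{a : G | a + a = c} => (⟨(a : G) - a0, by
        have h2 : (a : G) + a = c := a.2
        linear_combination (norm := module) h2 - ha0'⟩ : {x : G // (2 : ℤ) • x = 0})) ?_
    intro p q hpq
    have h3 : (p : G) - a0 = (q : G) - a0 := congrArg Subtype.val hpq
    exact Subtype.ext (by linear_combination (norm := module) h3)

lemma mk_fiber_three (c : G) :
    Cardinal.mk {a : G | a + a + a = c} ≤ Cardinal.mk {x : G // (3 : ℤ) • x = 0} := by
  rcases Set.eq_empty_or_nonempty {a : G | a + a + a = c} with h | ⟨a0, ha0⟩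
  · rw [h]; simp
  · have ha0' : a0 + a0 + a0 = c := ha0
    refine Cardinal.mk_le_of_injective
      (f := fun a : ↥{a : G | a + a + a = c} => (⟨(a : G) - a0, by
        have h2 : (a : G) + a + a = c := a.2
        linear_combination (norm := module) h2 - ha0'⟩ : {x : G // (3 : ℤ) • x = 0})) ?_
    intro p q hpq
    have h3 : (p : G) - a0 = (q : G) - a0 := congrArg Subtype.val hpq
    exact Subtype.ext (by linear_combination (norm := module) h3)

end Aux

/-- The key extension lemma: a small Sidon set `T` with `x ∉ T + T` can be enlarged by a
pair `a, b ∈ E` with `a + b = x`, staying Sidon. -/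
lemma sidon_extend {G : Type*} [AddCommGroup G] [Infinite G]
    (hker2 : Cardinal.mk {x : G // (2 : ℤ) • x = 0} < Cardinal.mk G)
    (hker3 : Cardinal.mk {x : G // (3 : ℤ) • x = 0} < Cardinal.mk G)
    (E : Set G)
    (hE : ∀ x : G, Cardinal.mk {p : G × G // p.1 ∈ E ∧ p.2 ∈ E ∧ p.1 + p.2 = x}
            = Cardinal.mk G)
    (T : Set G) (hTs : IsSidon T) (hTc : Cardinal.mk T < Cardinal.mk G)
    (x : G) (hx : x ∉ T + T) :
    ∃ a b : G, a ∈ E ∧ b ∈ E ∧ a + b = x ∧ IsSidon (insert a (insert b T)) := by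
  classical
  have haleph : ℵ₀ ≤ #G := Cardinal.infinite_iff.mp ‹Infinite G›
  have hTT : #(↥T × ↥T) < #G := by
    simp only [Cardinal.mk_prod, Cardinal.lift_id]
    exact Cardinal.mul_lt_of_lt haleph hTc hTc
  have hTTT : #(↥T × ↥T × ↥T) < #G := by
    simp only [Cardinal.mk_prod, Cardinal.lift_id]
    exact Cardinal.mul_lt_of_lt haleph hTc hTT
  have hBad : #(T ∪ ({a : G | a + a = x}
      ∪ (Set.range (fun p : ↥T × ↥T × ↥T => (p.1 : G) + p.2.1 - p.2.2)
      ∪ (Set.range (fun p : ↥T × ↥T × ↥T => x - ((p.1 : G) + p.2.1 - p.2.2))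
      ∪ ((⋃ p : ↥T × ↥T, {a : G | a + a = (p.1 : G) + p.2})
      ∪ ((⋃ p : ↥T × ↥T, {a : G | a + a = x + x - ((p.1 : G) + p.2)})
      ∪ ((⋃ p : ↥T × ↥T, {a : G | a + a = x + (p.1 : G) - p.2})
      ∪ ((⋃ t : ↥T, {a : G | a + a + a = x + (t : G)})
      ∪ ((⋃ t : ↥T, {a : G | a + a + a = x + x - (t : G)})
      ∪ (⋃ k : {y : G // (2 : ℤ) • y = 0}, {a : G | a + a = x + (k : G)})))))))))
        : Set G) < #G := by
    refine lt_of_le_of_lt (Cardinal.mk_union_le _ _)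
      (Cardinal.add_lt_of_lt haleph hTc ?_)
    refine lt_of_le_of_lt (Cardinal.mk_union_le _ _)
      (Cardinal.add_lt_of_lt haleph ((mk_fiber_two x).trans_lt hker2) ?_)
    refine lt_of_le_of_lt (Cardinal.mk_union_le _ _)
      (Cardinal.add_lt_of_lt haleph (Cardinal.mk_range_le.trans_lt hTTT) ?_)
    refine lt_of_le_of_lt (Cardinal.mk_union_le _ _)
      (Cardinal.add_lt_of_lt haleph (Cardinal.mk_range_le.trans_lt hTTT) ?_)
    refine lt_of_le_of_lt (Cardinal.mk_union_le _ _)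
      (Cardinal.add_lt_of_lt haleph (lt_of_le_of_lt ((Cardinal.mk_iUnion_le _).trans
        (mul_le_mul' le_rfl (ciSup_le' fun p => mk_fiber_two _)))
        (Cardinal.mul_lt_of_lt haleph hTT hker2)) ?_)
    refine lt_of_le_of_lt (Cardinal.mk_union_le _ _)
      (Cardinal.add_lt_of_lt haleph (lt_of_le_of_lt ((Cardinal.mk_iUnion_le _).trans
        (mul_le_mul' le_rfl (ciSup_le' fun p => mk_fiber_two _)))
        (Cardinal.mul_lt_of_lt haleph hTT hker2)) ?_)
    refine lt_of_le_of_lt (Cardinal.mk_union_le _ _)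
      (Cardinal.add_lt_of_lt haleph (lt_of_le_of_lt ((Cardinal.mk_iUnion_le _).trans
        (mul_le_mul' le_rfl (ciSup_le' fun p => mk_fiber_two _)))
        (Cardinal.mul_lt_of_lt haleph hTT hker2)) ?_)
    refine lt_of_le_of_lt (Cardinal.mk_union_le _ _)
      (Cardinal.add_lt_of_lt haleph (lt_of_le_of_lt ((Cardinal.mk_iUnion_le _).trans
        (mul_le_mul' le_rfl (ciSup_le' fun t => mk_fiber_three _)))
        (Cardinal.mul_lt_of_lt haleph hTc hker3)) ?_)
    refine lt_of_le_of_lt (Cardinal.mk_union_le _ _)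
      (Cardinal.add_lt_of_lt haleph (lt_of_le_of_lt ((Cardinal.mk_iUnion_le _).trans
        (mul_le_mul' le_rfl (ciSup_le' fun t => mk_fiber_three _)))
        (Cardinal.mul_lt_of_lt haleph hTc hker3)) ?_)
    exact lt_of_le_of_lt ((Cardinal.mk_iUnion_le _).trans
        (mul_le_mul' le_rfl (ciSup_le' fun k => mk_fiber_two _)))
        (Cardinal.mul_lt_of_lt haleph hker2 hker2)
  have hAcard : #G ≤ #{a : G | a ∈ E ∧ x - a ∈ E} := by
    rw [← hE x]
    refine Cardinal.mk_le_of_injective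
      (f := fun p : {p : G × G // p.1 ∈ E ∧ p.2 ∈ E ∧ p.1 + p.2 = x} =>
        (⟨p.1.1, p.2.1, by
          have h := p.2.2.2
          rw [show x - p.1.1 = p.1.2 by linear_combination (norm := module) -h]
          exact p.2.2.1⟩ : ↥{a : G | a ∈ E ∧ x - a ∈ E})) ?_
    rintro ⟨⟨p1, p2⟩, hp1, hp2, hp3⟩ ⟨⟨q1, q2⟩, hq1, hq2, hq3⟩ h
    have hpq : p1 = q1 := congrArg Subtype.val h
    have hpq2 : p2 = q2 := by linear_combination (norm := module) hp3 - hq3 - hpq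
    simp only [Subtype.mk.injEq, Prod.mk.injEq]
    exact ⟨hpq, hpq2⟩
  obtain ⟨a, haA, hbad⟩ := Set.not_subset.mp
    (fun hs => absurd (hAcard.trans (Cardinal.mk_le_mk_of_subset hs)) (not_le.mpr hBad))
  simp only [Set.mem_union, Set.mem_setOf_eq, Set.mem_range, Set.mem_iUnion, not_or,
    not_exists] at hbad
  obtain ⟨hb1, hb3, hb4, hb5, hb6, hb7, hb8, hb9, hb10, hb11⟩ := hbad
  have haA' : a ∈ E ∧ x - a ∈ E := haA
  refine ⟨a, x - a, haA'.1, haA'.2, by abel, ?_⟩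
  have hT1 : IsSidon (insert (x - a) T) := by
    refine isSidon_insert hTs ?_ ?_
    · rintro t1 ht1 t2 ht2 t3 ht3 heq
      exact hb5 (⟨t1, ht1⟩, ⟨t2, ht2⟩, ⟨t3, ht3⟩)
        (by linear_combination (norm := module) heq)
    · rintro t1 ht1 t2 ht2 heq
      exact hb7 (⟨t1, ht1⟩, ⟨t2, ht2⟩)
        (by linear_combination (norm := module) -heq)
  refine isSidon_insert hT1 ?_ ?_
  · rintro u1 hu1 u2 hu2 u3 hu3 heq
    rcases Set.mem_insert_iff.mp hu1 with rfl | h1 <;>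
      rcases Set.mem_insert_iff.mp hu2 with rfl | h2 <;>
        rcases Set.mem_insert_iff.mp hu3 with rfl | h3
    · exact hb3 (by linear_combination (norm := module) heq)
    · exact hb10 ⟨u3, h3⟩ (by linear_combination (norm := module) heq)
    · have h : a = u2 := by linear_combination (norm := module) heq
      exact hb1 (by rwa [← h] at h2)
    · exact hb8 (⟨u2, h2⟩, ⟨u3, h3⟩) (by linear_combination (norm := module) heq)
    · have h : a = u1 := by linear_combination (norm := module) heq
      exact hb1 (by rwa [← h] at h1)
    · exact hb8 (⟨u1, h1⟩, ⟨u3, h3⟩) (by linear_combination (norm := module) heq)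
    · exact hx (Set.mem_add.mpr ⟨u1, h1, u2, h2,
        by linear_combination (norm := module) -heq⟩)
    · exact hb4 (⟨u1, h1⟩, ⟨u2, h2⟩, ⟨u3, h3⟩) heq.symm
  · rintro u1 hu1 u2 hu2 heq
    rcases Set.mem_insert_iff.mp hu1 with rfl | h1 <;>
      rcases Set.mem_insert_iff.mp hu2 with rfl | h2
    · exact hb11 ⟨a + a - x, by linear_combination (norm := module) heq⟩ (by show a + a = x + (a + a - x); abel)
    · exact hb9 ⟨u2, h2⟩ (by linear_combination (norm := module) heq)
    · exact hb9 ⟨u1, h1⟩ (by linear_combination (norm := module) heq)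
    · exact hb6 (⟨u1, h1⟩, ⟨u2, h2⟩) heq

/-- If `G` is an infinite abelian group of cardinality `κ` whose `2`- and `3`-torsion
kernels have cardinality `< κ`, and `E ⊆ G` is such that every `x ∈ G` has `κ` many
representations `x = a + b` with `a, b ∈ E`, then `E` contains a Sidon set `S` with
`S + S = G`. -/
theorem exists_sidon_subset_with_full_sumset
    {G : Type*} [AddCommGroup G] [Infinite G]
    (hker2 : Cardinal.mk {x : G // (2 : ℤ) • x = 0} < Cardinal.mk G)
    (hker3 : Cardinal.mk {x : G // (3 : ℤ) • x = 0} < Cardinal.mk G)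
    (E : Set G)
    (hE : ∀ x : G, Cardinal.mk {p : G × G // p.1 ∈ E ∧ p.2 ∈ E ∧ p.1 + p.2 = x}
            = Cardinal.mk G) :
    ∃ S : Set G, S ⊆ E ∧ IsSidon S ∧ S + S = Set.univ := by
  classical
  obtain ⟨e⟩ : Nonempty ((#G).ord.ToType ≃ G) := Cardinal.eq.mp (Cardinal.mk_ord_toType #G)
  have wf : WellFounded ((· < ·) : (#G).ord.ToType → (#G).ord.ToType → Prop) :=
    wellFounded_lt
  obtain ⟨F, hF⟩ : ∃ F : (#G).ord.ToType → Set G, ∀ i,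
      F i = if h : ∃ p : G × G, p.1 ∈ E ∧ p.2 ∈ E ∧ p.1 + p.2 = e i ∧
          IsSidon (insert p.1 (insert p.2 (⋃ j, ⋃ _ : j < i, F j)))
        then {h.choose.1, h.choose.2} else ∅ := by
    refine ⟨wf.fix (fun i rec =>
      if h : ∃ p : G × G, p.1 ∈ E ∧ p.2 ∈ E ∧ p.1 + p.2 = e i ∧
          IsSidon (insert p.1 (insert p.2 (⋃ j, ⋃ h' : j < i, rec j h')))
        then {h.choose.1, h.choose.2} else ∅), fun i => ?_⟩
    exact wf.fix_eq _ i
  have haleph : ℵ₀ ≤ #G := Cardinal.infinite_iff.mp ‹Infinite G›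
  have hFcard : ∀ i, #(F i) ≤ 2 := by
    intro i
    rw [hF i]
    split_ifs with h
    · refine le_trans Cardinal.mk_insert_le ?_
      rw [Cardinal.mk_singleton]
      exact le_of_eq one_add_one_eq_two
    · simp
  have hFE : ∀ i, F i ⊆ E := by
    intro i
    rw [hF i]
    split_ifs with h
    · intro y hy
      rcases hy with rfl | hy
      · exact h.choose_spec.1
      · rw [Set.mem_singleton_iff] at hy
        rw [hy]
        exact h.choose_spec.2.1
    · exact fun y hy => absurd hy (Set.notMem_empty y)
  have hUmono : ∀ i j, i ≤ j →
      ((⋃ k, ⋃ _ : k < i, F k) ∪ F i) ⊆ ((⋃ k, ⋃ _ : k < j, F k) ∪ F j) := by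
    intro i j hij
    rcases eq_or_lt_of_le hij with rfl | hij
    · exact subset_rfl
    · intro y hy
      left
      rcases hy with hy | hy
      · simp only [Set.mem_iUnion] at hy ⊢
        obtain ⟨k, hk, hyk⟩ := hy
        exact ⟨k, hk.trans hij, hyk⟩
      · simp only [Set.mem_iUnion]
        exact ⟨i, hij, hy⟩
  have hTU : ∀ i : (#G).ord.ToType, (⋃ k, ⋃ _ : k < i, F k)
      = ⋃ j : ↥(Set.Iio i), ((⋃ k, ⋃ _ : k < (j : (#G).ord.ToType), F k) ∪ F j) := by
    intro i
    apply subset_antisymm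
    · intro y hy
      simp only [Set.mem_iUnion] at hy
      obtain ⟨k, hk, hyk⟩ := hy
      exact Set.mem_iUnion.mpr ⟨⟨k, hk⟩, Or.inr hyk⟩
    · intro y hy
      simp only [Set.mem_iUnion] at hy
      obtain ⟨⟨j, hj⟩, hyj⟩ := hy
      rcases hyj with hyj | hyj
      · simp only [Set.mem_iUnion] at hyj
        obtain ⟨k, hk, hyk⟩ := hyj
        exact Set.mem_iUnion.mpr ⟨k, Set.mem_iUnion.mpr ⟨hk.trans hj, hyk⟩⟩
      · exact Set.mem_iUnion.mpr ⟨j, Set.mem_iUnion.mpr ⟨hj, hyj⟩⟩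
  have hTTc : ∀ i : (#G).ord.ToType, #(⋃ k, ⋃ _ : k < i, F k : Set G) < #G := by
    intro i
    have hsub : (⋃ k, ⋃ _ : k < i, F k) ⊆ ⋃ j : ↥(Set.Iio i), F j := by
      intro y hy
      simp only [Set.mem_iUnion] at hy ⊢
      obtain ⟨k, hk, hyk⟩ := hy
      exact ⟨⟨k, hk⟩, hyk⟩
    refine lt_of_le_of_lt (Cardinal.mk_le_mk_of_subset hsub) ?_
    refine lt_of_le_of_lt (Cardinal.mk_iUnion_le _) ?_
    refine Cardinal.mul_lt_of_lt haleph (Cardinal.mk_Iio_ord_toType i) ?_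
    refine lt_of_le_of_lt (ciSup_le' fun j => hFcard j) ?_
    exact lt_of_lt_of_le (by exact_mod_cast Cardinal.nat_lt_aleph0 2) haleph
  have hTTE : ∀ i : (#G).ord.ToType, (⋃ k, ⋃ _ : k < i, F k : Set G) ⊆ E := fun i =>
    Set.iUnion_subset fun k => Set.iUnion_subset fun _ => hFE k
  have key : ∀ i : (#G).ord.ToType,
      IsSidon ((⋃ k, ⋃ _ : k < i, F k) ∪ F i) ∧ ((⋃ k, ⋃ _ : k < i, F k) ∪ F i) ⊆ E := by
    intro i
    refine wf.induction
      (C := fun i => IsSidon ((⋃ k, ⋃ _ : k < i, F k) ∪ F i)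
        ∧ ((⋃ k, ⋃ _ : k < i, F k) ∪ F i) ⊆ E) i fun i IH => ?_
    show IsSidon ((⋃ k, ⋃ _ : k < i, F k) ∪ F i) ∧ ((⋃ k, ⋃ _ : k < i, F k) ∪ F i) ⊆ E
    have hTs : IsSidon (⋃ k, ⋃ _ : k < i, F k) := by
      rw [hTU i]
      exact isSidon_iUnion (fun p q hpq => hUmono _ _ (Subtype.coe_le_coe.mpr hpq))
        (fun j => (IH j j.2).1)
    by_cases h : ∃ p : G × G, p.1 ∈ E ∧ p.2 ∈ E ∧ p.1 + p.2 = e i ∧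
        IsSidon (insert p.1 (insert p.2 (⋃ j, ⋃ _ : j < i, F j)))
    · have hFi : F i = {h.choose.1, h.choose.2} := by rw [hF i, dif_pos h]
      obtain ⟨hc1, hc2, hsum, hsid⟩ := h.choose_spec
      constructor
      · rw [hFi, Set.union_comm]
        rw [show ({h.choose.1, h.choose.2} : Set G) ∪ (⋃ k, ⋃ _ : k < i, F k)
            = insert h.choose.1 (insert h.choose.2 (⋃ k, ⋃ _ : k < i, F k)) by
          rw [Set.insert_union, Set.singleton_union]]
        exact hsid
      · rw [hFi]
        refine Set.union_subset (hTTE i) ?_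
        intro y hy
        rcases hy with rfl | hy
        · exact hc1
        · rw [Set.mem_singleton_iff] at hy
          rw [hy]
          exact hc2
    · have hFi : F i = ∅ := by rw [hF i, dif_neg h]
      rw [hFi, Set.union_empty]
      exact ⟨hTs, hTTE i⟩
  have hTs2 : ∀ i : (#G).ord.ToType, IsSidon (⋃ k, ⋃ _ : k < i, F k) := by
    intro i
    rw [hTU i]
    exact isSidon_iUnion (fun p q hpq => hUmono _ _ (Subtype.coe_le_coe.mpr hpq))
      (fun j => (key j).1)
  refine ⟨⋃ i, ((⋃ k, ⋃ _ : k < i, F k) ∪ F i), ?_, ?_, ?_⟩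
  · exact Set.iUnion_subset fun i => (key i).2
  · exact isSidon_iUnion hUmono (fun i => (key i).1)
  · refine Set.eq_univ_of_forall fun x => ?_
    have hei : e (e.symm x) = x := e.apply_symm_apply x
    by_cases hmem : x ∈ (⋃ k, ⋃ _ : k < e.symm x, F k) + (⋃ k, ⋃ _ : k < e.symm x, F k)
    · have hsub : (⋃ k, ⋃ _ : k < e.symm x, F k)
          ⊆ ⋃ i, ((⋃ k, ⋃ _ : k < i, F k) ∪ F i) := by
        intro y hy
        exact Set.mem_iUnion.mpr ⟨e.symm x, Or.inl hy⟩
      exact Set.add_subset_add hsub hsub hmem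
    · obtain ⟨a, b, haE, hbE, hab, hsid⟩ :=
        sidon_extend hker2 hker3 E hE _ (hTs2 (e.symm x)) (hTTc (e.symm x))
          (e (e.symm x)) (by rwa [hei])
      have h : ∃ p : G × G, p.1 ∈ E ∧ p.2 ∈ E ∧ p.1 + p.2 = e (e.symm x) ∧
          IsSidon (insert p.1 (insert p.2 (⋃ j, ⋃ _ : j < e.symm x, F j))) :=
        ⟨(a, b), haE, hbE, hab, hsid⟩
      have hFi : F (e.symm x) = {h.choose.1, h.choose.2} := by rw [hF (e.symm x), dif_pos h]
      obtain ⟨hc1, hc2, hsum, -⟩ := h.choose_spec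
      refine Set.mem_add.mpr ⟨h.choose.1, ?_, h.choose.2, ?_, by rw [hsum, hei]⟩
      · exact Set.mem_iUnion.mpr ⟨e.symm x, Or.inr (by rw [hFi]; exact Set.mem_insert _ _)⟩
      · exact Set.mem_iUnion.mpr ⟨e.symm x, Or.inr (by
          rw [hFi]; exact Set.mem_insert_iff.mpr (Or.inr rfl))⟩
end

section
/- Every Lebesgue measurable Sidon subset S of ℝ with S + S = ℝ has Lebesgue measure zero. -/
open MeasureTheory Pointwise Filter Topology

/-- A Lebesgue measurable Sidon subset of `ℝ` whose sumset is all of `ℝ` is a null set. -/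
theorem sidon_measurable_full_sumset_null
    (S : Set ℝ) (hmeas : MeasurableSet S) (hS : IsSidon S) (hsum : S + S = Set.univ) :
    volume S = 0 := by
  by_contra h0
  have hpos : 0 < volume S := pos_iff_ne_zero.mpr h0
  -- find a compact subset of positive measure
  obtain ⟨K, hKS, hKcomp, hKpos⟩ := hmeas.exists_lt_isCompact hpos
  have hKclosed : IsClosed K := hKcomp.isClosed
  -- Steinhaus-type: for t close to 0, volume ((t +ᵥ K) \ K) < volume K
  have hev : ∀ᶠ t in 𝓝 (0 : ℝ), volume ((t +ᵥ K) \ K) < volume K :=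
    eventually_nhds_zero_measure_vadd_sdiff_lt (μ := volume) hKcomp hKclosed hKpos.ne'
  -- pick such a t which is nonzero
  obtain ⟨t, ht, htne⟩ : ∃ t : ℝ, volume ((t +ᵥ K) \ K) < volume K ∧ t ≠ 0 := by
    have : ∀ᶠ t in 𝓝[≠] (0 : ℝ),
        volume ((t +ᵥ K) \ K) < volume K ∧ t ≠ 0 := by
      filter_upwards [hev.filter_mono nhdsWithin_le_nhds, self_mem_nhdsWithin] with t h1 h2
      exact ⟨h1, h2⟩
    exact this.exists
  -- the intersection (t +ᵥ K) ∩ K has positive measure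
  have hinterpos : 0 < volume ((t +ᵥ K) ∩ K) := by
    by_contra hc
    push_neg at hc
    have hc0 : volume ((t +ᵥ K) ∩ K) = 0 := le_antisymm hc zero_le
    have h1 : volume (t +ᵥ K) = volume K := measure_vadd volume t K
    have h2 : volume (t +ᵥ K) ≤ volume ((t +ᵥ K) ∩ K) + volume ((t +ᵥ K) \ K) :=
      le_trans (measure_mono (fun x hx => by
        by_cases hxK : x ∈ K
        · exact Or.inl ⟨hx, hxK⟩
        · exact Or.inr ⟨hx, hxK⟩)) (measure_union_le _ _)
    rw [hc0, zero_add, h1] at h2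
    exact absurd (lt_of_le_of_lt h2 ht) (lt_irrefl _)
  -- a set of positive measure is not a subsingleton, so has two distinct points
  obtain ⟨x, hx, y, hy, hxy⟩ : ∃ x ∈ (t +ᵥ K) ∩ K, ∃ y ∈ (t +ᵥ K) ∩ K, x ≠ y := by
    by_contra hc
    push_neg at hc
    have hsub : ((t +ᵥ K) ∩ K).Subsingleton := fun a ha b hb => hc a ha b hb
    exact absurd (hsub.measure_zero volume) hinterpos.ne'
  -- translate membership facts into S
  have hxS : x ∈ S := hKS hx.2
  have hyS : y ∈ S := hKS hy.2
  have hxtS : x - t ∈ S := by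
    have := hx.1
    rw [Set.mem_vadd_set_iff_neg_vadd_mem] at this
    have h' : -t + x ∈ K := this
    have : x - t ∈ K := by rwa [sub_eq_neg_add]
    exact hKS this
  have hytS : y - t ∈ S := by
    have := hy.1
    rw [Set.mem_vadd_set_iff_neg_vadd_mem] at this
    have h' : -t + y ∈ K := this
    have : y - t ∈ K := by rwa [sub_eq_neg_add]
    exact hKS this
  -- Sidon property applied to x + (y - t) = y + (x - t)
  have heq : x + (y - t) = y + (x - t) := by ring
  have hsets := hS x (y - t) y (x - t) hxS hytS hyS hxtS heq
  have hxmem : x ∈ ({y, x - t} : Set ℝ) := by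
    rw [← hsets]; exact Set.mem_insert _ _
  rcases hxmem with h | h
  · exact hxy h
  · simp only [Set.mem_singleton_iff] at h
    have : t = 0 := by linarith [h]
    exact htne this
end

section
/- Let E = { ∑_{i≥1} aᵢ / (2ⁱ (i+1)!) : aᵢ ∈ {0,…,i} } ⊆ [0,1]. Then E has Hausdorff dimension 1, and E + E has Lebesgue measure zero. -/
open MeasureTheory Pointwise Filter Finset Topology
open scoped NNReal ENNReal
set_option maxHeartbeats 1000000

namespace DimHAux

noncomputable def w (i : ℕ) : ℝ := ((2:ℝ)^i * ((i+1).factorial : ℝ))⁻¹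
noncomputable def v (i : ℕ) : ℝ := (((i+1).factorial : ℝ))⁻¹

lemma w_pos (i : ℕ) : 0 < w i := by rw [w]; positivity

lemma v_pos (i : ℕ) : 0 < v i := by rw [v]; positivity

lemma w_le_v (i : ℕ) : w i ≤ v i := by
  rw [w, v]
  apply inv_anti₀
  · positivity
  · have h1 : (1:ℝ) ≤ (2:ℝ)^i := one_le_pow₀ (by norm_num)
    have h2 : (0:ℝ) < ((i+1).factorial : ℝ) := by exact_mod_cast (i+1).factorial_pos
    nlinarith

lemma two_pow_le_two_mul_factorial : ∀ i : ℕ, 2^i ≤ 2 * i.factorial := by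
  intro i
  induction i with
  | zero => norm_num
  | succ n ih =>
    rcases Nat.eq_zero_or_pos n with rfl | hn
    · norm_num
    · calc 2^(n+1) = 2 * 2^n := by ring
        _ ≤ 2 * (2 * n.factorial) := by omega
        _ ≤ 2 * (n+1).factorial := by
            rw [Nat.factorial_succ]
            have : 2 * n.factorial ≤ (n+1) * n.factorial := by
              apply Nat.mul_le_mul_right; omega
            omega

lemma two_pow_le_factorial (i : ℕ) : 2^i ≤ (i+1).factorial := by
  have := two_pow_le_two_mul_factorial (i+1)
  have h : 2^(i+1) = 2 * 2^i := by ring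
  omega

lemma v_le_geo (i : ℕ) : v i ≤ (2⁻¹:ℝ)^i := by
  rw [v, inv_pow]
  apply inv_anti₀ (by positivity)
  exact_mod_cast two_pow_le_factorial i

lemma summable_v {a : ℕ → ℕ} (h : ∀ i, a i ≤ 2*(i+1)) :
    Summable (fun i => (a i : ℝ) * v i) := by
  have hsum : Summable (fun i : ℕ => (2*(i:ℝ)+2) * (2⁻¹:ℝ)^i) := by
    have hs : Summable (fun i : ℕ => (i:ℝ) * (2⁻¹:ℝ)^i) := by
      simpa using summable_pow_mul_geometric_of_norm_lt_one 1 (r := (2⁻¹:ℝ)) (by norm_num)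
    have hg : Summable (fun i : ℕ => (2⁻¹:ℝ)^i) := summable_geometric_of_lt_one (by norm_num) (by norm_num)
    have := (hs.mul_left 2).add (hg.mul_left 2)
    apply this.congr
    intro i; ring
  refine Summable.of_nonneg_of_le
    (fun i => mul_nonneg (Nat.cast_nonneg _) (v_pos i).le) (fun i => ?_) hsum
  · have h1 : (a i : ℝ) ≤ 2*(i:ℝ)+2 := by
      have := h i
      have : (a i : ℝ) ≤ (2*(i+1) : ℕ) := Nat.cast_le.2 this
      push_cast at this; linarith
    have h2 := v_le_geo i
    have h3 := v_pos i
    have h4 : (0:ℝ) ≤ (a i : ℝ) := Nat.cast_nonneg _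
    nlinarith [pow_nonneg (by norm_num : (0:ℝ) ≤ (2⁻¹:ℝ)) i]

lemma summable_w {a : ℕ → ℕ} (h : ∀ i, a i ≤ 2*(i+1)) :
    Summable (fun i => (a i : ℝ) * w i) := by
  refine Summable.of_nonneg_of_le
    (fun i => mul_nonneg (Nat.cast_nonneg _) (w_pos i).le) (fun i => ?_) (summable_v h)
  have h1 := w_le_v i
  have h2 : (0:ℝ) ≤ (a i : ℝ) := Nat.cast_nonneg _
  nlinarith


lemma fact_inv_tendsto : Tendsto (fun n : ℕ => ((n.factorial : ℝ))⁻¹) atTop (𝓝 0) := by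
  have h := FloorSemiring.tendsto_pow_div_factorial_atTop (K := ℝ) 1
  simpa using h

lemma hasSum_tail_v (N : ℕ) :
    HasSum (fun i => ((i + N : ℕ) : ℝ) * v (i + N)) ((N.factorial : ℝ))⁻¹ := by
  have hterm : ∀ i : ℕ, ((i + N : ℕ) : ℝ) * v (i + N)
      = ((i + N).factorial : ℝ)⁻¹ - ((i + N + 1).factorial : ℝ)⁻¹ := by
    intro i
    rw [v]
    have hf : ((i + N + 1).factorial : ℝ) = ((i + N : ℕ) + 1 : ℝ) * ((i + N).factorial : ℝ) := by
      rw [Nat.factorial_succ]; push_cast; ring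
    have h1 : (0:ℝ) < ((i + N).factorial : ℝ) := by exact_mod_cast (i+N).factorial_pos
    have h2 : (0:ℝ) < ((i + N + 1).factorial : ℝ) := by exact_mod_cast (i+N+1).factorial_pos
    field_simp [hf]
    rw [hf]; ring
  have hnn : ∀ i : ℕ, 0 ≤ ((i + N : ℕ) : ℝ) * v (i + N) :=
    fun i => mul_nonneg (Nat.cast_nonneg _) (v_pos _).le
  rw [hasSum_iff_tendsto_nat_of_nonneg hnn]
  have hps : ∀ n : ℕ, ∑ i ∈ range n, ((i + N : ℕ) : ℝ) * v (i + N)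
      = (N.factorial : ℝ)⁻¹ - ((n + N).factorial : ℝ)⁻¹ := by
    intro n
    calc ∑ i ∈ range n, ((i + N : ℕ) : ℝ) * v (i + N)
        = ∑ i ∈ range n, (((i + N).factorial : ℝ)⁻¹ - ((i + 1 + N).factorial : ℝ)⁻¹) := by
          refine Finset.sum_congr rfl fun i _ => ?_
          have hiN : i + 1 + N = i + N + 1 := by omega
          rw [hterm i, hiN]
      _ = (N.factorial : ℝ)⁻¹ - ((n + N).factorial : ℝ)⁻¹ := by
          rw [Finset.sum_range_sub' (fun i => ((i + N).factorial : ℝ)⁻¹) n]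
          norm_num
  simp only [hps]
  have h2 : Tendsto (fun n : ℕ => ((n + N).factorial : ℝ)⁻¹) atTop (𝓝 0) :=
    fact_inv_tendsto.comp (tendsto_add_atTop_nat N)
  simpa using tendsto_const_nhds.sub h2

lemma tsum_tail_v (N : ℕ) :
    ∑' i, ((i + N : ℕ) : ℝ) * v (i + N) = ((N.factorial : ℝ))⁻¹ :=
  (hasSum_tail_v N).tsum_eq

lemma tail_v_nonneg (a : ℕ → ℕ) (N : ℕ) : 0 ≤ ∑' i, (a (i + N) : ℝ) * v (i + N) :=
  tsum_nonneg fun i => mul_nonneg (Nat.cast_nonneg _) (v_pos _).le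

lemma tail_v_le {a : ℕ → ℕ} (h : ∀ i, a i ≤ i) (N : ℕ) :
    ∑' i, (a (i + N) : ℝ) * v (i + N) ≤ ((N.factorial : ℝ))⁻¹ := by
  rw [← tsum_tail_v N]
  refine Summable.tsum_le_tsum (fun i => ?_)
    ((summable_nat_add_iff N).2 (summable_v (fun i => (h i).trans (by omega))))
    (hasSum_tail_v N).summable
  have : (a (i + N) : ℝ) ≤ ((i + N : ℕ) : ℝ) := Nat.cast_le.2 (h _)
  exact mul_le_mul_of_nonneg_right this (v_pos _).le

lemma w_eq (i : ℕ) : w i = ((2:ℝ)^i)⁻¹ * v i := by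
  rw [w, v, mul_inv]

lemma tail_w_key (N : ℕ) :
    ∑' i, ((i + (N+1) : ℕ) : ℝ) * w (i + (N+1)) ≤ w N / 2 := by
  have hle : ∀ i : ℕ, ((i + (N+1) : ℕ) : ℝ) * w (i + (N+1))
      ≤ ((2:ℝ)^(N+1))⁻¹ * (((i + (N+1) : ℕ) : ℝ) * v (i + (N+1))) := by
    intro i
    rw [w_eq]
    have h1 : ((2:ℝ)^(i + (N+1)))⁻¹ ≤ ((2:ℝ)^(N+1))⁻¹ := by
      apply inv_anti₀ (by positivity)
      apply pow_le_pow_right₀ (by norm_num)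
      omega
    have h2 : 0 ≤ ((i + (N+1) : ℕ) : ℝ) * v (i + (N+1)) :=
      mul_nonneg (Nat.cast_nonneg _) (v_pos _).le
    have h3 : (0:ℝ) ≤ ((i + (N+1):ℕ):ℝ) := Nat.cast_nonneg _
    have h4 := (v_pos (i + (N+1))).le
    calc ((i + (N+1) : ℕ) : ℝ) * (((2:ℝ)^(i+(N+1)))⁻¹ * v (i + (N+1)))
        ≤ ((i + (N+1) : ℕ) : ℝ) * (((2:ℝ)^(N+1))⁻¹ * v (i + (N+1))) := by
          apply mul_le_mul_of_nonneg_left _ h3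
          exact mul_le_mul_of_nonneg_right h1 h4
      _ = ((2:ℝ)^(N+1))⁻¹ * (((i + (N+1) : ℕ) : ℝ) * v (i + (N+1))) := by ring
  calc ∑' i, ((i + (N+1) : ℕ) : ℝ) * w (i + (N+1))
      ≤ ∑' i, ((2:ℝ)^(N+1))⁻¹ * (((i + (N+1) : ℕ) : ℝ) * v (i + (N+1))) := by
        refine Summable.tsum_le_tsum hle ?_ ?_
        · exact (summable_nat_add_iff (N+1)).2 (summable_w (fun i : ℕ => by omega : ∀ i : ℕ, i ≤ 2*(i+1)))
        · exact ((hasSum_tail_v (N+1)).summable).mul_left _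
    _ = ((2:ℝ)^(N+1))⁻¹ * (((N+1).factorial : ℝ))⁻¹ := by
        rw [tsum_mul_left, tsum_tail_v]
    _ = w N / 2 := by
        rw [w]
        rw [div_eq_mul_inv, ← mul_inv, ← mul_inv]
        congr 1
        ring

lemma tail_w_nonneg (a : ℕ → ℕ) (N : ℕ) : 0 ≤ ∑' i, (a (i + N) : ℝ) * w (i + N) :=
  tsum_nonneg fun i => mul_nonneg (Nat.cast_nonneg _) (w_pos _).le

lemma tail_w_le₁ {a : ℕ → ℕ} (h : ∀ i, a i ≤ i) (N : ℕ) :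
    ∑' i, (a (i + (N+1)) : ℝ) * w (i + (N+1)) ≤ w N / 2 := by
  refine le_trans ?_ (tail_w_key N)
  refine Summable.tsum_le_tsum (fun i => ?_)
    ((summable_nat_add_iff (N+1)).2 (summable_w (fun i => (h i).trans (by omega))))
    ((summable_nat_add_iff (N+1)).2 (summable_w (fun i : ℕ => by omega : ∀ i : ℕ, i ≤ 2*(i+1))))
  exact mul_le_mul_of_nonneg_right (Nat.cast_le.2 (h _)) (w_pos _).le

lemma tail_w_le₂ {a : ℕ → ℕ} (h : ∀ i, a i ≤ 2*i) (N : ℕ) :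
    ∑' i, (a (i + (N+1)) : ℝ) * w (i + (N+1)) ≤ w N := by
  have hle : ∀ i : ℕ, (a (i + (N+1)) : ℝ) * w (i + (N+1))
      ≤ 2 * (((i + (N+1) : ℕ) : ℝ) * w (i + (N+1))) := by
    intro i
    have h5 : (a (i + (N+1)) : ℝ) ≤ ((2 * (i + (N+1)) : ℕ) : ℝ) := Nat.cast_le.2 (h _)
    push_cast at h5
    have h6 : ((i + (N+1) : ℕ) : ℝ) = (i:ℝ) + (N:ℝ) + 1 := by push_cast; ring
    rw [h6]
    nlinarith [w_pos (i + (N+1)), Nat.cast_nonneg (α := ℝ) (a (i + (N+1))), h5]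
  calc ∑' i, (a (i + (N+1)) : ℝ) * w (i + (N+1))
      ≤ ∑' i, 2 * (((i + (N+1) : ℕ) : ℝ) * w (i + (N+1))) := by
        refine Summable.tsum_le_tsum hle ?_ ?_
        · exact (summable_nat_add_iff (N+1)).2 (summable_w (fun i => (h i).trans (by omega)))
        · exact ((summable_nat_add_iff (N+1)).2 (summable_w (fun i : ℕ => by omega : ∀ i : ℕ, i ≤ 2*(i+1)))).mul_left _
    _ = 2 * ∑' i, ((i + (N+1) : ℕ) : ℝ) * w (i + (N+1)) := tsum_mul_left
    _ ≤ 2 * (w N / 2) := by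
        have := tail_w_key N
        linarith
    _ = w N := by ring


lemma sep {a b : ℕ → ℕ} (ha : ∀ i, a i ≤ i) (hb : ∀ i, b i ≤ i) {N : ℕ}
    (hN : b N < a N) (hlt : ∀ i < N, a i = b i) :
    w N / 2 ≤ (∑' i, (a i : ℝ) * w i) - ∑' i, (b i : ℝ) * w i := by
  have hsa : Summable (fun i => (a i : ℝ) * w i) := summable_w (fun i => (ha i).trans (by omega))
  have hsb : Summable (fun i => (b i : ℝ) * w i) := summable_w (fun i => (hb i).trans (by omega))
  have hA := Summable.sum_add_tsum_nat_add (N+1) hsa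
  have hB := Summable.sum_add_tsum_nat_add (N+1) hsb
  have hfront : ∑ i ∈ range (N+1), (a i : ℝ) * w i
      = ∑ i ∈ range (N+1), (b i : ℝ) * w i + ((a N : ℝ) - (b N : ℝ)) * w N := by
    rw [Finset.sum_range_succ, Finset.sum_range_succ]
    rw [Finset.sum_congr rfl (fun i hi => by rw [hlt i (Finset.mem_range.1 hi)])]
    ring
  have h1 : (1:ℝ) ≤ (a N : ℝ) - (b N : ℝ) := by
    have : (b N : ℝ) + 1 ≤ (a N : ℝ) := by exact_mod_cast hN
    linarith
  have hta : 0 ≤ ∑' i, (a (i + (N+1)) : ℝ) * w (i + (N+1)) := tail_w_nonneg a (N+1)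
  have htb : ∑' i, (b (i + (N+1)) : ℝ) * w (i + (N+1)) ≤ w N / 2 := tail_w_le₁ hb N
  have hw := (w_pos N).le
  nlinarith [hA, hB, hfront]

lemma unique {a b : ℕ → ℕ} (ha : ∀ i, a i ≤ i) (hb : ∀ i, b i ≤ i)
    (h : ∑' i, (a i : ℝ) * w i = ∑' i, (b i : ℝ) * w i) : a = b := by
  by_contra hne
  have hex : ∃ N, a N ≠ b N := Function.ne_iff.1 hne
  set N := Nat.find hex with hNdef
  have h1 : a N ≠ b N := Nat.find_spec hex
  have h2 : ∀ i < N, a i = b i := fun i hi => not_not.1 (Nat.find_min hex hi)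
  have hw := w_pos N
  rcases lt_or_gt_of_ne h1 with hlt | hgt
  · have := sep hb ha hlt (fun i hi => (h2 i hi).symm)
    rw [← h] at this
    simp only [sub_self] at this
    linarith
  · have := sep ha hb hgt h2
    rw [h] at this
    simp only [sub_self] at this
    linarith

/-- The membership predicate for `E`. -/
def P (x : ℝ) : Prop := ∃ a : ℕ → ℕ, (∀ i, a i ≤ i) ∧ x = ∑' i, (a i : ℝ) * w i

open Classical in
noncomputable def dig (x : ℝ) : ℕ → ℕ :=
  if h : P x then h.choose else 0

lemma dig_le {x : ℝ} (h : P x) : ∀ i, dig x i ≤ i := by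
  rw [dig, dif_pos h]; exact h.choose_spec.1

lemma dig_sum {x : ℝ} (h : P x) : x = ∑' i, (dig x i : ℝ) * w i := by
  conv_lhs => rw [h.choose_spec.2]
  rw [dig, dif_pos h]

noncomputable def g (x : ℝ) : ℝ := ∑' i, (dig x i : ℝ) * v i

lemma g_sub_le {x y : ℝ} (hx : P x) (hy : P y) {N : ℕ}
    (h2 : ∀ i < N, dig x i = dig y i) : |g x - g y| ≤ ((N.factorial : ℝ))⁻¹ := by
  have hsx : Summable (fun i => (dig x i : ℝ) * v i) :=
    summable_v (fun i => (dig_le hx i).trans (by omega))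
  have hsy : Summable (fun i => (dig y i : ℝ) * v i) :=
    summable_v (fun i => (dig_le hy i).trans (by omega))
  have hA := Summable.sum_add_tsum_nat_add N hsx
  have hB := Summable.sum_add_tsum_nat_add N hsy
  have hfront : ∑ i ∈ range N, (dig x i : ℝ) * v i = ∑ i ∈ range N, (dig y i : ℝ) * v i :=
    Finset.sum_congr rfl (fun i hi => by rw [h2 i (Finset.mem_range.1 hi)])
  have h3 : 0 ≤ ∑' i, (dig x (i + N) : ℝ) * v (i + N) := tail_v_nonneg _ N
  have h4 : 0 ≤ ∑' i, (dig y (i + N) : ℝ) * v (i + N) := tail_v_nonneg _ N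
  have h5 : ∑' i, (dig x (i + N) : ℝ) * v (i + N) ≤ ((N.factorial : ℝ))⁻¹ :=
    tail_v_le (dig_le hx) N
  have h6 : ∑' i, (dig y (i + N) : ℝ) * v (i + N) ≤ ((N.factorial : ℝ))⁻¹ :=
    tail_v_le (dig_le hy) N
  rw [g, g, abs_le]
  constructor <;> nlinarith [hA, hB, hfront]

lemma dist_lower {x y : ℝ} (hx : P x) (hy : P y) {N : ℕ}
    (h1 : dig x N ≠ dig y N) (h2 : ∀ i < N, dig x i = dig y i) :
    w N / 2 ≤ |x - y| := by
  rcases lt_or_gt_of_ne h1 with hlt | hgt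
  · have := sep (dig_le hy) (dig_le hx) hlt (fun i hi => (h2 i hi).symm)
    rw [← dig_sum hx, ← dig_sum hy] at this
    calc w N / 2 ≤ y - x := this
      _ ≤ |x - y| := by rw [abs_sub_comm]; exact le_abs_self _
  · have := sep (dig_le hx) (dig_le hy) hgt h2
    rw [← dig_sum hx, ← dig_sum hy] at this
    exact this.trans (le_abs_self _)


lemma key {α : ℝ} (h0 : 0 < α) (h1 : α < 1) :
    ∃ C : ℝ, 0 ≤ C ∧ ∀ N : ℕ, ((N.factorial : ℝ))⁻¹ ≤ C * (w N / 2) ^ α := by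
  set β := 1 - α with hβdef
  have hβ : 0 < β := by simp [hβdef]; linarith
  set q := (4:ℝ) ^ (1/β) with hqdef
  have hq1 : (1:ℝ) ≤ q := Real.one_le_rpow (by norm_num) (by positivity)
  obtain ⟨M, hM⟩ := (FloorSemiring.tendsto_pow_div_factorial_atTop (K := ℝ) q).bddAbove_range
  set M' := max M 1 with hM'def
  have hM'1 : (1:ℝ) ≤ M' := le_max_right _ _
  have hM'0 : (0:ℝ) < M' := lt_of_lt_of_le one_pos hM'1
  have hMb : ∀ N : ℕ, q ^ N ≤ M' * N.factorial := by
    intro N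
    have h2 : q ^ N / N.factorial ≤ M := hM ⟨N, rfl⟩
    have h3 : (0:ℝ) < (N.factorial : ℝ) := by exact_mod_cast N.factorial_pos
    rw [div_le_iff₀ h3] at h2
    calc q ^ N ≤ M * N.factorial := h2
      _ ≤ M' * N.factorial := by
          apply mul_le_mul_of_nonneg_right (le_max_left _ _) h3.le
  refine ⟨4 * M' ^ β, by positivity, fun N => ?_⟩
  have hfac : (0:ℝ) < (N.factorial : ℝ) := by exact_mod_cast N.factorial_pos
  have hfac1 : (0:ℝ) < ((N+1).factorial : ℝ) := by exact_mod_cast (N+1).factorial_pos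
  have hX : w N / 2 = ((2:ℝ)^(N+1) * ((N+1).factorial : ℝ))⁻¹ := by
    rw [w, div_eq_mul_inv, ← mul_inv]
    congr 1
    ring
  set X := (2:ℝ)^(N+1) * ((N+1).factorial : ℝ) with hXdef
  have hXpos : 0 < X := by positivity
  have hmain : X ^ α ≤ 4 * M' ^ β * N.factorial := by
    have e1 : X ^ α = ((2:ℝ)^(N+1)) ^ α * (((N:ℝ)+1) ^ α * ((N.factorial : ℝ)) ^ α) := by
      rw [hXdef]
      have : ((N+1).factorial : ℝ) = ((N:ℝ)+1) * (N.factorial : ℝ) := by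
        rw [Nat.factorial_succ]; push_cast; ring
      rw [this, Real.mul_rpow (by positivity) (by positivity),
        Real.mul_rpow (by positivity) (by positivity)]
    have e2 : ((2:ℝ)^(N+1)) ^ α ≤ (2:ℝ)^(N+1) := by
      calc ((2:ℝ)^(N+1)) ^ α ≤ ((2:ℝ)^(N+1)) ^ (1:ℝ) :=
            Real.rpow_le_rpow_of_exponent_le (one_le_pow₀ (by norm_num)) h1.le
        _ = (2:ℝ)^(N+1) := Real.rpow_one _
    have e3 : ((N:ℝ)+1) ^ α ≤ (2:ℝ)^(N+1) := by
      calc ((N:ℝ)+1) ^ α ≤ ((N:ℝ)+1) ^ (1:ℝ) :=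
            Real.rpow_le_rpow_of_exponent_le (by exact_mod_cast Nat.one_le_iff_ne_zero.2 (by omega) : (1:ℝ) ≤ (N:ℝ)+1) h1.le
        _ = (N:ℝ)+1 := Real.rpow_one _
        _ ≤ (2:ℝ)^(N+1) := by
            exact_mod_cast (Nat.lt_two_pow_self (n := N+1)).le
    have e4 : (4:ℝ)^N ≤ M' ^ β * ((N.factorial:ℝ)) ^ β := by
      have hq : ((4:ℝ))^(N:ℕ) = (q ^ N) ^ β := by
        rw [hqdef, ← Real.rpow_natCast ((4:ℝ) ^ (1/β)) N, ← Real.rpow_natCast (4:ℝ) N,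
          ← Real.rpow_mul (by positivity), ← Real.rpow_mul (by positivity)]
        congr 1
        field_simp
      rw [hq]
      calc (q ^ N) ^ β ≤ (M' * N.factorial) ^ β := by
            apply Real.rpow_le_rpow (pow_nonneg (le_trans zero_le_one hq1) N) (hMb N) hβ.le
        _ = M' ^ β * ((N.factorial:ℝ)) ^ β := Real.mul_rpow hM'0.le hfac.le
    have e5 : ((N.factorial : ℝ)) ^ α * ((N.factorial : ℝ)) ^ β = N.factorial := by
      rw [← Real.rpow_add hfac]
      simp [hβdef]
    have hnn1 : (0:ℝ) ≤ ((N:ℝ)+1) ^ α := by positivity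
    have hnn2 : (0:ℝ) ≤ ((N.factorial : ℝ)) ^ α := by positivity
    have hnn3 : (0:ℝ) ≤ (2:ℝ)^(N+1) := by positivity
    calc X ^ α = ((2:ℝ)^(N+1)) ^ α * (((N:ℝ)+1) ^ α * ((N.factorial : ℝ)) ^ α) := e1
      _ ≤ (2:ℝ)^(N+1) * ((2:ℝ)^(N+1) * ((N.factorial : ℝ)) ^ α) := by
          apply mul_le_mul e2 _ (by positivity) hnn3
          exact mul_le_mul_of_nonneg_right e3 hnn2
      _ = 4 * (4:ℝ)^N * ((N.factorial : ℝ)) ^ α := by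
          have h44 : (2:ℝ)^(N+1) * (2:ℝ)^(N+1) = 4 * 4^N := by
            have ha : (4:ℝ) * 4^N = 4^(N+1) := (pow_succ' (4:ℝ) N).symm
            have hb : ((4:ℝ))^(N+1) = ((2:ℝ)^2)^(N+1) := by norm_num
            rw [ha, hb, ← pow_mul, ← pow_add]
            congr 1
            ring
          rw [← mul_assoc, h44]
      _ ≤ 4 * (M' ^ β * ((N.factorial:ℝ)) ^ β) * ((N.factorial : ℝ)) ^ α := by
          apply mul_le_mul_of_nonneg_right _ hnn2
          have := mul_le_mul_of_nonneg_left e4 (by norm_num : (0:ℝ) ≤ 4)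
          linarith
      _ = 4 * M' ^ β * (((N.factorial : ℝ)) ^ α * ((N.factorial:ℝ)) ^ β) := by ring
      _ = 4 * M' ^ β * N.factorial := by rw [e5]
  rw [hX, Real.inv_rpow hXpos.le]
  have hXα : 0 < X ^ α := Real.rpow_pos_of_pos hXpos α
  rw [inv_eq_one_div, inv_eq_one_div, mul_one_div, div_le_div_iff₀ hfac hXα]
  linarith

end DimHAux


namespace DimHAux

lemma holder {r : ℝ≥0} (h0 : 0 < r) (h1 : (r:ℝ) < 1) :
    ∃ C : ℝ≥0, HolderOnWith C r g {x | P x} := by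
  obtain ⟨C, hC0, hC⟩ := key (by exact_mod_cast h0) h1
  refine ⟨C.toNNReal, fun x hx y hy => ?_⟩
  have hPx : P x := hx
  have hPy : P y := hy
  by_cases hd : dig x = dig y
  · have hxy : x = y := by rw [dig_sum hPx, dig_sum hPy, hd]
    subst hxy
    simp
  · have hex : ∃ N, dig x N ≠ dig y N := Function.ne_iff.1 hd
    set N := Nat.find hex with hN
    have h1' : dig x N ≠ dig y N := Nat.find_spec hex
    have h2 : ∀ i < N, dig x i = dig y i := fun i hi => not_not.1 (Nat.find_min hex hi)
    have hdist := dist_lower hPx hPy h1' h2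
    have hg := g_sub_le hPx hPy h2
    have hwN : 0 < w N / 2 := by have := w_pos N; linarith
    have hreal : |g x - g y| ≤ C * |x - y| ^ (r:ℝ) := by
      calc |g x - g y| ≤ ((N.factorial : ℝ))⁻¹ := hg
        _ ≤ C * (w N / 2) ^ (r:ℝ) := hC N
        _ ≤ C * |x - y| ^ (r:ℝ) := by
            apply mul_le_mul_of_nonneg_left _ hC0
            exact Real.rpow_le_rpow hwN.le hdist r.coe_nonneg
    rw [edist_dist, edist_dist, Real.dist_eq, Real.dist_eq]
    calc ENNReal.ofReal |g x - g y| ≤ ENNReal.ofReal (C * |x - y| ^ (r:ℝ)) :=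
          ENNReal.ofReal_le_ofReal hreal
      _ = ENNReal.ofReal C * ENNReal.ofReal (|x - y| ^ (r:ℝ)) := ENNReal.ofReal_mul hC0
      _ = (C.toNNReal : ℝ≥0∞) * ENNReal.ofReal |x - y| ^ (r:ℝ) := by
          rw [← ENNReal.ofReal_rpow_of_nonneg (abs_nonneg _) r.coe_nonneg]
          rfl

lemma hasSum_id_v : HasSum (fun i : ℕ => (i : ℝ) * v i) 1 := by
  refine (hasSum_nat_add_iff' 1).1 ?_
  have h2 : HasSum (fun i : ℕ => ((i + 1 : ℕ) : ℝ) * v (i + 1)) 1 := by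
    simpa using hasSum_tail_v 1
  simpa using h2

lemma surj : Set.Icc (0:ℝ) 1 ⊆ g '' {x | P x} := by
  rintro y ⟨hy0, hy1⟩
  -- first construct digits `a` with `y = ∑ a i * v i`
  obtain ⟨a, ha, hav⟩ : ∃ a : ℕ → ℕ, (∀ i, a i ≤ i) ∧ HasSum (fun i => (a i : ℝ) * v i) y := by
    rcases eq_or_lt_of_le hy1 with rfl | hylt
    · exact ⟨id, fun i => le_rfl, hasSum_id_v⟩
    · set c : ℕ → ℕ := fun i => ⌊(i.factorial : ℝ) * y⌋₊ with hc
      have hcle : ∀ i, (c i : ℝ) ≤ (i.factorial : ℝ) * y := by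
        intro i
        exact Nat.floor_le (by positivity)
      have hclt : ∀ i, (i.factorial : ℝ) * y < (c i : ℝ) + 1 := by
        intro i
        exact Nat.lt_floor_add_one _
      have hfpos : ∀ i : ℕ, (0:ℝ) < (i.factorial : ℝ) := by
        intro i; exact_mod_cast i.factorial_pos
      have hsucc : ∀ i : ℕ, ((i+1).factorial : ℝ) = ((i:ℝ)+1) * (i.factorial : ℝ) := by
        intro i; rw [Nat.factorial_succ]; push_cast; ring
      have hmono : ∀ i, (i+1) * c i ≤ c (i+1) := by
        intro i
        apply Nat.le_floor
        push_cast
        rw [hsucc i]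
        calc ((i:ℝ)+1) * (c i : ℝ) ≤ ((i:ℝ)+1) * ((i.factorial : ℝ) * y) := by
              apply mul_le_mul_of_nonneg_left (hcle i) (by positivity)
          _ = ((i:ℝ)+1) * (i.factorial : ℝ) * y := by ring
      set a : ℕ → ℕ := fun i => c (i+1) - (i+1) * c i with haeq
      have hacast : ∀ i, (a i : ℝ) = (c (i+1) : ℝ) - ((i:ℝ)+1) * (c i : ℝ) := by
        intro i
        rw [haeq]
        push_cast [Nat.cast_sub (hmono i)]
        ring
      have ha : ∀ i, a i ≤ i := by
        intro i
        rw [haeq]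
        have h1 : c (i+1) < (i+1) * (c i + 1) := by
          rw [hc]
          apply Nat.floor_lt (by positivity) |>.2
          rw [hsucc i]
          calc ((i:ℝ)+1) * (i.factorial : ℝ) * y = ((i:ℝ)+1) * ((i.factorial:ℝ) * y) := by ring
            _ < ((i:ℝ)+1) * ((c i : ℝ) + 1) := by
                apply mul_lt_mul_of_pos_left (hclt i) (by positivity)
            _ = (((i+1) * (c i + 1) : ℕ) : ℝ) := by push_cast; ring
        have h2 : (i+1) * (c i + 1) = (i+1) * c i + (i+1) := by ring
        show c (i+1) - (i+1) * c i ≤ i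
        omega
      have hc0 : c 0 = 0 := by
        rw [hc]
        simp only [Nat.factorial_zero, Nat.cast_one, one_mul]
        exact Nat.floor_eq_zero.2 hylt
      have hpartial : ∀ n, ∑ i ∈ Finset.range n, (a i : ℝ) * v i
          = (c n : ℝ) / (n.factorial : ℝ) := by
        intro n
        induction n with
        | zero => simp [hc0]
        | succ m ih =>
          rw [Finset.sum_range_succ, ih, hacast m, v]
          have h1 := hfpos m
          have h2 := hfpos (m+1)
          rw [hsucc m] at h2 ⊢
          field_simp
          ring
      refine ⟨a, ha, ?_⟩
      rw [hasSum_iff_tendsto_nat_of_nonneg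
        (fun i => mul_nonneg (Nat.cast_nonneg _) (v_pos i).le)]
      simp only [hpartial]
      have hbound : ∀ n : ℕ, |(c n : ℝ) / (n.factorial : ℝ) - y| ≤ ((n.factorial : ℝ))⁻¹ := by
        intro n
        have h1 := hcle n
        have h2 := hclt n
        have h3 := hfpos n
        rw [abs_le]
        constructor
        · rw [div_sub' h3.ne', le_div_iff₀ h3]
          calc -(n.factorial : ℝ)⁻¹ * (n.factorial : ℝ) = -1 := by field_simp
            _ ≤ (c n : ℝ) - (n.factorial : ℝ) * y := by linarith
        · rw [div_sub' h3.ne', div_le_iff₀ h3]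
          calc (c n : ℝ) - (n.factorial : ℝ) * y ≤ 0 := by linarith
            _ ≤ (n.factorial : ℝ)⁻¹ * (n.factorial : ℝ) := by positivity
      have hf0 : Tendsto (fun n : ℕ => ((n.factorial : ℝ))⁻¹) atTop (𝓝 0) := by
        have h := FloorSemiring.tendsto_pow_div_factorial_atTop (K := ℝ) 1
        simpa using h
      have : Tendsto (fun n : ℕ => (c n : ℝ) / (n.factorial : ℝ) - y) atTop (𝓝 0) := by
        apply squeeze_zero_norm hbound hf0
      have := this.add_const y
      simpa using this
  -- now transfer to `E`
  have hsw : Summable (fun i => (a i : ℝ) * w i) := summable_w (fun i => (ha i).trans (by omega))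
  set x := ∑' i, (a i : ℝ) * w i with hx
  have hPx : P x := ⟨a, ha, rfl⟩
  have hdig : dig x = a := unique (dig_le hPx) ha (dig_sum hPx).symm
  refine ⟨x, hPx, ?_⟩
  rw [g, hdig, hav.tsum_eq]


lemma dimH_le_one : dimH {x : ℝ | P x} ≤ 1 :=
  (dimH_mono (Set.subset_univ _)).trans_eq (Real.dimH_univ)

lemma one_le_dimH : 1 ≤ dimH {x : ℝ | P x} := by
  refine ENNReal.le_of_forall_nnreal_lt fun r hr => ?_
  rcases eq_or_ne r 0 with rfl | hr0
  · simp
  have hrpos : 0 < r := pos_iff_ne_zero.2 hr0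
  have hr1 : (r : ℝ) < 1 := by exact_mod_cast ENNReal.coe_lt_one_iff.1 hr
  obtain ⟨C, hC⟩ := holder hrpos hr1
  have himg : dimH (g '' {x | P x}) ≤ dimH {x | P x} / r := hC.dimH_image_le hrpos
  have hIcc : dimH (Set.Icc (0:ℝ) 1) = 1 := by
    rw [Real.dimH_of_nonempty_interior (E := ℝ)]
    · simp
    · rw [interior_Icc]
      exact ⟨1/2, by norm_num⟩
  have h1 : (1:ℝ≥0∞) ≤ dimH (g '' {x | P x}) := by
    rw [← hIcc]
    exact dimH_mono surj
  have h2 : (1:ℝ≥0∞) ≤ dimH {x | P x} / r := h1.trans himg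
  rw [ENNReal.le_div_iff_mul_le (Or.inl (by exact_mod_cast hr0))
    (Or.inl ENNReal.coe_ne_top)] at h2
  simpa using h2


/-! ### The sumset -/

def F (x : ℝ) : Prop := ∃ c : ℕ → ℕ, (∀ i, c i ≤ 2*i) ∧ x = ∑' i, (c i : ℝ) * w i

lemma sumset_subset : {x : ℝ | P x} + {x : ℝ | P x} ⊆ {x : ℝ | F x} := by
  rintro z ⟨x, hx, y, hy, rfl⟩
  obtain ⟨a, ha, rfl⟩ := hx
  obtain ⟨b, hb, rfl⟩ := hy
  refine ⟨a + b, fun i => ?_, ?_⟩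
  · have := ha i; have := hb i
    simp only [Pi.add_apply]
    omega
  · show (∑' i, (a i : ℝ) * w i) + (∑' i, (b i : ℝ) * w i) = _
    rw [← Summable.tsum_add (summable_w (fun i => (ha i).trans (by omega)))
      (summable_w (fun i => (hb i).trans (by omega)))]
    apply tsum_congr
    intro i
    simp only [Pi.add_apply]
    push_cast
    ring

lemma F_cover (N : ℕ) : {x : ℝ | F x} ⊆
    ⋃ (t : (i : Fin (N+1)) → Fin (2*(i:ℕ)+1)),
      Set.Icc (∑ i, ((t i : ℕ) : ℝ) * w i) (∑ i, ((t i : ℕ) : ℝ) * w i + w N) := by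
  rintro z ⟨c, hc, rfl⟩
  have hsc : Summable (fun i => (c i : ℝ) * w i) := summable_w (fun i => (hc i).trans (by omega))
  refine Set.mem_iUnion.2 ⟨fun i => ⟨c i, by have := hc i; omega⟩, ?_⟩
  have hS : ∑ i : Fin (N+1), ((c i : ℕ) : ℝ) * w i = ∑ i ∈ range (N+1), (c i : ℝ) * w i :=
    Fin.sum_univ_eq_sum_range (fun i => (c i : ℝ) * w i) (N+1)
  have hsplit := Summable.sum_add_tsum_nat_add (N+1) hsc
  have htail0 : 0 ≤ ∑' i, (c (i + (N+1)) : ℝ) * w (i + (N+1)) := tail_w_nonneg c (N+1)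
  have htail1 : ∑' i, (c (i + (N+1)) : ℝ) * w (i + (N+1)) ≤ w N := tail_w_le₂ hc N
  constructor
  · rw [hS]
    linarith
  · rw [hS]
    linarith

lemma prod_w (N : ℕ) : (∏ i ∈ range (N+1), (2*(i:ℝ)+1)) * w N
    = ∏ i ∈ range N, ((2*(i:ℝ)+3)/(2*(i:ℝ)+4)) := by
  induction N with
  | zero =>
    simp [w]
  | succ m ih =>
    rw [Finset.prod_range_succ (f := fun i : ℕ => (2*(i:ℝ)+3)/(2*(i:ℝ)+4)), ← ih,
      Finset.prod_range_succ (f := fun i : ℕ => 2*(i:ℝ)+1)]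
    have hw : w (m+1) = w m * (2*((m:ℝ)+2))⁻¹ := by
      rw [w, w]
      have h1 : ((m+1+1).factorial : ℝ) = ((m:ℝ)+2) * ((m+1).factorial : ℝ) := by
        rw [show m+1+1 = (m+1)+1 by rfl, Nat.factorial_succ]
        push_cast
        ring
      rw [h1, pow_succ]
      rw [mul_inv, mul_inv, mul_inv]
      have h2 : (0:ℝ) < ((m+1).factorial : ℝ) := by exact_mod_cast (m+1).factorial_pos
      field_simp
    rw [hw]
    have h3 := w_pos m
    push_cast
    field_simp
    ring

lemma Q_sq (N : ℕ) : (∏ i ∈ range N, ((2*(i:ℝ)+3)/(2*(i:ℝ)+4)))^2 ≤ 3/(2*(N:ℝ)+3) := by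
  induction N with
  | zero => norm_num
  | succ m ih =>
    rw [Finset.prod_range_succ]
    have h0 : (0:ℝ) ≤ ∏ i ∈ range m, ((2*(i:ℝ)+3)/(2*(i:ℝ)+4)) :=
      Finset.prod_nonneg fun i _ => by positivity
    have h1 : (0:ℝ) < 2*(m:ℝ)+3 := by positivity
    have h2 : (0:ℝ) < 2*(m:ℝ)+4 := by positivity
    have h3 : (0:ℝ) < 2*(m:ℝ)+5 := by positivity
    have hkey : (3/(2*(m:ℝ)+3)) * ((2*(m:ℝ)+3)/(2*(m:ℝ)+4))^2 ≤ 3/(2*((m:ℝ)+1)+3) := by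
      rw [div_pow, div_mul_div_comm, div_le_div_iff₀ (by positivity) (by positivity)]
      nlinarith
    calc ((∏ i ∈ range m, ((2*(i:ℝ)+3)/(2*(i:ℝ)+4))) * ((2*(m:ℝ)+3)/(2*(m:ℝ)+4)))^2
        = (∏ i ∈ range m, ((2*(i:ℝ)+3)/(2*(i:ℝ)+4)))^2 * ((2*(m:ℝ)+3)/(2*(m:ℝ)+4))^2 := by
          ring
      _ ≤ (3/(2*(m:ℝ)+3)) * ((2*(m:ℝ)+3)/(2*(m:ℝ)+4))^2 := by
          apply mul_le_mul_of_nonneg_right ih (by positivity)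
      _ ≤ 3/(2*((m:ℝ)+1)+3) := hkey
      _ = 3/(2*((m+1:ℕ):ℝ)+3) := by push_cast; ring

lemma Q_tendsto :
    Tendsto (fun N : ℕ => ∏ i ∈ range N, ((2*(i:ℝ)+3)/(2*(i:ℝ)+4))) atTop (𝓝 0) := by
  have hb : ∀ N : ℕ, |∏ i ∈ range N, ((2*(i:ℝ)+3)/(2*(i:ℝ)+4))|
      ≤ Real.sqrt (3/(2*(N:ℝ)+3)) := by
    intro N
    have h0 : (0:ℝ) ≤ ∏ i ∈ range N, ((2*(i:ℝ)+3)/(2*(i:ℝ)+4)) :=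
      Finset.prod_nonneg fun i _ => by positivity
    rw [abs_of_nonneg h0]
    exact (Real.le_sqrt h0 (by positivity)).2 (Q_sq N)
  have hlim : Tendsto (fun N : ℕ => Real.sqrt (3/(2*(N:ℝ)+3))) atTop (𝓝 0) := by
    have h1 : Tendsto (fun N : ℕ => 3/(2*(N:ℝ)+3)) atTop (𝓝 0) := by
      apply Tendsto.div_atTop tendsto_const_nhds
      apply Filter.Tendsto.atTop_add _ tendsto_const_nhds
      exact Tendsto.const_mul_atTop (by norm_num) tendsto_natCast_atTop_atTop
    have h2 := (Real.continuous_sqrt.tendsto 0).comp h1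
    rw [Real.sqrt_zero] at h2
    exact h2
  exact squeeze_zero_norm hb hlim

lemma volume_F_zero : volume {x : ℝ | F x} = 0 := by
  have hbound : ∀ N : ℕ, volume {x : ℝ | F x}
      ≤ ENNReal.ofReal (∏ i ∈ range N, ((2*(i:ℝ)+3)/(2*(i:ℝ)+4))) := by
    intro N
    calc volume {x : ℝ | F x}
        ≤ volume (⋃ (t : (i : Fin (N+1)) → Fin (2*(i:ℕ)+1)),
            Set.Icc (∑ i, ((t i : ℕ) : ℝ) * w i) (∑ i, ((t i : ℕ) : ℝ) * w i + w N)) :=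
          measure_mono (F_cover N)
      _ ≤ ∑' (t : (i : Fin (N+1)) → Fin (2*(i:ℕ)+1)),
            volume (Set.Icc (∑ i, ((t i : ℕ) : ℝ) * w i) (∑ i, ((t i : ℕ) : ℝ) * w i + w N)) :=
          measure_iUnion_le _
      _ = ∑' (t : (i : Fin (N+1)) → Fin (2*(i:ℕ)+1)), ENNReal.ofReal (w N) := by
          apply tsum_congr
          intro t
          rw [Real.volume_Icc]
          congr 1
          ring
      _ = (Fintype.card ((i : Fin (N+1)) → Fin (2*(i:ℕ)+1))) • ENNReal.ofReal (w N) := by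
          rw [tsum_fintype]
          simp [Finset.sum_const]
      _ = ENNReal.ofReal ((∏ i ∈ range (N+1), (2*(i:ℝ)+1)) * w N) := by
          rw [Fintype.card_pi]
          simp only [Fintype.card_fin]
          rw [nsmul_eq_mul, ← ENNReal.ofReal_natCast, ← ENNReal.ofReal_mul (by positivity)]
          congr 2
          rw [← Fin.prod_univ_eq_prod_range (f := fun i => (2*(i:ℝ)+1))]
          push_cast
          rfl
      _ = ENNReal.ofReal (∏ i ∈ range N, ((2*(i:ℝ)+3)/(2*(i:ℝ)+4))) := by
          rw [prod_w]
  have hlim : Tendsto (fun N : ℕ =>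
      ENNReal.ofReal (∏ i ∈ range N, ((2*(i:ℝ)+3)/(2*(i:ℝ)+4)))) atTop (𝓝 0) := by
    have := ENNReal.tendsto_ofReal Q_tendsto
    simpa using this
  exact le_antisymm (ge_of_tendsto' hlim hbound) (by positivity)


end DimHAux

open DimHAux in
/-- The set `E = { ∑ᵢ aᵢ/(2ⁱ (i+1)!) : aᵢ ∈ {0,…,i} }` has Hausdorff dimension `1` while
`E + E` has Lebesgue measure zero. -/
theorem dimH_one_sumset_null :
    dimH {x : ℝ | ∃ a : ℕ → ℕ, (∀ i, a i ≤ i) ∧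
        x = ∑' i : ℕ, (a i : ℝ) / (2 ^ i * (Nat.factorial (i + 1) : ℝ))} = 1 ∧
    volume ({x : ℝ | ∃ a : ℕ → ℕ, (∀ i, a i ≤ i) ∧
        x = ∑' i : ℕ, (a i : ℝ) / (2 ^ i * (Nat.factorial (i + 1) : ℝ))} +
      {x : ℝ | ∃ a : ℕ → ℕ, (∀ i, a i ≤ i) ∧
        x = ∑' i : ℕ, (a i : ℝ) / (2 ^ i * (Nat.factorial (i + 1) : ℝ))}) = 0 := by
  have ht : ∀ a : ℕ → ℕ, (∑' i : ℕ, (a i : ℝ) / (2 ^ i * (Nat.factorial (i + 1) : ℝ)))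
      = ∑' i, (a i : ℝ) * w i := fun a => tsum_congr fun i => by rw [w, div_eq_mul_inv]
  have hset : {x : ℝ | ∃ a : ℕ → ℕ, (∀ i, a i ≤ i) ∧
      x = ∑' i : ℕ, (a i : ℝ) / (2 ^ i * (Nat.factorial (i + 1) : ℝ))} = {x : ℝ | P x} := by
    ext x
    simp only [Set.mem_setOf_eq, P]
    constructor
    · rintro ⟨a, ha, rfl⟩
      exact ⟨a, ha, ht a⟩
    · rintro ⟨a, ha, rfl⟩
      exact ⟨a, ha, (ht a).symm⟩
  rw [hset]
  exact ⟨le_antisymm dimH_le_one one_le_dimH, measure_mono_null sumset_subset volume_F_zero⟩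
end

section
/- The set of real numbers in [0,1] whose expansion in the generalized base (2d)_{d≥2} = (4,6,8,…) omits the maximal digit at every position (i.e., digit at position i lies in {0,…,2i} rather than {0,…,2i+1}) has Lebesgue measure ∏_{i≥2}(1 − 1/(2i)) = 0. -/
open MeasureTheory Finset Filter
open scoped ENNReal

noncomputable def hh (i : ℕ) : ℝ := 2 / (2 ^ i * (Nat.factorial i : ℝ))

noncomputable def gg (i : ℕ) : ℝ := (2 * i + 1) / (2 ^ i * (Nat.factorial (i + 1) : ℝ))

lemma ww_pos (i : ℕ) : (0:ℝ) < 2 ^ i * (Nat.factorial (i + 1) : ℝ) := by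
  positivity

lemma hh_sub (i : ℕ) : gg i = hh i - hh (i + 1) := by
  have h1 : (Nat.factorial (i+1) : ℝ) = (i+1) * (Nat.factorial i) := by
    push_cast [Nat.factorial_succ]; ring
  have h2 : (Nat.factorial i : ℝ) ≠ 0 := Nat.cast_ne_zero.2 (Nat.factorial_ne_zero i)
  have h3 : (2:ℝ) ^ i ≠ 0 := by positivity
  simp only [hh, gg, h1]
  field_simp
  ring

lemma hh_tendsto : Tendsto hh atTop (nhds 0) := by
  have h1 : Tendsto (fun i : ℕ => 2 * (1/2 : ℝ) ^ i) atTop (nhds 0) := by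
    simpa using (tendsto_pow_atTop_nhds_zero_of_lt_one (by norm_num) (by norm_num : (1/2:ℝ) < 1)).const_mul 2
  apply squeeze_zero (fun i => by simp only [hh]; positivity) _ h1
  intro i
  have hfac : (1:ℝ) ≤ (Nat.factorial i : ℝ) := by exact_mod_cast Nat.one_le_iff_ne_zero.2 (Nat.factorial_ne_zero i)
  rw [hh]
  rw [div_le_iff₀ (by positivity)]
  have : (2:ℝ) * (1/2)^i * 2^i = 2 := by
    rw [div_pow, one_pow]; field_simp
  calc (2:ℝ) = 2 * (1/2)^i * 2^i := this.symm
    _ ≤ 2 * (1/2)^i * (2^i * (Nat.factorial i : ℝ)) := by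
        apply mul_le_mul_of_nonneg_left _ (by positivity)
        nlinarith [pow_pos (by norm_num : (0:ℝ) < 2) i]

lemma gg_hasSum (m : ℕ) : HasSum (fun i => gg (i + m)) (hh m) := by
  have hnn : ∀ i, 0 ≤ gg (i + m) := fun i => by
    have := ww_pos (i + m); simp only [gg]; positivity
  rw [hasSum_iff_tendsto_nat_of_nonneg hnn]
  have : ∀ n, ∑ i ∈ range n, gg (i + m) = hh m - hh (n + m) := by
    intro n
    have : ∀ i, gg (i + m) = (fun j => hh (j + m)) i - (fun j => hh (j + m)) (i + 1) := by
      intro i; rw [hh_sub]; ring_nf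
    rw [Finset.sum_congr rfl (fun i _ => this i), Finset.sum_range_sub' (fun j => hh (j + m)) n]
    simp
  simp only [this]
  have : Tendsto (fun n : ℕ => hh (n + m)) atTop (nhds 0) :=
    hh_tendsto.comp (tendsto_add_atTop_nat m)
  simpa using (tendsto_const_nhds (x := hh m)).sub this

lemma gg_summable : Summable gg := ((gg_hasSum 0).summable).congr (by simp)

noncomputable def PP (n : ℕ) : ℝ := ∏ i ∈ range n, ((2 * i + 1 : ℝ) / (2 * i + 2))

lemma PP_nonneg (n : ℕ) : 0 ≤ PP n := Finset.prod_nonneg fun i _ => by positivity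

lemma PP_sq_le (n : ℕ) : PP n ^ 2 ≤ 1 / (2 * n + 1) := by
  induction n with
  | zero => simp [PP]
  | succ n ih =>
    have h1 : PP (n + 1) = PP n * ((2 * n + 1 : ℝ) / (2 * n + 2)) := by
      rw [PP, Finset.prod_range_succ]; push_cast; rfl
    rw [h1, mul_pow]
    have hp3 : (0:ℝ) < 2 * (n+1) + 1 := by positivity
    have h2 : PP n ^ 2 * ((2 * n + 1 : ℝ) / (2 * n + 2)) ^ 2 ≤ (1 / (2 * n + 1)) * ((2 * n + 1 : ℝ) / (2 * n + 2)) ^ 2 :=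
      mul_le_mul_of_nonneg_right ih (by positivity)
    refine h2.trans ?_
    have hp2 : (0:ℝ) < (2 * n + 2) ^ 2 * (2 * n + 1) := by positivity
    rw [div_pow, one_div, one_div, mul_comm, ← div_eq_mul_inv, div_div]
    push_cast
    rw [inv_eq_one_div, div_le_div_iff₀ hp2 hp3]
    nlinarith [Nat.cast_nonneg (α := ℝ) n]
  
lemma PP_tendsto : Tendsto PP atTop (nhds 0) := by
  have hsq : Tendsto (fun n => PP n ^ 2) atTop (nhds 0) := by
    apply squeeze_zero (fun n => by positivity) PP_sq_le
    apply squeeze_zero (fun n => by positivity) _ tendsto_one_div_add_atTop_nhds_zero_nat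
    intro n
    apply div_le_div_of_nonneg_left (by norm_num) (by positivity)
    push_cast; linarith [Nat.cast_nonneg (α := ℝ) n]
  have h2 : Tendsto (fun n => Real.sqrt (PP n ^ 2)) atTop (nhds 0) := by
    have := (Real.continuous_sqrt.tendsto 0).comp hsq
    rwa [Real.sqrt_zero] at this
  refine h2.congr fun n => ?_
  rw [Real.sqrt_sq (PP_nonneg n)]

lemma prod_even (m : ℕ) : ∏ i ∈ Finset.range m, (2*(i:ℝ)+2) = 2^m * (Nat.factorial m : ℝ) := by
  induction m with
  | zero => simp
  | succ m ih =>
    rw [Finset.prod_range_succ, ih, Nat.factorial_succ]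
    push_cast
    ring

lemma card_mul (m : ℕ) : ((∏ i ∈ Finset.range m, (2*i+1) : ℕ) : ℝ) * hh m = 2 * PP m := by
  have hN : ((∏ i ∈ Finset.range m, (2*i+1) : ℕ) : ℝ) = ∏ i ∈ Finset.range m, (2*(i:ℝ)+1) := by
    push_cast; rfl
  have hP : PP m = (∏ i ∈ Finset.range m, (2*(i:ℝ)+1)) / (2^m * (Nat.factorial m : ℝ)) := by
    rw [PP, Finset.prod_div_distrib, prod_even]
  have hfac : (Nat.factorial m : ℝ) ≠ 0 := Nat.cast_ne_zero.2 (Nat.factorial_ne_zero m)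
  rw [hN, hP, hh]
  field_simp

/-- The set of reals in `[0,1]` whose expansion in the generalized base `(4,6,8,…)` omits
the maximal digit at every position (digit at position `i` lies in `{0,…,2i}` rather than
`{0,…,2i+1}`) has Lebesgue measure zero. -/
theorem measure_avoid_top_digit_zero :
    volume {x : ℝ | ∃ c : ℕ → ℕ, (∀ i, c i ≤ 2 * i) ∧
        x = ∑' i : ℕ, (c i : ℝ) / (2 ^ i * (Nat.factorial (i + 1) : ℝ))} = 0 := by
  set A := {x : ℝ | ∃ c : ℕ → ℕ, (∀ i, c i ≤ 2 * i) ∧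
        x = ∑' i : ℕ, (c i : ℝ) / (2 ^ i * (Nat.factorial (i + 1) : ℝ))} with hA
  have key : ∀ n : ℕ, volume A ≤ ENNReal.ofReal (2 * PP (n + 1)) := by
    intro n
    set m := n + 1
    -- the cover
    set sd : ((i : Fin m) → Fin (2*(i:ℕ)+1)) → ℝ := fun d =>
      ∑ i : Fin m, ((d i : ℕ) : ℝ) / (2 ^ (i:ℕ) * (Nat.factorial ((i:ℕ) + 1) : ℝ)) with hsd
    have hcover : A ⊆ ⋃ d : ((i : Fin m) → Fin (2*(i:ℕ)+1)),
        Set.Icc (sd d) (sd d + hh m) := by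
      rintro x ⟨c, hc, rfl⟩
      set f : ℕ → ℝ := fun i => (c i : ℝ) / (2 ^ i * (Nat.factorial (i + 1) : ℝ)) with hf
      have hnn : ∀ i, 0 ≤ f i := fun i => by have := ww_pos i; positivity
      have hfg : ∀ i, f i ≤ gg i := by
        intro i
        have h1 : (c i : ℝ) ≤ 2 * (i:ℝ) := by exact_mod_cast hc i
        simp only [hf, gg]
        gcongr
        linarith
      have hsum : Summable f := gg_summable.of_nonneg_of_le hnn hfg
      set d : (i : Fin m) → Fin (2*(i:ℕ)+1) := fun i => ⟨c i, by have := hc i; omega⟩ with hd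
      have hsd_eq : sd d = ∑ i ∈ Finset.range m, f i :=
        Fin.sum_univ_eq_sum_range (fun i => f i) m
      have hsplit : ∑ i ∈ Finset.range m, f i + ∑' i, f (i + m) = ∑' i, f i :=
        hsum.sum_add_tsum_nat_add m
      have htail0 : 0 ≤ ∑' i, f (i + m) := tsum_nonneg fun i => hnn _
      have htail1 : ∑' i, f (i + m) ≤ hh m := by
        have := Summable.tsum_le_tsum (fun i => hfg (i + m))
          ((summable_nat_add_iff m).2 hsum) (gg_hasSum m).summable
        rwa [(gg_hasSum m).tsum_eq] at this
      refine Set.mem_iUnion.2 ⟨d, ?_⟩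
      constructor
      · rw [hsd_eq, ← hsplit]; linarith
      · rw [hsd_eq, ← hsplit]; linarith
    calc volume A ≤ volume (⋃ d : ((i : Fin m) → Fin (2*(i:ℕ)+1)),
        Set.Icc (sd d) (sd d + hh m)) := measure_mono hcover
      _ ≤ ∑ d : ((i : Fin m) → Fin (2*(i:ℕ)+1)), volume (Set.Icc (sd d) (sd d + hh m)) :=
          measure_iUnion_fintype_le _ _
      _ = ∑ d : ((i : Fin m) → Fin (2*(i:ℕ)+1)), ENNReal.ofReal (hh m) := by
          simp [Real.volume_Icc]
      _ = (Fintype.card ((i : Fin m) → Fin (2*(i:ℕ)+1)) : ℝ≥0∞) * ENNReal.ofReal (hh m) := by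
          rw [Finset.sum_const, nsmul_eq_mul, Finset.card_univ]
      _ = ENNReal.ofReal (2 * PP m) := by
          have hcard : Fintype.card ((i : Fin m) → Fin (2*(i:ℕ)+1))
              = ∏ i ∈ Finset.range m, (2*i+1) := by
            rw [Fintype.card_pi]
            simp only [Fintype.card_fin]
            exact Fin.prod_univ_eq_prod_range (fun i => 2*i+1) m
          have hhnn : 0 ≤ hh m := by simp only [hh]; positivity
          rw [hcard, ← ENNReal.ofReal_natCast, ← ENNReal.ofReal_mul (by positivity),
            card_mul m]
  have htend : Tendsto (fun n : ℕ => ENNReal.ofReal (2 * PP (n + 1))) atTop (nhds 0) := by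
    have h1 : Tendsto (fun n : ℕ => 2 * PP (n + 1)) atTop (nhds 0) := by
      have := (PP_tendsto.comp (tendsto_add_atTop_nat 1)).const_mul 2
      simpa using this
    simpa using ENNReal.tendsto_ofReal h1
  have : volume A ≤ 0 := ge_of_tendsto' htend key
  exact le_antisymm this (zero_le)
end

section
/- There exists a subset E of [0,1] with Hausdorff dimension 1/2 such that E + E = [0,1]. -/
open MeasureTheory Pointwise Filter Finset NNReal ENNReal

set_option linter.unusedSectionVars false

namespace DimHalfAux

/-- product of bases below `k` -/
def pp (N : ℕ → ℕ) (k : ℕ) : ℕ := ∏ j ∈ Finset.range k, N j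

variable {N : ℕ → ℕ} (hN : ∀ k, 2 ≤ N k)

lemma pp_zero : pp N 0 = 1 := by simp [pp]

lemma pp_succ (k : ℕ) : pp N (k+1) = pp N k * N k := by
  simp [pp, Finset.prod_range_succ]

include hN

lemma pp_pos (k : ℕ) : 0 < pp N k := by
  apply Finset.prod_pos
  intro j _
  exact lt_of_lt_of_le (by norm_num) (hN j)

lemma pp_rpos (k : ℕ) : (0:ℝ) < pp N k := by exact_mod_cast pp_pos hN k

lemma pp_mono : Monotone (pp N) := by
  apply monotone_nat_of_le_succ
  intro k
  rw [pp_succ]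
  exact Nat.le_mul_of_pos_right _ (lt_of_lt_of_le (by norm_num) (hN k))

lemma two_pow_le_pp (k : ℕ) : 2^k ≤ pp N k := by
  induction k with
  | zero => simp [pp_zero]
  | succ n ih =>
    rw [pp_succ, pow_succ]
    exact Nat.mul_le_mul ih (hN n)

lemma tendsto_pp : Filter.Tendsto (fun k => (pp N k : ℝ)) Filter.atTop Filter.atTop := by
  apply Filter.tendsto_atTop_mono (fun k => ?_) (tendsto_pow_atTop_atTop_of_one_lt (by norm_num : (1:ℝ) < 2))
  exact_mod_cast two_pow_le_pp hN k

lemma tendsto_inv_pp : Filter.Tendsto (fun k => ((pp N k : ℝ))⁻¹) Filter.atTop (nhds 0) :=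
  (tendsto_pp hN).inv_tendsto_atTop

/-- one telescoping step -/
lemma tele_step (k : ℕ) :
    ((N k : ℝ) - 1) / pp N (k+1) = (pp N k : ℝ)⁻¹ - (pp N (k+1) : ℝ)⁻¹ := by
  have h1 : (0:ℝ) < pp N k := pp_rpos hN _
  have hps : (pp N (k+1) : ℝ) = pp N k * N k := by rw [pp_succ]; push_cast; ring
  have hNpos : (0:ℝ) < N k := by have := hN k; positivity
  rw [hps]
  field_simp

/-- telescoping sum of maximal digits, starting at `m` -/
lemma sum_tele (m n : ℕ) :
    ∑ j ∈ Finset.range n, ((N (m+j) : ℝ) - 1) / pp N (m+j+1)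
      = (pp N m : ℝ)⁻¹ - (pp N (m+n) : ℝ)⁻¹ := by
  induction n with
  | zero => simp
  | succ n ih =>
    rw [Finset.sum_range_succ, ih, tele_step hN (m+n), show m+(n+1) = (m+n)+1 from rfl]
    ring




/-- value of a digit sequence -/
noncomputable def val (N : ℕ → ℕ) (c : ℕ → ℕ) : ℝ := ∑' k, (c k : ℝ) / pp N (k+1)

omit hN in
lemma term_nonneg (c : ℕ → ℕ) (k : ℕ) : (0:ℝ) ≤ (c k : ℝ) / pp N (k+1) := by positivity

lemma term_le {c : ℕ → ℕ} (hc : ∀ k, c k < N k) (k : ℕ) :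
    (c k : ℝ) / pp N (k+1) ≤ ((N k : ℝ) - 1) / pp N (k+1) := by
  have h : (c k : ℝ) ≤ (N k : ℝ) - 1 := by
    have := hc k
    have : (c k : ℝ) + 1 ≤ N k := by exact_mod_cast this
    linarith
  gcongr

lemma sum_range_le {c : ℕ → ℕ} (hc : ∀ k, c k < N k) (n : ℕ) :
    ∑ k ∈ Finset.range n, (c k : ℝ) / pp N (k+1) ≤ 1 - (pp N n : ℝ)⁻¹ := by
  have h := sum_tele hN 0 n
  simp only [Nat.zero_add, pp_zero, Nat.cast_one, inv_one] at h
  calc ∑ k ∈ Finset.range n, (c k : ℝ) / pp N (k+1)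
      ≤ ∑ k ∈ Finset.range n, ((N k : ℝ) - 1) / pp N (k+1) :=
        Finset.sum_le_sum (fun k _ => term_le hN hc k)
    _ = 1 - (pp N n : ℝ)⁻¹ := by rw [← h]

lemma summable_of_lt {c : ℕ → ℕ} (hc : ∀ k, c k < N k) :
    Summable (fun k => (c k : ℝ) / pp N (k+1)) := by
  refine summable_of_sum_range_le (c := 1) (term_nonneg c) fun n => ?_
  refine (sum_range_le hN hc n).trans ?_
  have : (0:ℝ) ≤ (pp N n : ℝ)⁻¹ := by positivity
  linarith

lemma val_nonneg (c : ℕ → ℕ) : 0 ≤ val N c :=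
  tsum_nonneg (term_nonneg c)

lemma val_le_one {c : ℕ → ℕ} (hc : ∀ k, c k < N k) : val N c ≤ 1 := by
  refine Real.tsum_le_of_sum_range_le (term_nonneg c) fun n => ?_
  refine (sum_range_le hN hc n).trans ?_
  have : (0:ℝ) ≤ (pp N n : ℝ)⁻¹ := by positivity
  linarith

/-- tail bound: the value of digits from position `m` onwards -/
lemma tail_le {c : ℕ → ℕ} (hc : ∀ k, c k < N k) (m : ℕ) :
    ∑' j, (c (m + j) : ℝ) / pp N (m + j + 1) ≤ (pp N m : ℝ)⁻¹ := by
  refine Real.tsum_le_of_sum_range_le (fun j => by positivity) fun n => ?_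
  calc ∑ j ∈ Finset.range n, (c (m+j) : ℝ) / pp N (m+j+1)
      ≤ ∑ j ∈ Finset.range n, ((N (m+j) : ℝ) - 1) / pp N (m+j+1) :=
        Finset.sum_le_sum (fun j _ => term_le hN hc (m+j))
    _ = (pp N m : ℝ)⁻¹ - (pp N (m+n) : ℝ)⁻¹ := sum_tele hN m n
    _ ≤ (pp N m : ℝ)⁻¹ := by
        have : (0:ℝ) ≤ (pp N (m+n) : ℝ)⁻¹ := by positivity
        linarith

/-- value = head sum + tail -/
lemma val_eq_sum_add_tail {c : ℕ → ℕ} (hc : ∀ k, c k < N k) (m : ℕ) :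
    val N c = (∑ k ∈ Finset.range m, (c k : ℝ) / pp N (k+1))
      + ∑' j, (c (m + j) : ℝ) / pp N (m + j + 1) := by
  have hs := summable_of_lt hN hc
  rw [val, ← Summable.sum_add_tsum_nat_add m hs]
  congr 1
  apply tsum_congr
  intro j
  rw [Nat.add_comm j m]

omit hN in
lemma tail_nonneg (c : ℕ → ℕ) (m : ℕ) :
    0 ≤ ∑' j, (c (m + j) : ℝ) / pp N (m + j + 1) :=
  tsum_nonneg (fun j => by positivity)



/-- partial sums converge to the value -/
lemma tendsto_partial {c : ℕ → ℕ} (hc : ∀ k, c k < N k) :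
    Filter.Tendsto (fun n => ∑ k ∈ Finset.range n, (c k : ℝ) / pp N (k+1))
      Filter.atTop (nhds (val N c)) :=
  (summable_of_lt hN hc).hasSum.tendsto_sum_nat

/-- the all-max digit sequence has value 1 -/
lemma val_max : val N (fun k => N k - 1) = 1 := by
  have hc : ∀ k, N k - 1 < N k := fun k => Nat.sub_lt (by have := hN k; omega) (by norm_num)
  have h1 : Filter.Tendsto (fun n => ∑ k ∈ Finset.range n, ((N k - 1 : ℕ) : ℝ) / pp N (k+1))
      Filter.atTop (nhds 1) := by
    have heq : ∀ n, ∑ k ∈ Finset.range n, ((N k - 1 : ℕ) : ℝ) / pp N (k+1)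
        = 1 - (pp N n : ℝ)⁻¹ := by
      intro n
      have h := sum_tele hN 0 n
      simp only [Nat.zero_add, pp_zero, Nat.cast_one, inv_one] at h
      rw [← h]
      apply Finset.sum_congr rfl
      intro k _
      congr 1
      have := hN k
      push_cast [Nat.cast_sub (by omega : 1 ≤ N k)]
      ring
    simp only [heq]
    have := (tendsto_inv_pp hN).const_sub (1:ℝ)
    simpa using this
  exact tendsto_nhds_unique (tendsto_partial hN hc) h1

/-- additivity -/
lemma val_add {c c' : ℕ → ℕ} (hc : ∀ k, c k < N k) (hc' : ∀ k, c' k < N k) :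
    val N (fun k => c k + c' k) = val N c + val N c' := by
  rw [val, val, val, ← Summable.tsum_add (summable_of_lt hN hc) (summable_of_lt hN hc')]
  apply tsum_congr
  intro k
  push_cast
  ring

/-- every x in [0,1] has an expansion -/
lemma exists_expansion {x : ℝ} (hx : x ∈ Set.Icc (0:ℝ) 1) :
    ∃ c : ℕ → ℕ, (∀ k, c k < N k) ∧ val N c = x := by
  rcases eq_or_lt_of_le hx.2 with h1 | h1
  · refine ⟨fun k => N k - 1, fun k => Nat.sub_lt (by have := hN k; omega) (by norm_num), ?_⟩
    rw [val_max hN, h1]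
  · -- x < 1
    have hx0 := hx.1
    set m : ℕ → ℤ := fun k => ⌊x * pp N k⌋ with hm
    have hm0 : m 0 = 0 := by
      simp only [hm, pp_zero, Nat.cast_one, mul_one]
      exact Int.floor_eq_zero_iff.2 ⟨hx0, h1⟩
    have hkey : ∀ k, (N k : ℤ) * m k ≤ m (k+1) ∧ m (k+1) ≤ (N k : ℤ) * m k + ((N k : ℤ) - 1) := by
      intro k
      have hNk : (0:ℝ) < (N k : ℝ) := by have := hN k; positivity
      have hppk : (0:ℝ) < pp N k := pp_rpos hN k
      have hps : (pp N (k+1) : ℝ) = pp N k * N k := by rw [pp_succ]; push_cast; ring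
      have hlow : ((N k : ℤ) * m k : ℝ) ≤ x * pp N (k+1) := by
        push_cast
        rw [hps]
        have := Int.floor_le (x * pp N k)
        calc (N k : ℝ) * (m k : ℝ) ≤ (N k : ℝ) * (x * pp N k) := by
              apply mul_le_mul_of_nonneg_left _ hNk.le
              exact this
          _ = x * (pp N k * N k) := by ring
      have hhigh : x * pp N (k+1) < ((N k : ℤ) * m k + N k : ℝ) := by
        push_cast
        rw [hps]
        have := Int.lt_floor_add_one (x * pp N k)
        calc x * (pp N k * N k) = (x * pp N k) * N k := by ring
          _ < ((m k : ℝ) + 1) * N k := by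
              apply mul_lt_mul_of_pos_right this hNk
          _ = (N k : ℝ) * (m k : ℝ) + N k := by ring
      constructor
      · exact Int.le_floor.2 (by exact_mod_cast hlow)
      · have : m (k+1) < (N k : ℤ) * m k + N k := by
          apply Int.floor_lt.2
          exact_mod_cast hhigh
        omega
    set c : ℕ → ℕ := fun k => (m (k+1) - (N k : ℤ) * m k).toNat with hcdef
    have hcz : ∀ k, (c k : ℤ) = m (k+1) - (N k : ℤ) * m k := by
      intro k
      have := hkey k
      simp only [hcdef]
      omega
    have hclt : ∀ k, c k < N k := by
      intro k
      have h := hkey k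
      have := hcz k
      omega
    refine ⟨c, hclt, ?_⟩
    have hpartial : ∀ n, ∑ k ∈ Finset.range n, (c k : ℝ) / pp N (k+1) = (m n : ℝ) / pp N n := by
      intro n
      induction n with
      | zero => simp [hm0, pp_zero]
      | succ n ih =>
        rw [Finset.sum_range_succ, ih]
        have hps : (pp N (n+1) : ℝ) = pp N n * N n := by rw [pp_succ]; push_cast; ring
        have h1' : (0:ℝ) < pp N n := pp_rpos hN n
        have hNn : (0:ℝ) < (N n : ℝ) := by have := hN n; positivity
        have hcr : (c n : ℝ) = (m (n+1) : ℝ) - (N n : ℝ) * m n := by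
          exact_mod_cast hcz n
        rw [hcr, hps]
        field_simp
        ring
    have htend : Filter.Tendsto (fun n => ∑ k ∈ Finset.range n, (c k : ℝ) / pp N (k+1))
        Filter.atTop (nhds x) := by
      simp only [hpartial]
      have hdiff : ∀ n, |(m n : ℝ) / pp N n - x| ≤ (pp N n : ℝ)⁻¹ := by
        intro n
        have h1' : (0:ℝ) < pp N n := pp_rpos hN n
        have hfl := Int.floor_le (x * pp N n)
        have hfl2 := Int.lt_floor_add_one (x * pp N n)
        have hinv : (pp N n : ℝ)⁻¹ * pp N n = 1 := inv_mul_cancel₀ h1'.ne'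
        rw [abs_le]
        constructor
        · rw [div_sub' h1'.ne', le_div_iff₀ h1']
          simp only [hm]
          nlinarith
        · rw [div_sub' h1'.ne', div_le_iff₀ h1']
          simp only [hm]
          nlinarith
      have : Filter.Tendsto (fun n => (m n : ℝ) / pp N n - x) Filter.atTop (nhds 0) := by
        apply squeeze_zero_norm (fun n => hdiff n) (tendsto_inv_pp hN)
      have := this.add_const x
      simpa using this
    exact tendsto_nhds_unique (tendsto_partial hN hclt) htend

/-- summability of the tail sequence -/
lemma summable_tail {c : ℕ → ℕ} (hc : ∀ k, c k < N k) (m : ℕ) :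
    Summable (fun j => (c (m + j) : ℝ) / pp N (m + j + 1)) := by
  have h := (_root_.summable_nat_add_iff m).2 (summable_of_lt hN hc)
  apply h.congr
  intro j
  rw [Nat.add_comm j m]

/-- half tail bound for small digits -/
lemma tail_le_half {c : ℕ → ℕ} (hc : ∀ k, 2 * c k + 1 ≤ N k) (m : ℕ) :
    ∑' j, (c (m + j) : ℝ) / pp N (m + j + 1) ≤ (2 * (pp N m : ℝ))⁻¹ := by
  refine Real.tsum_le_of_sum_range_le (fun j => by positivity) fun n => ?_
  have hhalf : ∀ k, (c k : ℝ) ≤ ((N k : ℝ) - 1) / 2 := by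
    intro k
    have : (2 * c k + 1 : ℝ) ≤ N k := by exact_mod_cast hc k
    linarith
  calc ∑ j ∈ Finset.range n, (c (m+j) : ℝ) / pp N (m+j+1)
      ≤ ∑ j ∈ Finset.range n, (((N (m+j) : ℝ) - 1) / 2) / pp N (m+j+1) := by
        apply Finset.sum_le_sum
        intro j _
        gcongr
        exact hhalf (m+j)
    _ = (1/2) * ∑ j ∈ Finset.range n, ((N (m+j) : ℝ) - 1) / pp N (m+j+1) := by
        rw [Finset.mul_sum]
        apply Finset.sum_congr rfl
        intro j _
        ring
    _ ≤ (2 * (pp N m : ℝ))⁻¹ := by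
        rw [sum_tele hN m n]
        have h1 : (0:ℝ) < pp N m := pp_rpos hN m
        have h2 : (0:ℝ) ≤ (pp N (m+n) : ℝ)⁻¹ := by positivity
        rw [mul_inv]
        calc (1/2) * ((pp N m : ℝ)⁻¹ - (pp N (m+n):ℝ)⁻¹) ≤ (1/2) * (pp N m : ℝ)⁻¹ := by nlinarith
          _ = 2⁻¹ * (pp N m : ℝ)⁻¹ := by norm_num

/-- two values with a common prefix are close -/
lemma val_close {c c' : ℕ → ℕ} (hc : ∀ k, c k < N k) (hc' : ∀ k, c' k < N k)
    (m : ℕ) (hag : ∀ j < m, c j = c' j) :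
    |val N c - val N c'| ≤ (pp N m : ℝ)⁻¹ := by
  rw [val_eq_sum_add_tail hN hc m, val_eq_sum_add_tail hN hc' m]
  have hpre : ∑ k ∈ Finset.range m, (c k : ℝ) / pp N (k+1)
      = ∑ k ∈ Finset.range m, (c' k : ℝ) / pp N (k+1) := by
    apply Finset.sum_congr rfl
    intro k hk
    rw [hag k (Finset.mem_range.1 hk)]
  rw [hpre]
  have h1 := tail_le hN hc m
  have h2 := tail_le hN hc' m
  have h3 := tail_nonneg (N := N) c m
  have h4 := tail_nonneg (N := N) c' m
  rw [add_sub_add_left_eq_sub, abs_le]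
  constructor <;> linarith

/-- separation: digit sequences with small digits differing at position m are far apart -/
lemma val_sep {c c' : ℕ → ℕ} (hc : ∀ k, 2 * c k + 1 ≤ N k) (hc' : ∀ k, 2 * c' k + 1 ≤ N k)
    (m : ℕ) (hag : ∀ j < m, c j = c' j) (hne : c m ≠ c' m) :
    (2 * (pp N (m+1) : ℝ))⁻¹ ≤ |val N c - val N c'| := by
  have hlt : ∀ k, c k < N k := fun k => by have := hc k; omega
  have hlt' : ∀ k, c' k < N k := fun k => by have := hc' k; omega
  rw [val_eq_sum_add_tail hN hlt m, val_eq_sum_add_tail hN hlt' m]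
  have hpre : ∑ k ∈ Finset.range m, (c k : ℝ) / pp N (k+1)
      = ∑ k ∈ Finset.range m, (c' k : ℝ) / pp N (k+1) := by
    apply Finset.sum_congr rfl
    intro k hk
    rw [hag k (Finset.mem_range.1 hk)]
  rw [hpre]
  simp only [add_sub_add_left_eq_sub]
  -- split off first tail term
  have hsplit : ∀ (e : ℕ → ℕ), (∀ k, e k < N k) →
      (∑' j, (e (m + j) : ℝ) / pp N (m + j + 1))
        = (e m : ℝ) / pp N (m+1) + ∑' j, (e (m + 1 + j) : ℝ) / pp N (m + 1 + j + 1) := by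
    intro e he
    rw [Summable.tsum_eq_zero_add (summable_tail hN he m)]
    simp only [Nat.add_zero]
    congr 1
    apply tsum_congr
    intro j
    rw [show m + (j+1) = m + 1 + j by omega]
  rw [hsplit c hlt, hsplit c' hlt']
  have ht1 := tail_le_half hN hc (m+1)
  have ht2 := tail_le_half hN hc' (m+1)
  have ht3 := tail_nonneg (N := N) c (m+1)
  have ht4 := tail_nonneg (N := N) c' (m+1)
  have hppos : (0:ℝ) < pp N (m+1) := pp_rpos hN _
  have hone : (1:ℝ) ≤ |(c m : ℝ) - (c' m : ℝ)| := by
    have : c m < c' m ∨ c' m < c m := Nat.lt_or_lt_of_ne hne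
    rcases this with h | h
    · rw [abs_sub_comm, le_abs]
      left
      have : (c m : ℝ) + 1 ≤ c' m := by exact_mod_cast h
      linarith
    · rw [le_abs]
      left
      have : (c' m : ℝ) + 1 ≤ c m := by exact_mod_cast h
      linarith
  have hkey : (1:ℝ) / pp N (m+1) ≤ |(c m : ℝ)/pp N (m+1) - (c' m : ℝ)/pp N (m+1)| := by
    rw [div_sub_div_same, abs_div, abs_of_pos hppos, div_le_div_iff₀ hppos hppos]
    calc (1:ℝ) * pp N (m+1) = pp N (m+1) := by ring
      _ ≤ |(c m : ℝ) - (c' m : ℝ)| * pp N (m+1) := by nlinarith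
  set a := (c m : ℝ)/pp N (m+1)
  set a' := (c' m : ℝ)/pp N (m+1)
  set T1 := ∑' j, (c (m + 1 + j) : ℝ) / pp N (m + 1 + j + 1)
  set T2 := ∑' j, (c' (m + 1 + j) : ℝ) / pp N (m + 1 + j + 1)
  have habs : |T2 - T1| ≤ (2 * (pp N (m+1) : ℝ))⁻¹ := by
    rw [abs_le]
    constructor <;> linarith
  have htri := abs_sub_abs_le_abs_sub (a - a') (T2 - T1)
  have heq : (a - a') - (T2 - T1) = a + T1 - (a' + T2) := by ring
  rw [heq] at htri
  have hfin : (1:ℝ) / pp N (m+1) - (2 * (pp N (m+1) : ℝ))⁻¹ = (2 * (pp N (m+1) : ℝ))⁻¹ := by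
    rw [mul_inv]
    field_simp
    ring
  linarith

omit hN

/-! ### The specific construction -/

/-- slowly growing parameter -/
def ss (k : ℕ) : ℕ := k + 2

/-- the base sequence -/
def bb (k : ℕ) : ℕ := 2 * (k + 2)^2 + 1

lemma hss : ∀ k, 2 ≤ ss k := fun k => by simp [ss]
lemma hbb : ∀ k, 2 ≤ bb k := fun k => by simp [bb]; nlinarith [Nat.zero_le k]

/-- the digit set at level `k`: an additive basis of `{0, …, bb k - 1}` of size `O(k)` -/
def A (k : ℕ) : Finset ℕ :=
  (Finset.range (k+2)) ∪ (Finset.range (k+3)).image (· * (k+2))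
    ∪ (Finset.range (k+2)).image ((k+2)^2 - ·)

lemma mem_A_of_lt {k a : ℕ} (h : a < k + 2) : a ∈ A k := by
  simp only [A, Finset.mem_union]
  exact Or.inl (Or.inl (Finset.mem_range.2 h))

lemma le_sq_of_mem_A {k a : ℕ} (h : a ∈ A k) : a ≤ (k+2)^2 := by
  simp only [A, Finset.mem_union, Finset.mem_range, Finset.mem_image] at h
  rcases h with (h | ⟨b, hb, rfl⟩) | ⟨b, hb, rfl⟩
  · nlinarith
  · have : b ≤ k + 2 := by omega
    calc b * (k+2) ≤ (k+2) * (k+2) := Nat.mul_le_mul_right _ this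
      _ = (k+2)^2 := by ring
  · omega

lemma card_A_le (k : ℕ) : (A k).card ≤ 3 * k + 7 := by
  unfold A
  calc ((Finset.range (k+2)) ∪ (Finset.range (k+3)).image (· * (k+2))
        ∪ (Finset.range (k+2)).image ((k+2)^2 - ·)).card
      ≤ ((Finset.range (k+2)) ∪ (Finset.range (k+3)).image (· * (k+2))).card
        + ((Finset.range (k+2)).image ((k+2)^2 - ·)).card := Finset.card_union_le _ _
    _ ≤ ((Finset.range (k+2)).card + ((Finset.range (k+3)).image (· * (k+2))).card)
        + ((Finset.range (k+2)).image ((k+2)^2 - ·)).card := by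
        have := Finset.card_union_le (Finset.range (k+2)) ((Finset.range (k+3)).image (· * (k+2)))
        omega
    _ ≤ (k+2) + (k+3) + (k+2) := by
        have h1 := Finset.card_image_le (s := Finset.range (k+3)) (f := (· * (k+2)))
        have h2 := Finset.card_image_le (s := Finset.range (k+2)) (f := ((k+2)^2 - ·))
        simp only [Finset.card_range] at *
        omega
    _ = 3 * k + 7 := by ring

/-- the additive basis property -/
lemma A_basis {k t : ℕ} (ht : t ≤ 2 * (k+2)^2) :
    ∃ a ∈ A k, ∃ a' ∈ A k, a + a' = t := by
  set s := k + 2 with hs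
  have hs2 : 2 ≤ s := by omega
  rcases le_or_gt t (s^2) with h | h
  · -- low case : t = (t/s)*s + t%s
    refine ⟨(t / s) * s, ?_, t % s, ?_, ?_⟩
    · simp only [A, Finset.mem_union, Finset.mem_image, Finset.mem_range]
      refine Or.inl (Or.inr ⟨t / s, ?_, rfl⟩)
      have : t / s ≤ s^2 / s := Nat.div_le_div_right h
      have hq : s^2 / s = s := by
        rw [pow_two]
        exact Nat.mul_div_cancel_left s (by omega)
      omega
    · exact mem_A_of_lt (Nat.mod_lt _ (by omega))
    · rw [Nat.mul_comm]
      exact Nat.div_add_mod t s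
  · -- high case
    set w := t - s^2 with hw
    have hw1 : 1 ≤ w := by omega
    have hwle : w ≤ s^2 := by omega
    set q := (w - 1) / s with hq
    set e := (w - 1) % s with he
    have hdm : s * q + e = w - 1 := Nat.div_add_mod (w - 1) s
    have helt : e < s := Nat.mod_lt _ (by omega)
    have hqlt : q < s := by
      by_contra hcon
      push_neg at hcon
      have : s * s ≤ s * q := Nat.mul_le_mul_left _ hcon
      have hss' : s * s = s^2 := by ring
      omega
    set r := s - e - 1 with hr
    have hrlt : r < s := by omega
    refine ⟨s^2 - r, ?_, (q+1) * s, ?_, ?_⟩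
    · simp only [A, Finset.mem_union, Finset.mem_image, Finset.mem_range]
      exact Or.inr ⟨r, hrlt, rfl⟩
    · simp only [A, Finset.mem_union, Finset.mem_image, Finset.mem_range]
      exact Or.inl (Or.inr ⟨q + 1, by omega, rfl⟩)
    · have hsq : s ≤ s^2 := by nlinarith
      have hmul : (q+1) * s = s * q + s := by ring
      omega

/-- admissible digit sequences -/
def Good (c : ℕ → ℕ) : Prop := ∀ k, c k ∈ A k

/-- the set `E` -/
noncomputable def E : Set ℝ := {x | ∃ c, Good c ∧ val bb c = x}

lemma Good.lt_bb {c : ℕ → ℕ} (hc : Good c) : ∀ k, c k < bb k := by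
  intro k
  have := le_sq_of_mem_A (hc k)
  simp only [bb]
  nlinarith [Nat.zero_le k]

lemma Good.small {c : ℕ → ℕ} (hc : Good c) : ∀ k, 2 * c k + 1 ≤ bb k := by
  intro k
  have := le_sq_of_mem_A (hc k)
  simp only [bb]
  omega

lemma E_subset : E ⊆ Set.Icc (0:ℝ) 1 := by
  rintro x ⟨c, hc, rfl⟩
  exact ⟨val_nonneg hbb c, val_le_one hbb hc.lt_bb⟩

/-- the digits of an element of E are unique -/
lemma good_inj {c c' : ℕ → ℕ} (hc : Good c) (hc' : Good c') (h : val bb c = val bb c') :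
    c = c' := by
  by_contra hne
  have hex : ∃ k, c k ≠ c' k := by
    by_contra hcon
    push_neg at hcon
    exact hne (funext hcon)
  classical
  let m := Nat.find hex
  have hm : c m ≠ c' m := Nat.find_spec hex
  have hag : ∀ j < m, c j = c' j := by
    intro j hj
    exact not_not.1 (Nat.find_min hex hj)
  have := val_sep hbb hc.small hc'.small m hag hm
  rw [h] at this
  simp only [sub_self, abs_zero] at this
  have : (0:ℝ) < (2 * (pp bb (m+1) : ℝ))⁻¹ := by
    have := pp_rpos hbb (m+1)
    positivity
  linarith

/-- the sumset identity -/
lemma E_add_E : E + E = Set.Icc (0:ℝ) 1 := by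
  apply Set.Subset.antisymm
  · rintro z ⟨x, ⟨c, hc, rfl⟩, y, ⟨c', hc', rfl⟩, rfl⟩
    show val bb c + val bb c' ∈ Set.Icc (0:ℝ) 1
    rw [← val_add hbb hc.lt_bb hc'.lt_bb]
    have hlt : ∀ k, c k + c' k < bb k := by
      intro k
      have h1 := le_sq_of_mem_A (hc k)
      have h2 := le_sq_of_mem_A (hc' k)
      simp only [bb]
      omega
    exact ⟨val_nonneg hbb _, val_le_one hbb hlt⟩
  · intro z hz
    obtain ⟨c, hclt, hcval⟩ := exists_expansion hbb hz
    have hdec : ∀ k, ∃ p : ℕ × ℕ, p.1 ∈ A k ∧ p.2 ∈ A k ∧ p.1 + p.2 = c k := by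
      intro k
      have : c k ≤ 2 * (k+2)^2 := by
        have := hclt k
        simp only [bb] at this
        omega
      obtain ⟨a, ha, a', ha', hsum⟩ := A_basis this
      exact ⟨(a, a'), ha, ha', hsum⟩
    choose p hp1 hp2 hp3 using hdec
    refine ⟨val bb (fun k => (p k).1), ⟨_, hp1, rfl⟩, val bb (fun k => (p k).2), ⟨_, hp2, rfl⟩, ?_⟩
    show val bb (fun k => (p k).1) + val bb (fun k => (p k).2) = z
    rw [← val_add hbb (Good.lt_bb hp1) (Good.lt_bb hp2)]
    rw [← hcval]
    congr 1
    funext k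
    exact hp3 k

/-! ### The Hölder map for the lower bound -/

/-- truncated digits, used to map onto `[0,1]` in base `ss` -/
def trunc (c : ℕ → ℕ) : ℕ → ℕ := fun k => if c k < k + 2 then c k else 0

lemma trunc_lt (c : ℕ → ℕ) : ∀ k, trunc c k < ss k := by
  intro k
  simp only [trunc, ss]
  split <;> omega

attribute [local instance] Classical.propDecidable

/-- the Hölder map -/
noncomputable def F : ℝ → ℝ := fun x =>
  if h : ∃ c, Good c ∧ val bb c = x then val ss (trunc (Classical.choose h)) else 0

lemma F_spec {c : ℕ → ℕ} (hc : Good c) : F (val bb c) = val ss (trunc c) := by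
  have h : ∃ c', Good c' ∧ val bb c' = val bb c := ⟨c, hc, rfl⟩
  rw [F, dif_pos h]
  obtain ⟨hg, hv⟩ := Classical.choose_spec h
  rw [good_inj hg hc hv]

lemma F_surj : Set.Icc (0:ℝ) 1 ⊆ F '' E := by
  intro z hz
  obtain ⟨e, helt, hval⟩ := exists_expansion hss hz
  have hgood : Good e := fun k => mem_A_of_lt (helt k)
  have htr : trunc e = e := by
    funext k
    have hk := helt k
    simp only [ss] at hk
    simp only [trunc, if_pos hk]
  exact ⟨val bb e, ⟨e, hgood, rfl⟩, by rw [F_spec hgood, htr, hval]⟩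

/-- the key analytic growth estimate -/
lemma KAL {r : ℝ} (hr0 : 0 ≤ r) (hr : r < 1/2) :
    ∃ C : ℝ, 0 < C ∧ ∀ m, (2 * (pp bb (m+1) : ℝ)) ^ r ≤ C * pp ss m := by
  have hrexp : (0:ℝ) < 1 - 2*r := by linarith
  have hr1 : r ≤ 1 := by linarith
  have htend : Filter.Tendsto (fun m : ℕ => ((m:ℝ)+3) ^ (2*r-1)) Filter.atTop (nhds 0) := by
    have h1 : Filter.Tendsto (fun x : ℝ => x ^ (-(1-2*r))) Filter.atTop (nhds 0) :=
      tendsto_rpow_neg_atTop hrexp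
    have h2 : Filter.Tendsto (fun m : ℕ => (m:ℝ)+3) Filter.atTop Filter.atTop :=
      Filter.tendsto_atTop_add_const_right _ 3 tendsto_natCast_atTop_atTop
    have h3 := h1.comp h2
    have : (fun m : ℕ => ((m:ℝ)+3) ^ (2*r-1))
        = (fun x : ℝ => x ^ (-(1-2*r))) ∘ (fun m : ℕ => (m:ℝ)+3) := by
      funext m
      simp only [Function.comp_apply]
      norm_num
    rw [this]
    exact h3
  obtain ⟨K, hK⟩ := Filter.eventually_atTop.1
    ((htend.eventually (gt_mem_nhds (by norm_num : (0:ℝ) < 1/12))).mono fun x hx => le_of_lt hx)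
  set u : ℕ → ℝ := fun m => (2 * (pp bb (m+1) : ℝ)) ^ r / pp ss m with hu
  have hu_nonneg : ∀ m, 0 ≤ u m := by
    intro m
    have h1 : (0:ℝ) < pp ss m := pp_rpos hss m
    have h2 : (0:ℝ) < pp bb (m+1) := pp_rpos hbb (m+1)
    positivity
  have hfact : ∀ m, K ≤ m → ((bb (m+1) : ℝ)) ^ r ≤ ss m := by
    intro m hm
    have hm3 : (0:ℝ) < (m:ℝ)+3 := by positivity
    have hb1 : ((bb (m+1) : ℝ)) = 2*((m:ℝ)+3)^2+1 := by simp [bb]; push_cast; ring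
    have hb2 : ((bb (m+1) : ℝ)) ≤ 3*((m:ℝ)+3)^2 := by rw [hb1]; nlinarith
    have hbpos : (0:ℝ) ≤ (bb (m+1) : ℝ) := by positivity
    calc ((bb (m+1) : ℝ)) ^ r ≤ (3*((m:ℝ)+3)^2) ^ r := Real.rpow_le_rpow hbpos hb2 hr0
      _ = (3:ℝ)^r * (((m:ℝ)+3)^2) ^ r := Real.mul_rpow (by norm_num) (by positivity)
      _ = (3:ℝ)^r * ((m:ℝ)+3) ^ (2*r) := by
          rw [← Real.rpow_natCast ((m:ℝ)+3) 2, ← Real.rpow_mul hm3.le]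
          norm_num
      _ = (3:ℝ)^r * (((m:ℝ)+3) ^ (2*r-1) * ((m:ℝ)+3) ^ (1:ℝ)) := by
          rw [← Real.rpow_add hm3]
          norm_num
      _ ≤ 3 * ((1/12) * ((m:ℝ)+3)) := by
          have h31 : (3:ℝ)^r ≤ 3 := by
            calc (3:ℝ)^r ≤ (3:ℝ)^(1:ℝ) :=
                  Real.rpow_le_rpow_of_exponent_le (by norm_num) hr1
              _ = 3 := Real.rpow_one 3
          have h32 : ((m:ℝ)+3) ^ (2*r-1) ≤ 1/12 := hK m hm
          have h33 : ((m:ℝ)+3) ^ (1:ℝ) = (m:ℝ)+3 := Real.rpow_one _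
          rw [h33]
          have h34 : (0:ℝ) ≤ ((m:ℝ)+3) ^ (2*r-1) := Real.rpow_nonneg hm3.le _
          have h35 : (0:ℝ) < (3:ℝ)^r := Real.rpow_pos_of_pos (by norm_num) r
          nlinarith [mul_le_mul_of_nonneg_right
            (mul_le_mul h31 h32 h34 (by norm_num : (0:ℝ) ≤ 3)) hm3.le]
      _ ≤ ss m := by
          simp only [ss]
          push_cast
          linarith
  have hstep : ∀ m, K ≤ m → u (m+1) ≤ u m := by
    intro m hm
    have hps_bb : (pp bb (m+2) : ℝ) = pp bb (m+1) * bb (m+1) := by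
      rw [show m+2 = (m+1)+1 from rfl, pp_succ]; push_cast; ring
    have hps_ss : (pp ss (m+1) : ℝ) = pp ss m * ss m := by
      rw [pp_succ]; push_cast; ring
    have h1 : (0:ℝ) < pp ss m := pp_rpos hss m
    have h2 : (0:ℝ) < pp bb (m+1) := pp_rpos hbb (m+1)
    have hssm : (0:ℝ) < ss m := by simp only [ss]; positivity
    have hbm : (0:ℝ) < bb (m+1) := by
      have := hbb (m+1); positivity
    have hsplit : (2 * (pp bb (m+2) : ℝ)) ^ r
        = (2 * (pp bb (m+1) : ℝ)) ^ r * ((bb (m+1) : ℝ)) ^ r := by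
      rw [hps_bb, show (2:ℝ) * ((pp bb (m+1) : ℝ) * bb (m+1)) = (2 * pp bb (m+1)) * bb (m+1) by ring,
        Real.mul_rpow (by positivity) (by positivity)]
    have hmain : ((bb (m+1) : ℝ)) ^ r ≤ ss m := hfact m hm
    simp only [hu]
    rw [hsplit, hps_ss]
    rw [div_le_div_iff₀ (by positivity) (by positivity)]
    have hx : (0:ℝ) ≤ (2 * (pp bb (m+1) : ℝ)) ^ r := Real.rpow_nonneg (by positivity) r
    calc (2 * (pp bb (m+1) : ℝ)) ^ r * ((bb (m+1) : ℝ)) ^ r * pp ss m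
        ≤ (2 * (pp bb (m+1) : ℝ)) ^ r * (ss m : ℝ) * pp ss m := by
          nlinarith [mul_le_mul_of_nonneg_right (mul_le_mul_of_nonneg_left hmain hx) h1.le]
      _ = (2 * (pp bb (m+1) : ℝ)) ^ r * ((pp ss m : ℝ) * ss m) := by ring
  have hdesc : ∀ n, u (K + n) ≤ u K := by
    intro n
    induction n with
    | zero => simp
    | succ n ih =>
      have := hstep (K + n) (Nat.le_add_right _ _)
      rw [show K + (n+1) = (K + n) + 1 from rfl]
      exact this.trans ih
  set C : ℝ := (∑ j ∈ Finset.range (K+1), u j) + 1 with hC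
  have hCpos : 0 < C := by
    have : 0 ≤ ∑ j ∈ Finset.range (K+1), u j :=
      Finset.sum_nonneg (fun j _ => hu_nonneg j)
    linarith
  have hbound : ∀ m, u m ≤ C := by
    intro m
    rcases le_or_gt m K with h | h
    · have : u m ≤ ∑ j ∈ Finset.range (K+1), u j :=
        Finset.single_le_sum (fun j _ => hu_nonneg j) (Finset.mem_range.2 (by omega))
      linarith
    · have h1 : u m = u (K + (m - K)) := by congr 1; omega
      have h2 := hdesc (m - K)
      have h3 : u K ≤ ∑ j ∈ Finset.range (K+1), u j :=
        Finset.single_le_sum (fun j _ => hu_nonneg j) (Finset.mem_range.2 (by omega))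
      rw [h1]
      linarith
  refine ⟨C, hCpos, fun m => ?_⟩
  have h1 : (0:ℝ) < pp ss m := pp_rpos hss m
  have := hbound m
  simp only [hu] at this
  rw [div_le_iff₀ h1] at this
  linarith

/-- `F` is Hölder on `E` with any exponent `r < 1/2` -/
lemma holder_F {r : ℝ≥0} (hr : (r:ℝ) < 1/2) : ∃ C : ℝ≥0, HolderOnWith C r F E := by
  obtain ⟨C₀, hC₀pos, hC₀⟩ := KAL r.coe_nonneg hr
  refine ⟨C₀.toNNReal, ?_⟩
  intro x hx y hy
  obtain ⟨c, hc, rfl⟩ := hx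
  obtain ⟨c', hc', rfl⟩ := hy
  by_cases hcc : c = c'
  · subst hcc
    simp only [edist_self]
    exact zero_le
  · have hex : ∃ k, c k ≠ c' k := by
      by_contra hcon
      push_neg at hcon
      exact hcc (funext hcon)
    set m := Nat.find hex with hm
    have hmne : c m ≠ c' m := Nat.find_spec hex
    have hag : ∀ j < m, c j = c' j := fun j hj => not_not.1 (Nat.find_min hex hj)
    -- distance lower bound
    have hsep := val_sep hbb hc.small hc'.small m hag hmne
    -- image distance upper bound
    have htag : ∀ j < m, trunc c j = trunc c' j := by
      intro j hj
      simp only [trunc, hag j hj]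
    have hclose := val_close hss (trunc_lt c) (trunc_lt c') m htag
    rw [F_spec hc, F_spec hc']
    -- real inequality
    have hppss : (0:ℝ) < pp ss m := pp_rpos hss m
    have hppbb : (0:ℝ) < pp bb (m+1) := pp_rpos hbb (m+1)
    have hdpos : (0:ℝ) < |val bb c - val bb c'| := by
      have h0 : (0:ℝ) < (2 * (pp bb (m+1) : ℝ))⁻¹ := by positivity
      linarith
    have hreal : |val ss (trunc c) - val ss (trunc c')|
        ≤ C₀ * |val bb c - val bb c'| ^ (r:ℝ) := by
      have h1 : ((2 * (pp bb (m+1) : ℝ))⁻¹) ^ (r:ℝ) ≤ |val bb c - val bb c'| ^ (r:ℝ) :=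
        Real.rpow_le_rpow (by positivity) hsep r.coe_nonneg
      have h2 : (pp ss m : ℝ)⁻¹ ≤ C₀ * ((2 * (pp bb (m+1) : ℝ))⁻¹) ^ (r:ℝ) := by
        have hX : (0:ℝ) < (2 * (pp bb (m+1) : ℝ)) ^ (r:ℝ) :=
          Real.rpow_pos_of_pos (by positivity) _
        rw [Real.inv_rpow (by positivity), ← div_eq_mul_inv, le_div_iff₀ hX]
        have h3 := hC₀ m
        have heq : (pp ss m : ℝ)⁻¹ * (C₀ * pp ss m) = C₀ := by field_simp
        nlinarith [mul_le_mul_of_nonneg_left h3 (inv_nonneg.2 hppss.le)]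
      calc |val ss (trunc c) - val ss (trunc c')| ≤ (pp ss m : ℝ)⁻¹ := hclose
        _ ≤ C₀ * ((2 * (pp bb (m+1) : ℝ))⁻¹) ^ (r:ℝ) := h2
        _ ≤ C₀ * |val bb c - val bb c'| ^ (r:ℝ) := by
            apply mul_le_mul_of_nonneg_left h1 hC₀pos.le
    -- convert to edist
    rw [edist_dist, edist_dist, Real.dist_eq, Real.dist_eq]
    calc ENNReal.ofReal |val ss (trunc c) - val ss (trunc c')|
        ≤ ENNReal.ofReal (C₀ * |val bb c - val bb c'| ^ (r:ℝ)) := ENNReal.ofReal_le_ofReal hreal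
      _ = ENNReal.ofReal C₀ * ENNReal.ofReal (|val bb c - val bb c'| ^ (r:ℝ)) :=
          ENNReal.ofReal_mul hC₀pos.le
      _ = (C₀.toNNReal : ℝ≥0∞) * ENNReal.ofReal |val bb c - val bb c'| ^ (r:ℝ) := by
          rw [ENNReal.ofReal_rpow_of_pos hdpos]
          rfl

lemma dimH_Icc01 : dimH (Set.Icc (0:ℝ) 1) = 1 := by
  have h : (interior (Set.Icc (0:ℝ) 1)).Nonempty := by
    rw [interior_Icc]
    exact ⟨1/2, by norm_num, by norm_num⟩
  rw [Real.dimH_of_nonempty_interior h]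
  simp

/-- the lower bound on the dimension -/
lemma dimH_E_ge : (1/2 : ℝ≥0∞) ≤ dimH E := by
  apply le_of_forall_lt_imp_le_of_dense
  intro e he
  obtain ⟨r, her, hr2⟩ := ENNReal.lt_iff_exists_nnreal_btwn.1 he
  have hrpos : (0:ℝ≥0) < r := by
    have : (0:ℝ≥0∞) < r := lt_of_le_of_lt zero_le her
    exact_mod_cast this
  have hrhalf : (r:ℝ) < 1/2 := by
    rw [show (1/2 : ℝ≥0∞) = ((1/2 : ℝ≥0) : ℝ≥0∞) by norm_num] at hr2
    have : r < (1/2 : ℝ≥0) := by exact_mod_cast hr2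
    exact_mod_cast this
  obtain ⟨C, hC⟩ := holder_F hrhalf
  have h1 : dimH (F '' E) ≤ dimH E / r := hC.dimH_image_le hrpos
  have h2 : (1:ℝ≥0∞) ≤ dimH (F '' E) := by
    rw [← dimH_Icc01]
    exact dimH_mono F_surj
  have h3 : (1:ℝ≥0∞) ≤ dimH E / r := h2.trans h1
  have h4 : (r : ℝ≥0∞) ≤ dimH E := by
    have := (ENNReal.le_div_iff_mul_le (Or.inl (by exact_mod_cast hrpos.ne'))
      (Or.inl ENNReal.coe_ne_top)).1 h3
    rwa [one_mul] at this
  exact her.le.trans h4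

/-! ### Upper bound for the dimension -/

/-- helper: a nonneg sequence eventually halving tends to 0 -/
lemma tendsto_zero_of_eventually_half (g : ℕ → ℝ) (hg : ∀ n, 0 ≤ g n) (K : ℕ)
    (h : ∀ n, K ≤ n → g (n+1) ≤ g n / 2) : Filter.Tendsto g Filter.atTop (nhds 0) := by
  have key : ∀ j, g (K + j) ≤ g K * (1/2)^j := by
    intro j
    induction j with
    | zero => simp
    | succ j ih =>
      have h1 := h (K + j) (Nat.le_add_right _ _)
      rw [show K + (j+1) = (K + j) + 1 from rfl]
      calc g ((K+j)+1) ≤ g (K+j) / 2 := h1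
        _ ≤ (g K * (1/2)^j) / 2 := by linarith
        _ = g K * (1/2)^(j+1) := by ring
  have h2 : Filter.Tendsto (fun j => g K * (1/2:ℝ)^j) Filter.atTop (nhds 0) := by
    have := (tendsto_pow_atTop_nhds_zero_of_lt_one (by norm_num : (0:ℝ) ≤ 1/2)
      (by norm_num : (1/2:ℝ) < 1)).const_mul (g K)
    simpa using this
  have h3 : Filter.Tendsto (fun j => g (K + j)) Filter.atTop (nhds 0) :=
    squeeze_zero (fun j => hg _) key h2
  have h4 : Filter.Tendsto (fun j => g (j + K)) Filter.atTop (nhds 0) := by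
    simpa [Nat.add_comm] using h3
  exact (Filter.tendsto_add_atTop_iff_nat K).1 h4

/-- the covering count bound -/
def cardBound (n : ℕ) : ℕ := ∏ j ∈ Finset.range n, (3*j+7)

lemma tendsto_g_zero {d : ℝ} (hd : 1/2 < d) (hd1 : d ≤ 1) :
    Filter.Tendsto (fun n => (cardBound n : ℝ) * ((2 * (pp bb n : ℝ))⁻¹) ^ d)
      Filter.atTop (nhds 0) := by
  set g : ℕ → ℝ := fun n => (cardBound n : ℝ) * ((2 * (pp bb n : ℝ))⁻¹) ^ d with hgdef
  have hd0 : (0:ℝ) ≤ d := by linarith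
  have hg : ∀ n, 0 ≤ g n := by
    intro n
    have := pp_rpos hbb n
    positivity
  -- find K with ((n:ℝ)+2) ^ (2*d-1) ≥ 14 for n ≥ K
  have hexp : (0:ℝ) < 2*d - 1 := by linarith
  have htend : Filter.Tendsto (fun n : ℕ => ((n:ℝ)+2) ^ (2*d-1)) Filter.atTop Filter.atTop := by
    have h1 := _root_.tendsto_rpow_atTop hexp
    have h2 : Filter.Tendsto (fun n : ℕ => (n:ℝ)+2) Filter.atTop Filter.atTop :=
      Filter.tendsto_atTop_add_const_right _ 2 tendsto_natCast_atTop_atTop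
    exact h1.comp h2
  obtain ⟨K, hK⟩ := Filter.eventually_atTop.1 (htend.eventually_ge_atTop 14)
  apply tendsto_zero_of_eventually_half g hg K
  intro n hn
  have hn2 : (0:ℝ) < (n:ℝ)+2 := by positivity
  have hbbpos : (0:ℝ) < (bb n : ℝ) := by have := hbb n; positivity
  have hpppos : (0:ℝ) < (pp bb n : ℝ) := pp_rpos hbb n
  -- key: (3n+7) * ((bb n)⁻¹)^d ≤ 1/2
  have hXpos : (0:ℝ) < (bb n : ℝ) ^ d := Real.rpow_pos_of_pos hbbpos d
  have hX14 : 14 * ((n:ℝ)+2) ≤ (bb n : ℝ) ^ d := by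
    have hb : ((n:ℝ)+2)^2 ≤ (bb n : ℝ) := by
      simp only [bb]
      push_cast
      nlinarith
    calc (14:ℝ) * ((n:ℝ)+2) ≤ ((n:ℝ)+2) ^ (2*d-1) * ((n:ℝ)+2) := by
          have := hK n hn
          nlinarith
      _ = ((n:ℝ)+2) ^ (2*d-1) * ((n:ℝ)+2) ^ (1:ℝ) := by rw [Real.rpow_one]
      _ = ((n:ℝ)+2) ^ (2*d) := by
          rw [← Real.rpow_add hn2]
          norm_num
      _ = (((n:ℝ)+2) ^ (2:ℕ)) ^ d := by
          rw [← Real.rpow_natCast ((n:ℝ)+2) 2, ← Real.rpow_mul hn2.le]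
          norm_num
      _ ≤ (bb n : ℝ) ^ d := by
          apply Real.rpow_le_rpow (by positivity) _ hd0
          exact_mod_cast hb
  have hkey : (3*(n:ℝ)+7) * ((bb n : ℝ)⁻¹) ^ d ≤ 1/2 := by
    rw [Real.inv_rpow hbbpos.le, ← div_eq_mul_inv, div_le_iff₀ hXpos]
    nlinarith
  -- ratio step
  have hsplit : ((2 * (pp bb (n+1) : ℝ))⁻¹) ^ d
      = ((2 * (pp bb n : ℝ))⁻¹) ^ d * ((bb n : ℝ)⁻¹) ^ d := by
    rw [← Real.mul_rpow (by positivity) (by positivity)]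
    congr 1
    rw [pp_succ]
    push_cast
    field_simp
  have hcard : (cardBound (n+1) : ℝ) = (cardBound n : ℝ) * (3*(n:ℝ)+7) := by
    simp only [cardBound, Finset.prod_range_succ]
    push_cast
    ring
  have e1 : g (n+1) = g n * ((3*(n:ℝ)+7) * ((bb n : ℝ)⁻¹) ^ d) := by
    simp only [hgdef]
    rw [hcard, hsplit]
    ring
  rw [e1]
  have := hg n
  nlinarith

/-- covering index type -/
def covI (n : ℕ) : Type := ∀ j : Fin n, {a // a ∈ A (j:ℕ)}

instance covI.fintype (n : ℕ) : Fintype (covI n) :=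
  inferInstanceAs (Fintype (∀ j : Fin n, {a // a ∈ A (j:ℕ)}))

/-- covering partial sums -/
noncomputable def covS (n : ℕ) (w : covI n) : ℝ :=
  ∑ j : Fin n, ((w j : ℕ) : ℝ) / pp bb ((j:ℕ)+1)

/-- covering intervals -/
noncomputable def covT (n : ℕ) (w : covI n) : Set ℝ :=
  Set.Icc (covS n w) (covS n w + (2 * (pp bb n : ℝ))⁻¹)

/-- the Hausdorff measure vanishes above dimension 1/2 -/
lemma measure_zero {d : ℝ≥0} (hd : 1/2 < (d:ℝ)) (hd1 : (d:ℝ) ≤ 1) : μH[(d:ℝ)] E = 0 := by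
  classical
  set rr : ℕ → ℝ≥0∞ := fun n => ENNReal.ofReal ((2 * (pp bb n : ℝ))⁻¹) with hrr
  have hrtend : Filter.Tendsto rr Filter.atTop (nhds 0) := by
    rw [show (0:ℝ≥0∞) = ENNReal.ofReal 0 by simp]
    apply ENNReal.tendsto_ofReal
    have h1 : Filter.Tendsto (fun n => ((pp bb n : ℝ))⁻¹) Filter.atTop (nhds 0) :=
      tendsto_inv_pp hbb
    have h2 := h1.const_mul (1/2 : ℝ)
    simp only [mul_zero] at h2
    apply h2.congr
    intro n
    have := pp_rpos hbb n
    field_simp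
  have hdiam : ∀ n (i : covI n), EMetric.diam (covT n i) = rr n := by
    intro n i
    rw [covT]
    simp only [EMetric.diam, Real.ediam_Icc, add_sub_cancel_left, hrr]
  have hcover : ∀ n, E ⊆ ⋃ i, covT n i := by
    intro n
    rintro x ⟨c, hc, rfl⟩
    refine Set.mem_iUnion.2 ⟨fun j => ⟨c (j:ℕ), hc (j:ℕ)⟩, ?_⟩
    simp only [covT, Set.mem_Icc]
    have hsum : covS n (fun j => ⟨c (j:ℕ), hc (j:ℕ)⟩)
        = ∑ k ∈ Finset.range n, (c k : ℝ) / pp bb (k+1) := by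
      unfold covS
      exact Fin.sum_univ_eq_sum_range (fun k => (c k : ℝ) / pp bb (k+1)) n
    have hval := val_eq_sum_add_tail hbb hc.lt_bb n
    have htail1 := tail_nonneg (N := bb) c n
    have htail2 := tail_le_half hbb hc.small n
    constructor
    · rw [hsum, hval]; linarith
    · rw [hsum, hval]; linarith
  have hmu := MeasureTheory.Measure.hausdorffMeasure_le_liminf_sum (d:ℝ) E rr hrtend covT
    (Filter.Eventually.of_forall (fun n => fun i => (hdiam n i).le))
    (Filter.Eventually.of_forall hcover)
  -- compute the sums
  have hsum_eq : ∀ n, (∑ i : covI n, EMetric.diam (covT n i) ^ (d:ℝ))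
      ≤ ENNReal.ofReal ((cardBound n : ℝ) * ((2 * (pp bb n : ℝ))⁻¹) ^ (d:ℝ)) := by
    intro n
    have hppos : (0:ℝ) < (2 * (pp bb n : ℝ))⁻¹ := by
      have := pp_rpos hbb n
      positivity
    calc (∑ i : covI n, EMetric.diam (covT n i) ^ (d:ℝ))
        = ∑ _i : covI n, (rr n) ^ (d:ℝ) := by
          apply Finset.sum_congr rfl
          intro i _
          rw [hdiam n i]
      _ = (Fintype.card (covI n) : ℝ≥0∞) * (rr n) ^ (d:ℝ) := by
          rw [Finset.sum_const, Finset.card_univ, nsmul_eq_mul]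
      _ ≤ (cardBound n : ℝ≥0∞) * (rr n) ^ (d:ℝ) := by
          apply _root_.mul_le_mul_left
          have hcard : Fintype.card (covI n) ≤ cardBound n := by
            have h1 : Fintype.card (covI n) = ∏ j : Fin n, (A (j:ℕ)).card := by
              rw [show Fintype.card (covI n)
                  = Fintype.card (∀ j : Fin n, {a // a ∈ A (j:ℕ)}) from rfl]
              rw [Fintype.card_pi]
              apply Finset.prod_congr rfl
              intro j _
              exact Fintype.card_coe _
            rw [h1, Fin.prod_univ_eq_prod_range (fun j => (A j).card) n]
            apply Finset.prod_le_prod'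
            intro j _
            exact card_A_le j
          exact_mod_cast hcard
      _ = ENNReal.ofReal ((cardBound n : ℝ) * ((2 * (pp bb n : ℝ))⁻¹) ^ (d:ℝ)) := by
          rw [hrr]
          rw [ENNReal.ofReal_rpow_of_pos hppos]
          rw [ENNReal.ofReal_mul (by positivity)]
          congr 1
          rw [ENNReal.ofReal_natCast]
  have hlim : Filter.Tendsto
      (fun n => ENNReal.ofReal ((cardBound n : ℝ) * ((2 * (pp bb n : ℝ))⁻¹) ^ (d:ℝ)))
      Filter.atTop (nhds 0) := by
    rw [show (0:ℝ≥0∞) = ENNReal.ofReal 0 by simp]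
    exact ENNReal.tendsto_ofReal (tendsto_g_zero hd hd1)
  have hliminf : Filter.liminf (fun n => ∑ i : covI n, EMetric.diam (covT n i) ^ (d:ℝ))
      Filter.atTop = 0 := by
    apply le_antisymm _ zero_le
    calc Filter.liminf (fun n => ∑ i : covI n, EMetric.diam (covT n i) ^ (d:ℝ)) Filter.atTop
        ≤ Filter.liminf
            (fun n => ENNReal.ofReal ((cardBound n : ℝ) * ((2 * (pp bb n : ℝ))⁻¹) ^ (d:ℝ)))
            Filter.atTop := Filter.liminf_le_liminf (Filter.Eventually.of_forall hsum_eq)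
      _ = 0 := hlim.liminf_eq
  exact le_zero_iff.1 (hmu.trans hliminf.le)

/-- the upper bound on the dimension -/
lemma dimH_E_le : dimH E ≤ 1/2 := by
  by_contra hcon
  push_neg at hcon
  obtain ⟨d, hd1, hd2⟩ := ENNReal.lt_iff_exists_nnreal_btwn.1 hcon
  have hd1' : (1/2 : ℝ) < (d:ℝ) := by
    rw [show (1/2 : ℝ≥0∞) = ((1/2 : ℝ≥0) : ℝ≥0∞) by norm_num] at hd1
    have : (1/2 : ℝ≥0) < d := by exact_mod_cast hd1
    exact_mod_cast this
  -- we may assume d ≤ 1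
  set d' : ℝ≥0 := min d 1 with hd'
  have hd'1 : (1/2 : ℝ) < (d':ℝ) := by
    simp only [hd']
    rw [NNReal.coe_min]
    simp only [lt_min_iff]
    exact ⟨hd1', by norm_num⟩
  have hd'2 : (d':ℝ) ≤ 1 := by
    simp only [hd']
    rw [NNReal.coe_min]
    exact min_le_right _ _
  have hzero := measure_zero hd'1 hd'2
  have hle : dimH E ≤ (d' : ℝ≥0∞) := by
    apply dimH_le_of_hausdorffMeasure_ne_top
    rw [show ((d' : ℝ≥0) : ℝ) = ((d' : ℝ≥0) : ℝ) from rfl] at hzero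
    rw [hzero]
    exact ENNReal.zero_ne_top
  have : (d' : ℝ≥0∞) ≤ d := by
    simp only [hd']
    exact_mod_cast min_le_left _ _
  have hfin : dimH E ≤ d := hle.trans this
  exact absurd (hfin.trans_lt hd2) (lt_irrefl _)

end DimHalfAux

/-- There exists a subset `E` of `[0,1]` of Hausdorff dimension `1/2` with `E + E = [0,1]`. -/
theorem exists_dimH_half_sumset_Icc :
    ∃ E : Set ℝ, E ⊆ Set.Icc 0 1 ∧ dimH E = 1 / 2 ∧ E + E = Set.Icc 0 1 := by
  exact ⟨DimHalfAux.E, DimHalfAux.E_subset,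
    le_antisymm DimHalfAux.dimH_E_le DimHalfAux.dimH_E_ge, DimHalfAux.E_add_E⟩
end
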